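/- arXiv:2510.04432 — 11 statements merged into one kernel-verified Lean document; each statement's English description precedes it below -/
import Mathlib

section
/- Let n, f̂, f be integers with 1 ≤ f̂ < f < n/2 and let κ > 0 be any real number. Then the scalar trimmed-mean aggregator TM_{f̂/n} : ℝⁿ → ℝ is not (f,κ)-robust. Concretely, for the input x₁ = ⋯ = x_{n−f} = 0, x_{n−f+1} = ⋯ = x_n = 1 and the set S = {1,…,n−f}, one has x̄_S = 0 and ∑_{i∈S}(x_i − x̄_S)² = 0, yet TM_{f̂/n}(x₁,…,x_n) = (f−f̂)/(n−2f̂) > 0, so the inequality |TM_{f̂/n}(x₁,…,x_n) − x̄_S|² ≤ (κ/|S|)∑_{i∈S}(x_i − x̄_S)² fails. -/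
open Finset

/-- The scalar coordinate-wise trimmed mean `TM_{f̂/n}`: averages the `n - 2f̂` values
remaining after deleting the `f̂` smallest and `f̂` largest entries of `x₁, …, x_n`. -/
noncomputable def TM (n fhat : ℕ) (x : Fin n → ℝ) : ℝ :=
  ((n : ℝ) - 2 * fhat)⁻¹ *
    ∑ i ∈ Finset.univ.filter (fun i : Fin n => fhat ≤ (i : ℕ) ∧ (i : ℕ) < n - fhat),
      x (Tuple.sort x i)

/-- If `1 ≤ f̂ < f < n/2` and `κ > 0`, then `TM_{f̂/n}` is not `(f,κ)`-robust: on the input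
`x₁ = ⋯ = x_{n-f} = 0`, `x_{n-f+1} = ⋯ = x_n = 1` it outputs `(f - f̂)/(n - 2f̂) > 0`,
while for `S = {1, …, n-f}` one has `x̄_S = 0` and `∑_{i∈S} (x_i - x̄_S)² = 0`, so the
robustness inequality fails. -/
theorem stmt_0 (n f fhat : ℕ) (hfhat : 1 ≤ fhat) (hlt : fhat < f) (hn : 2 * f < n)
    (κ : ℝ) (hκ : 0 < κ) :
    (TM n fhat (fun i : Fin n => if (i : ℕ) < n - f then (0 : ℝ) else 1)
        = ((f : ℝ) - fhat) / ((n : ℝ) - 2 * fhat)) ∧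
    (0 : ℝ) < ((f : ℝ) - fhat) / ((n : ℝ) - 2 * fhat) ∧
    ¬ (∀ (x : Fin n → ℝ) (S : Finset (Fin n)), S.card = n - f →
        |TM n fhat x - (S.card : ℝ)⁻¹ * ∑ i ∈ S, x i| ^ 2
          ≤ κ / (S.card : ℝ) * ∑ i ∈ S, |x i - (S.card : ℝ)⁻¹ * ∑ j ∈ S, x j| ^ 2) := by
  set x : Fin n → ℝ := fun i : Fin n => if (i : ℕ) < n - f then (0 : ℝ) else 1 with hx
  have hmono : Monotone x := by
    intro i j hij
    simp only [hx]
    have hij' : (i : ℕ) ≤ (j : ℕ) := hij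
    split_ifs <;> norm_num <;> omega
  have hsort : Tuple.sort x = Equiv.refl _ := Tuple.sort_eq_refl_iff_monotone.mpr hmono
  have hden : (0:ℝ) < (n : ℝ) - 2 * fhat := by
    have : 2 * fhat < n := by omega
    have := (Nat.cast_lt (α := ℝ)).mpr this
    push_cast at this ⊢
    linarith
  have hTM : TM n fhat x = ((f:ℝ) - fhat) / ((n:ℝ) - 2 * fhat) := by
    unfold TM
    rw [hsort]
    simp only [Equiv.refl_apply]
    have h1 : ∑ i ∈ Finset.univ.filter (fun i : Fin n => fhat ≤ (i : ℕ) ∧ (i : ℕ) < n - fhat), x i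
        = ∑ k ∈ Finset.range n, (if fhat ≤ k ∧ k < n - fhat then (if k < n - f then (0:ℝ) else 1) else 0) := by
      rw [Finset.sum_filter]
      exact Fin.sum_univ_eq_sum_range (fun k => if fhat ≤ k ∧ k < n - fhat then (if k < n - f then (0:ℝ) else 1) else 0) n
    rw [h1]
    have h2 : ∀ k, (if fhat ≤ k ∧ k < n - fhat then (if k < n - f then (0:ℝ) else 1) else 0)
        = if n - f ≤ k ∧ k < n - fhat then (1:ℝ) else 0 := by
      intro k; split_ifs <;> first | rfl | omega
    rw [Finset.sum_congr rfl fun k _ => h2 k, Finset.sum_boole]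
    have h3 : (Finset.range n).filter (fun k => n - f ≤ k ∧ k < n - fhat) = Finset.Ico (n-f) (n-fhat) := by
      ext k; simp [Finset.mem_Ico]; omega
    rw [h3, Nat.card_Ico]
    have h4 : n - fhat - (n - f) = f - fhat := by omega
    rw [h4, Nat.cast_sub hlt.le, div_eq_inv_mul]
  refine ⟨hTM, div_pos (by have := (Nat.cast_lt (α := ℝ)).mpr hlt; linarith) hden, ?_⟩
  intro H
  set S : Finset (Fin n) := Finset.univ.filter (fun i : Fin n => (i : ℕ) < n - f) with hS
  have hcard : S.card = n - f := by
    have : S.card = ∑ k ∈ Finset.range n, (if k < n - f then 1 else 0) := by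
      rw [hS, Finset.card_filter]
      exact Fin.sum_univ_eq_sum_range (fun k => if k < n - f then 1 else 0) n
    rw [this, Finset.sum_boole]
    have : (Finset.range n).filter (fun k => k < n - f) = Finset.range (n - f) := by
      ext k; simp; omega
    simp [this]
  have hzero : ∀ i ∈ S, x i = 0 := by
    intro i hi
    rw [hS, Finset.mem_filter] at hi
    simp [hx, hi.2]
  have hsum0 : ∑ i ∈ S, x i = 0 := Finset.sum_eq_zero hzero
  have := H x S hcard
  rw [hsum0] at this
  have hrhs : ∑ i ∈ S, |x i - (S.card : ℝ)⁻¹ * 0| ^ 2 = 0 := by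
    apply Finset.sum_eq_zero
    intro i hi
    rw [hzero i hi]
    simp
  rw [hrhs] at this
  simp only [mul_zero, sub_zero] at this
  rw [hTM] at this
  have hpos : (0:ℝ) < ((f : ℝ) - fhat) / ((n : ℝ) - 2 * fhat) :=
    div_pos (by have := (Nat.cast_lt (α := ℝ)).mpr hlt; linarith) hden
  have : |((f : ℝ) - fhat) / ((n : ℝ) - 2 * fhat)| ^ 2 > 0 := by positivity
  linarith [H x S hcard, this]
end

section
/- Let n, d ≥ 1 and let f, f̂ be integers with 0 ≤ f ≤ f̂ < n/2, and let κ̂ ≥ 0. If an aggregator A : (ℝ^d)ⁿ → ℝ^d is (f̂,κ̂)-robust, then A is also (f,κ̂)-robust; that is, for all x₁,…,x_n ∈ ℝ^d and every S ⊆ {1,…,n} with |S| = n − f, one has ‖A(x₁,…,x_n) − x̄_S‖² ≤ (κ̂/|S|)∑_{i∈S}‖x_i − x̄_S‖². -/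
open Finset

/-- An aggregator `A : (ℝ^d)^n → ℝ^d` is `(f,κ)`-robust if for all inputs `x₁, …, x_n`
and every `S ⊆ {1,…,n}` with `|S| = n - f`, writing `x̄_S` for the average over `S`,
`‖A x - x̄_S‖² ≤ (κ/|S|) ∑_{i∈S} ‖x_i - x̄_S‖²`. -/
def IsRobust (n d fq : ℕ) (κ : ℝ)
    (A : (Fin n → EuclideanSpace ℝ (Fin d)) → EuclideanSpace ℝ (Fin d)) : Prop :=
  ∀ (x : Fin n → EuclideanSpace ℝ (Fin d)) (S : Finset (Fin n)), S.card = n - fq →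
    ‖A x - (S.card : ℝ)⁻¹ • ∑ i ∈ S, x i‖ ^ 2
      ≤ κ / (S.card : ℝ) * ∑ i ∈ S, ‖x i - (S.card : ℝ)⁻¹ • ∑ j ∈ S, x j‖ ^ 2



lemma count_subsets {α : Type*} [DecidableEq α] (S : Finset α) (m : ℕ) (hm : 1 ≤ m)
    {i : α} (hi : i ∈ S) :
    ((S.powersetCard m).filter (fun T => i ∈ T)).card = (S.card - 1).choose (m - 1) := by
  have : (S.card - 1).choose (m-1) = (powersetCard (m-1) (S.erase i)).card := by
    rw [card_powersetCard, card_erase_of_mem hi]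
  rw [this]
  refine card_bij' (fun T _ => T.erase i) (fun U _ => insert i U) ?_ ?_ ?_ ?_
  · intro T hT
    simp only [mem_filter, mem_powersetCard] at hT
    simp only [mem_powersetCard]
    exact ⟨erase_subset_erase i hT.1.1, by rw [card_erase_of_mem hT.2, hT.1.2]⟩
  · intro U hU
    simp only [mem_powersetCard] at hU
    have hiU : i ∉ U := fun h => (mem_erase.mp (hU.1 h)).1 rfl
    simp only [mem_filter, mem_powersetCard]
    refine ⟨⟨?_, ?_⟩, mem_insert_self i U⟩
    · intro j hj
      rcases mem_insert.mp hj with rfl | hj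
      · exact hi
      · exact (erase_subset _ _) (hU.1 hj)
    · rw [card_insert_of_notMem hiU, hU.2]; omega
  · intro T hT
    simp only [mem_filter] at hT
    exact insert_erase hT.2
  · intro U hU
    simp only [mem_powersetCard] at hU
    exact erase_insert (fun h => (mem_erase.mp (hU.1 h)).1 rfl)

lemma double_count {α : Type*} [DecidableEq α] {M : Type*} [AddCommMonoid M]
    (S : Finset α) (m : ℕ) (hm : 1 ≤ m) (g : α → M) :
    ∑ T ∈ S.powersetCard m, ∑ i ∈ T, g i = (S.card - 1).choose (m - 1) • ∑ i ∈ S, g i := by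
  have h1 : ∀ T ∈ S.powersetCard m, ∑ i ∈ T, g i = ∑ i ∈ S, if i ∈ T then g i else 0 := by
    intro T hT
    rw [sum_ite_mem, inter_eq_right.mpr (mem_powersetCard.mp hT).1]
  rw [sum_congr rfl h1, sum_comm, smul_sum]
  refine sum_congr rfl fun i hi => ?_
  rw [sum_ite, sum_const_zero, add_zero, sum_const, count_subsets S m hm hi]

lemma mean_min {α : Type*} {E : Type*} [NormedAddCommGroup E] [InnerProductSpace ℝ E]
    (T : Finset α) (hT : T.Nonempty) (x : α → E) (c : E) :
    ∑ i ∈ T, ‖x i - (T.card : ℝ)⁻¹ • ∑ j ∈ T, x j‖ ^ 2 ≤ ∑ i ∈ T, ‖x i - c‖ ^ 2 := by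
  set μ : E := (T.card : ℝ)⁻¹ • ∑ j ∈ T, x j with hμ
  have ht0 : (T.card : ℝ) ≠ 0 := by
    exact Nat.cast_ne_zero.mpr (card_pos.mpr hT).ne'
  have hsum : ∑ i ∈ T, (x i - μ) = 0 := by
    rw [sum_sub_distrib, sum_const, ← Nat.cast_smul_eq_nsmul ℝ, hμ, smul_smul,
      mul_inv_cancel₀ ht0, one_smul, sub_self]
  have hexp : ∀ i, ‖x i - c‖ ^ 2
      = ‖x i - μ‖ ^ 2 + 2 * inner ℝ (x i - μ) (μ - c) + ‖μ - c‖ ^ 2 := by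
    intro i
    have : x i - c = (x i - μ) + (μ - c) := by abel
    rw [this, @norm_add_sq_real]
  calc ∑ i ∈ T, ‖x i - μ‖ ^ 2
      ≤ ∑ i ∈ T, ‖x i - μ‖ ^ 2 + (T.card : ℝ) * ‖μ - c‖ ^ 2 := le_add_of_nonneg_right (by positivity)
    _ = ∑ i ∈ T, ‖x i - c‖ ^ 2 := by
        rw [sum_congr rfl (fun i _ => hexp i), sum_add_distrib, sum_add_distrib,
          ← mul_sum, ← sum_inner, hsum, inner_zero_left, mul_zero, add_zero,
          sum_const, nsmul_eq_mul]

/-- If `0 ≤ f ≤ f̂ < n/2` and `A` is `(f̂,κ̂)`-robust, then `A` is also `(f,κ̂)`-robust. -/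
theorem stmt_1 (n d f fhat : ℕ) (hn : 1 ≤ n) (hd : 1 ≤ d)
    (hf : f ≤ fhat) (hfn : 2 * fhat < n) (khat : ℝ) (hkhat : 0 ≤ khat)
    (A : (Fin n → EuclideanSpace ℝ (Fin d)) → EuclideanSpace ℝ (Fin d))
    (hA : IsRobust n d fhat khat A) : IsRobust n d f khat A := by
  intro x S hS
  set s := S.card with hs
  set m := n - fhat with hmdef
  have hm1 : 1 ≤ m := by omega
  have hs1 : 1 ≤ s := by omega
  have hms : m ≤ s := by omega
  set P := S.powersetCard m with hP
  set N := s.choose m with hN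
  have hPcard : P.card = N := card_powersetCard m S
  have hN1 : 1 ≤ N := Nat.choose_pos hms
  set r := (s - 1).choose (m - 1) with hr
  have hid : s * r = N * m := by
    have h := Nat.add_one_mul_choose_eq (s - 1) (m - 1)
    have h1 : s - 1 + 1 = s := by omega
    have h2 : m - 1 + 1 = m := by omega
    simp only [Nat.succ_eq_add_one, h1, h2] at h
    exact h
  have hsR : (s : ℝ) ≠ 0 := Nat.cast_ne_zero.mpr (by omega)
  have hmR : (m : ℝ) ≠ 0 := Nat.cast_ne_zero.mpr (by omega)
  have hNR : (N : ℝ) ≠ 0 := Nat.cast_ne_zero.mpr (by omega)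
  have hidR : (s : ℝ) * r = (N : ℝ) * m := by exact_mod_cast hid
  set μ : EuclideanSpace ℝ (Fin d) := (s : ℝ)⁻¹ • ∑ i ∈ S, x i with hμ
  have hTc : ∀ T ∈ P, T.card = m := fun T hT => (mem_powersetCard.mp hT).2
  have hvec : ∑ T ∈ P, ∑ i ∈ T, x i = r • ∑ i ∈ S, x i := double_count S m hm1 x
  have hμsum : ∑ T ∈ P, (m : ℝ)⁻¹ • ∑ i ∈ T, x i = (N : ℝ) • μ := by
    rw [← smul_sum, hvec, hμ, ← Nat.cast_smul_eq_nsmul ℝ r, smul_smul, smul_smul]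
    congr 1
    field_simp
    linarith [hidR]
  have hA_eq : A x - μ = (N : ℝ)⁻¹ • ∑ T ∈ P, (A x - (m : ℝ)⁻¹ • ∑ i ∈ T, x i) := by
    rw [sum_sub_distrib, hμsum, sum_const, hPcard, ← Nat.cast_smul_eq_nsmul ℝ N (A x),
      ← smul_sub, smul_smul, inv_mul_cancel₀ hNR, one_smul]
  have hB : ‖A x - μ‖ ^ 2
      ≤ (N : ℝ)⁻¹ * ∑ T ∈ P, ‖A x - (m : ℝ)⁻¹ • ∑ i ∈ T, x i‖ ^ 2 := by
    rw [hA_eq, norm_smul, mul_pow]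
    have h1 : ‖∑ T ∈ P, (A x - (m : ℝ)⁻¹ • ∑ i ∈ T, x i)‖
        ≤ ∑ T ∈ P, ‖A x - (m : ℝ)⁻¹ • ∑ i ∈ T, x i‖ := norm_sum_le _ _
    have h2 : (∑ T ∈ P, ‖A x - (m : ℝ)⁻¹ • ∑ i ∈ T, x i‖) ^ 2
        ≤ (P.card : ℝ) * ∑ T ∈ P, ‖A x - (m : ℝ)⁻¹ • ∑ i ∈ T, x i‖ ^ 2 := by
      exact sq_sum_le_card_mul_sum_sq
    have h3 : ‖∑ T ∈ P, (A x - (m : ℝ)⁻¹ • ∑ i ∈ T, x i)‖ ^ 2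
        ≤ (N : ℝ) * ∑ T ∈ P, ‖A x - (m : ℝ)⁻¹ • ∑ i ∈ T, x i‖ ^ 2 := by
      rw [← hPcard]
      exact le_trans (pow_le_pow_left₀ (norm_nonneg _) h1 2) h2
    have hnn : ‖((N : ℝ)⁻¹)‖ ^ 2 = ((N : ℝ)⁻¹) ^ 2 := by
      rw [Real.norm_eq_abs, sq_abs]
    rw [hnn]
    calc ((N : ℝ)⁻¹) ^ 2 * ‖∑ T ∈ P, (A x - (m : ℝ)⁻¹ • ∑ i ∈ T, x i)‖ ^ 2
        ≤ ((N : ℝ)⁻¹) ^ 2 * ((N : ℝ) * ∑ T ∈ P, ‖A x - (m : ℝ)⁻¹ • ∑ i ∈ T, x i‖ ^ 2) := by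
          apply mul_le_mul_of_nonneg_left h3 (by positivity)
      _ = (N : ℝ)⁻¹ * ∑ T ∈ P, ‖A x - (m : ℝ)⁻¹ • ∑ i ∈ T, x i‖ ^ 2 := by
          field_simp
  have hC : ∀ T ∈ P, ‖A x - (m : ℝ)⁻¹ • ∑ i ∈ T, x i‖ ^ 2
      ≤ khat / (m : ℝ) * ∑ i ∈ T, ‖x i - μ‖ ^ 2 := by
    intro T hT
    have hTm := hTc T hT
    have hTne : T.Nonempty := card_pos.mp (by omega)
    have h1 := hA x T (by rw [hTm])
    rw [hTm] at h1
    refine h1.trans ?_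
    apply mul_le_mul_of_nonneg_left _ (div_nonneg hkhat (by positivity))
    have h2 := mean_min T hTne x μ
    rw [hTm] at h2
    exact h2
  have hdc2 : ∑ T ∈ P, ∑ i ∈ T, ‖x i - μ‖ ^ 2 = (r : ℝ) * ∑ i ∈ S, ‖x i - μ‖ ^ 2 := by
    rw [double_count S m hm1 (fun i => ‖x i - μ‖ ^ 2), nsmul_eq_mul]
  have hfrac : (N : ℝ)⁻¹ * (m : ℝ)⁻¹ * r = (s : ℝ)⁻¹ := by
    field_simp
    linarith [hidR]
  calc ‖A x - μ‖ ^ 2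
      ≤ (N : ℝ)⁻¹ * ∑ T ∈ P, ‖A x - (m : ℝ)⁻¹ • ∑ i ∈ T, x i‖ ^ 2 := hB
    _ ≤ (N : ℝ)⁻¹ * ∑ T ∈ P, (khat / (m : ℝ) * ∑ i ∈ T, ‖x i - μ‖ ^ 2) := by
        apply mul_le_mul_of_nonneg_left (sum_le_sum hC) (by positivity)
    _ = ((N : ℝ)⁻¹ * (m : ℝ)⁻¹ * r) * (khat * ∑ i ∈ S, ‖x i - μ‖ ^ 2) := by
        rw [← mul_sum, hdc2]
        ring
    _ = khat / (s : ℝ) * ∑ i ∈ S, ‖x i - μ‖ ^ 2 := by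
        rw [hfrac]
        ring
end

section
/- Let n, d ≥ 1 and let f, f̂ be integers with 0 ≤ f ≤ f̂ < n/2, and let κ̂ ≥ 0, κ ≥ 0. If an aggregator A : (ℝ^d)ⁿ → ℝ^d is both (f̂,κ̂)-robust and (f,κ)-robust, then κ ≥ f̂/(n − f − f̂). -/
open Finset

/-- If `0 ≤ f ≤ f̂ < n/2` and `A` is both `(f̂,κ̂)`-robust and `(f,κ)`-robust,
then `κ ≥ f̂ / (n - f - f̂)`. -/
theorem stmt_2 (n d f fhat : ℕ) (hn : 1 ≤ n) (hd : 1 ≤ d)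
    (hf : f ≤ fhat) (hfn : 2 * fhat < n) (khat κ : ℝ) (hkhat : 0 ≤ khat) (hκ : 0 ≤ κ)
    (A : (Fin n → EuclideanSpace ℝ (Fin d)) → EuclideanSpace ℝ (Fin d))
    (hA1 : IsRobust n d fhat khat A) (hA2 : IsRobust n d f κ A) :
    (fhat : ℝ) / ((n : ℝ) - f - fhat) ≤ κ := by
  rcases Nat.eq_zero_or_pos fhat with h0 | hpos
  · subst h0
    simp only [Nat.cast_zero, zero_div]
    exact hκ
  -- arithmetic facts
  have hb1 : n - fhat < n := by omega
  have hb0 : n - f - fhat < n := by omega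
  set b1 : Fin n := ⟨n - fhat, hb1⟩
  set b0 : Fin n := ⟨n - f - fhat, hb0⟩
  have hb01 : b0 ≤ b1 := by
    simp only [b0, b1, Fin.mk_le_mk]; omega
  set v : EuclideanSpace ℝ (Fin d) := EuclideanSpace.single (⟨0, hd⟩ : Fin d) (1:ℝ) with hv
  have hnv : ‖v‖ = 1 := by rw [hv, EuclideanSpace.norm_single]; norm_num
  set x : Fin n → EuclideanSpace ℝ (Fin d) := fun i => if i < b1 then 0 else v with hx
  -- the first set S
  set S : Finset (Fin n) := Finset.Iio b1 with hS
  have hScard : S.card = n - fhat := by rw [hS, Fin.card_Iio]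
  have hxS : ∀ i ∈ S, x i = 0 := by
    intro i hi
    rw [hS, Finset.mem_Iio] at hi
    simp [hx, hi]
  -- A x = 0
  have hAx : A x = 0 := by
    have h1 := hA1 x S hScard
    rw [Finset.sum_congr rfl hxS] at h1
    simp only [Finset.sum_const_zero, smul_zero, sub_zero] at h1
    have h2 : ∑ i ∈ S, ‖x i‖ ^ 2 = 0 := by
      apply Finset.sum_eq_zero
      intro i hi
      rw [hxS i hi]; simp
    rw [h2] at h1
    simp only [mul_zero] at h1
    have := norm_nonneg (A x)
    have : ‖A x‖ = 0 := by nlinarith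
    exact norm_eq_zero.mp this
  -- the second set T
  set T : Finset (Fin n) := Finset.Iio b0 ∪ Finset.Ici b1 with hT
  have hdisj : Disjoint (Finset.Iio b0) (Finset.Ici b1) := by
    rw [Finset.disjoint_left]
    intro i hi hi'
    rw [Finset.mem_Iio] at hi
    rw [Finset.mem_Ici] at hi'
    exact absurd (lt_of_le_of_lt hi' (lt_of_lt_of_le hi hb01)) (lt_irrefl _)
  have hTcard : T.card = n - f := by
    rw [hT, Finset.card_union_of_disjoint hdisj, Fin.card_Iio, Fin.card_Ici]
    simp [b0, b1]; omega
  -- values of x on the pieces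
  have hx0 : ∀ i ∈ Finset.Iio b0, x i = 0 := by
    intro i hi
    rw [Finset.mem_Iio] at hi
    simp [hx, lt_of_lt_of_le hi hb01]
  have hx1 : ∀ i ∈ Finset.Ici b1, x i = v := by
    intro i hi
    rw [Finset.mem_Ici] at hi
    simp [hx, not_lt.mpr hi]
  -- sum over T
  have hsumT : ∑ i ∈ T, x i = (fhat : ℝ) • v := by
    rw [hT, Finset.sum_union hdisj, Finset.sum_congr rfl hx0,
      Finset.sum_congr rfl hx1]
    simp only [Finset.sum_const_zero, Finset.sum_const, zero_add, Fin.card_Ici]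
    have : n - (b1 : ℕ) = fhat := by simp [b1]; omega
    rw [this, ← Nat.cast_smul_eq_nsmul ℝ]
  -- real abbreviations
  set s : ℝ := ((n : ℝ) - f) with hsr
  have hTcardR : (T.card : ℝ) = s := by
    rw [hTcard, hsr, Nat.cast_sub (by omega : f ≤ n)]
  have hspos : 0 < s := by rw [hsr]; push_cast; have : (2:ℝ) * fhat < n := by exact_mod_cast hfn
                           have : (f:ℝ) ≤ fhat := by exact_mod_cast hf
                           linarith
  set c : ℝ := (fhat : ℝ) / s with hc
  have hmean : (T.card : ℝ)⁻¹ • ∑ i ∈ T, x i = c • v := by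
    rw [hsumT, hTcardR, smul_smul, hc, div_eq_inv_mul]
  have h2 := hA2 x T hTcard
  rw [hmean, hTcardR, hAx, zero_sub, norm_neg] at h2
  have hnorm_c : ‖c • v‖ ^ 2 = c ^ 2 := by
    rw [norm_smul, hnv, mul_one, Real.norm_eq_abs, sq_abs]
  have hnorm_vc : ‖v - c • v‖ ^ 2 = (1 - c) ^ 2 := by
    have : v - c • v = (1 - c) • v := by rw [sub_smul, one_smul]
    rw [this, norm_smul, hnv, mul_one, Real.norm_eq_abs, sq_abs]
  have hsum2 : ∑ i ∈ T, ‖x i - c • v‖ ^ 2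
      = ((n : ℝ) - f - fhat) * c ^ 2 + (fhat : ℝ) * (1 - c) ^ 2 := by
    rw [hT, Finset.sum_union hdisj]
    have e0 : ∑ i ∈ Finset.Iio b0, ‖x i - c • v‖ ^ 2
        = ((n : ℝ) - f - fhat) * c ^ 2 := by
      rw [Finset.sum_congr rfl (fun i hi => by rw [hx0 i hi, zero_sub, norm_neg, hnorm_c])]
      rw [Finset.sum_const, Fin.card_Iio, nsmul_eq_mul]
      congr 1
      simp only [b0]
      rw [Nat.cast_sub (by omega : fhat ≤ n - f), Nat.cast_sub (by omega : f ≤ n)]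
    have e1 : ∑ i ∈ Finset.Ici b1, ‖x i - c • v‖ ^ 2 = (fhat : ℝ) * (1 - c) ^ 2 := by
      rw [Finset.sum_congr rfl (fun i hi => by rw [hx1 i hi, hnorm_vc])]
      rw [Finset.sum_const, Fin.card_Ici, nsmul_eq_mul]
      congr 1
      simp only [b1]
      norm_cast
      omega
    rw [e0, e1]
  rw [hsum2, hnorm_c] at h2
  -- finish with algebra
  have hfc : (0:ℝ) < fhat := by exact_mod_cast hpos
  have h2f : (2:ℝ) * fhat < n := by exact_mod_cast hfn
  have hff : (f:ℝ) ≤ fhat := by exact_mod_cast hf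
  have hden : (0:ℝ) < (n : ℝ) - f - fhat := by linarith
  have hsum_eq : ((n : ℝ) - f - fhat) * c ^ 2 + (fhat : ℝ) * (1 - c) ^ 2
      = ((n : ℝ) - f - fhat) * (fhat : ℝ) / s := by
    rw [hc, hsr]
    have hne : (n : ℝ) - f ≠ 0 := by linarith
    field_simp
    ring
  rw [hsum_eq] at h2
  have hne : s ≠ 0 := ne_of_gt hspos
  have hs2 : (0:ℝ) < s ^ 2 := by positivity
  have h3 : (fhat : ℝ) ^ 2 ≤ κ * (((n : ℝ) - f - fhat) * (fhat : ℝ)) := by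
    have hmul := mul_le_mul_of_nonneg_right h2 (le_of_lt hs2)
    have e1 : c ^ 2 * s ^ 2 = (fhat : ℝ) ^ 2 := by
      rw [hc]; field_simp
    have e2 : κ / s * (((n : ℝ) - f - fhat) * (fhat : ℝ) / s) * s ^ 2
        = κ * (((n : ℝ) - f - fhat) * (fhat : ℝ)) := by
      field_simp
    rw [e1, e2] at hmul
    exact hmul
  rw [div_le_iff₀ hden]
  have h4 : (fhat : ℝ) * fhat ≤ κ * ((n : ℝ) - f - fhat) * fhat := by
    rw [← pow_two, mul_assoc]
    exact h3
  exact le_of_mul_le_mul_right h4 hfc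
end

section
/- Let n, d ≥ 1 and let f, f̂ be integers with 0 ≤ f ≤ f̂ < n/2. Consider the composite aggregator (f̂-Krum)∘(f̂-NNM): given x₁,…,x_n ∈ ℝ^d, for each k ∈ {1,…,n} choose a set N_k of (n−f̂) nearest neighbors of x_k among x₁,…,x_n and set y_k = (1/(n−f̂))∑_{i∈N_k} x_i; then for each k choose a set M_k of (n−f̂) nearest neighbors of y_k among y₁,…,y_n, let k* ∈ argmin_{k∈{1,…,n}} ∑_{i∈M_k}‖y_i − y_k‖², and output y_{k*}. Then for every such choice of nearest-neighbor sets, every S ⊆ {1,…,n} with |S| = n − f satisfies ‖y_{k*} − x̄_S‖² ≤ (84f̂/(n−f−f̂))·(1/|S|)∑_{i∈S}‖x_i − x̄_S‖²; that is, the composite aggregator is (f,κ)-robust with κ = 84f̂/(n−f−f̂). -/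
open Finset

/-- `N` is a set of `(n - f̂)` nearest neighbors of `z_k` among `z₁, …, z_n`:
`|N| = n - f̂` and every point indexed in `N` is at least as close to `z_k` as
every point indexed outside `N`. -/
def IsNN (n d fhat : ℕ) (z : Fin n → EuclideanSpace ℝ (Fin d)) (k : Fin n)
    (N : Finset (Fin n)) : Prop :=
  N.card = n - fhat ∧ ∀ i ∈ N, ∀ j ∉ N, ‖z i - z k‖ ≤ ‖z j - z k‖

section Aux

variable {ι : Type*} {E : Type*} [NormedAddCommGroup E] [InnerProductSpace ℝ E]

/-- Cauchy–Schwarz: square of a sum is at most card times sum of squares. -/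
lemma aux_sq_sum_le (t : Finset ι) (g : ι → ℝ) :
    (∑ i ∈ t, g i) ^ 2 ≤ (t.card : ℝ) * ∑ i ∈ t, g i ^ 2 := by
  have h := Finset.sum_mul_sq_le_sq_mul_sq t (fun _ => (1 : ℝ)) g
  simpa using h

/-- Bias-variance style decomposition of a sum of squared distances. -/
lemma aux_sum_norm_sub_sq (t : Finset ι) (z : ι → E) (c b : E)
    (hc : (t.card : ℝ) • c = ∑ i ∈ t, z i) :
    ∑ i ∈ t, ‖z i - b‖ ^ 2 = (∑ i ∈ t, ‖z i - c‖ ^ 2) + (t.card : ℝ) * ‖c - b‖ ^ 2 := by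
  have hzero : ∑ i ∈ t, (z i - c) = 0 := by
    rw [Finset.sum_sub_distrib, Finset.sum_const, ← hc, ← Nat.cast_smul_eq_nsmul ℝ]
    simp
  have expand : ∀ i, ‖z i - b‖ ^ 2 = ‖z i - c‖ ^ 2 + 2 * (inner ℝ (z i - c) (c - b) : ℝ) + ‖c - b‖ ^ 2 := by
    intro i
    have : z i - b = (z i - c) + (c - b) := by abel
    rw [this, norm_add_sq_real]
  calc ∑ i ∈ t, ‖z i - b‖ ^ 2
      = ∑ i ∈ t, (‖z i - c‖ ^ 2 + 2 * (inner ℝ (z i - c) (c - b) : ℝ) + ‖c - b‖ ^ 2) := by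
        exact Finset.sum_congr rfl fun i _ => expand i
    _ = (∑ i ∈ t, ‖z i - c‖ ^ 2) + 2 * (inner ℝ (∑ i ∈ t, (z i - c)) (c - b) : ℝ)
          + (t.card : ℝ) * ‖c - b‖ ^ 2 := by
        rw [Finset.sum_add_distrib, Finset.sum_add_distrib, sum_inner, Finset.sum_const,
          Finset.mul_sum, ← Nat.cast_smul_eq_nsmul ℝ]
        simp [Finset.mul_sum]
    _ = (∑ i ∈ t, ‖z i - c‖ ^ 2) + (t.card : ℝ) * ‖c - b‖ ^ 2 := by
        rw [hzero]; simp

/-- Young-type inequality. -/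
lemma aux_young53 (a b : ℝ) : (a + b) ^ 2 ≤ (5/3) * a ^ 2 + (5/2) * b ^ 2 := by
  nlinarith [sq_nonneg (2*a - 3*b)]

lemma aux_young87 (a b : ℝ) : (a + b) ^ 2 ≤ (8/7) * a ^ 2 + 8 * b ^ 2 := by
  nlinarith [sq_nonneg (a - 7*b)]

lemma aux_young1710 (a b : ℝ) : (a + b) ^ 2 ≤ (17/10) * a ^ 2 + (17/7) * b ^ 2 := by
  nlinarith [sq_nonneg (7*a - 10*b)]

/-- monotonicity of `(2u - g)^2 / u` in `u`. -/
lemma aux_coeff_mono (u F H : ℝ) (hu1 : 1 ≤ u) (huH : u ≤ H) (hF0 : 0 ≤ F) (hFH : F ≤ H)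
    (hv : 0 ≤ u - (H - F)) :
    (u + (u - (H - F))) ^ 2 / u ≤ (H + F) ^ 2 / H := by
  have hu : 0 < u := by linarith
  have hH : 0 < H := by linarith
  rw [div_le_div_iff₀ hu hH]
  have hg0 : 0 ≤ H - F := by linarith
  have hq1 : (H-F)^2 ≤ u*(H-F) := by nlinarith
  have hq2 : u*(H-F) ≤ u*H := by nlinarith
  have key : 0 ≤ (H - u) * (4*u*H - (H-F)^2) :=
    mul_nonneg (by linarith) (by nlinarith)
  nlinarith [key]

/-- Arithmetic core, case A: `8f ≤ 5ĥ`. -/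
lemma aux_starA (F H nn : ℝ) (hF : 0 ≤ F) (h1 : 8*F ≤ 5*H) (h2 : 2*H ≤ nn) :
    17*(H+F)^2*(nn-F)^2 + 102*F^2*H*(nn-F) ≤ 147*H^2*(nn-H)^2 := by
  have ha : 0 ≤ nn - 2*H := by linarith
  have ht : 0 ≤ 5*H - 8*F := by linarith
  have hterm : ∀ (c : ℝ) (i j k : ℕ), 0 ≤ c →
      0 ≤ c * ((nn-2*H)^i * (F^j * (5*H-8*F)^k)) := fun c i j k hc =>
    mul_nonneg hc (mul_nonneg (pow_nonneg ha i) (mul_nonneg (pow_nonneg hF j) (pow_nonneg ht k)))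
  have key : 147*H^2*(nn-H)^2 - (17*(H+F)^2*(nn-F)^2 + 102*F^2*H*(nn-F)) =
      (79/625) * ((nn-2*H)^0 * (F^0 * (5*H-8*F)^4))
      + (2188/625) * ((nn-2*H)^0 * (F^1 * (5*H-8*F)^3))
      + (18351/625) * ((nn-2*H)^0 * (F^2 * (5*H-8*F)^2))
      + (52312/625) * ((nn-2*H)^0 * (F^3 * (5*H-8*F)^1))
      + (30079/625) * ((nn-2*H)^0 * (F^4 * (5*H-8*F)^0))
      + (226/125) * ((nn-2*H)^1 * (F^0 * (5*H-8*F)^3))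
      + (4914/125) * ((nn-2*H)^1 * (F^1 * (5*H-8*F)^2))
      + (32682/125) * ((nn-2*H)^1 * (F^2 * (5*H-8*F)^1))
      + (66922/125) * ((nn-2*H)^1 * (F^3 * (5*H-8*F)^0))
      + (26/5) * ((nn-2*H)^2 * (F^0 * (5*H-8*F)^2))
      + (382/5) * ((nn-2*H)^2 * (F^1 * (5*H-8*F)^1))
      + (1307/5) * ((nn-2*H)^2 * (F^2 * (5*H-8*F)^0)) := by ring
  linarith [key, hterm (79/625) 0 0 4 (by norm_num), hterm (2188/625) 0 1 3 (by norm_num),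
    hterm (18351/625) 0 2 2 (by norm_num), hterm (52312/625) 0 3 1 (by norm_num),
    hterm (30079/625) 0 4 0 (by norm_num), hterm (226/125) 1 0 3 (by norm_num),
    hterm (4914/125) 1 1 2 (by norm_num), hterm (32682/125) 1 2 1 (by norm_num),
    hterm (66922/125) 1 3 0 (by norm_num), hterm (26/5) 2 0 2 (by norm_num),
    hterm (382/5) 2 1 1 (by norm_num), hterm (1307/5) 2 2 0 (by norm_num)]

/-- Arithmetic core, case B: `5ĥ ≤ 8f`. -/
lemma aux_starB (F H nn : ℝ) (h1 : 5*H ≤ 8*F) (hFH : F ≤ H) (h2 : 2*H ≤ nn) :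
    272*(H+F)^2*(nn-F)^2 + 952*(H-F)^2*H*(nn-F) ≤ 1715*H^2*(nn-H)^2 := by
  have ha : 0 ≤ nn - 2*H := by linarith
  have hu : 0 ≤ 8*F - 5*H := by linarith
  have hw : 0 ≤ H - F := by linarith
  have hterm : ∀ (c : ℝ) (i j k : ℕ), 0 ≤ c →
      0 ≤ c * ((nn-2*H)^i * ((8*F-5*H)^j * (H-F)^k)) := fun c i j k hc =>
    mul_nonneg hc (mul_nonneg (pow_nonneg ha i) (mul_nonneg (pow_nonneg hu j) (pow_nonneg hw k)))
  have key : 1715*H^2*(nn-H)^2 - (272*(H+F)^2*(nn-F)^2 + 952*(H-F)^2*H*(nn-F)) =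
      (236176/27) * ((nn-2*H)^0 * ((8*F-5*H)^0 * (H-F)^4))
      + (208936/27) * ((nn-2*H)^0 * ((8*F-5*H)^1 * (H-F)^3))
      + (17912/9) * ((nn-2*H)^0 * ((8*F-5*H)^2 * (H-F)^2))
      + (5600/27) * ((nn-2*H)^0 * ((8*F-5*H)^3 * (H-F)^1))
      + (209/27) * ((nn-2*H)^0 * ((8*F-5*H)^4 * (H-F)^0))
      + (225440/9) * ((nn-2*H)^1 * ((8*F-5*H)^0 * (H-F)^3))
      + 9144 * ((nn-2*H)^1 * ((8*F-5*H)^1 * (H-F)^2))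
      + (3344/3) * ((nn-2*H)^1 * ((8*F-5*H)^2 * (H-F)^1))
      + (418/9) * ((nn-2*H)^1 * ((8*F-5*H)^3 * (H-F)^0))
      + 7088 * ((nn-2*H)^2 * ((8*F-5*H)^0 * (H-F)^2))
      + (4432/3) * ((nn-2*H)^2 * ((8*F-5*H)^1 * (H-F)^1))
      + (209/3) * ((nn-2*H)^2 * ((8*F-5*H)^2 * (H-F)^0)) := by ring
  linarith [key, hterm (236176/27) 0 0 4 (by norm_num), hterm (208936/27) 0 1 3 (by norm_num),
    hterm (17912/9) 0 2 2 (by norm_num), hterm (5600/27) 0 3 1 (by norm_num),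
    hterm (209/27) 0 4 0 (by norm_num), hterm (225440/9) 1 0 3 (by norm_num),
    hterm 9144 1 1 2 (by norm_num), hterm (3344/3) 1 2 1 (by norm_num),
    hterm (418/9) 1 3 0 (by norm_num), hterm 7088 2 0 2 (by norm_num),
    hterm (4432/3) 2 1 1 (by norm_num), hterm (209/3) 2 2 0 (by norm_num)]

end Aux

set_option maxHeartbeats 2000000 in
/-- The composite aggregator `(f̂-Krum) ∘ (f̂-NNM)` is `(f,κ)`-robust with
`κ = 84 f̂ / (n - f - f̂)` whenever `0 ≤ f ≤ f̂ < n/2`. -/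
theorem stmt_3 (n d f fhat : ℕ) (hn : 1 ≤ n) (hd : 1 ≤ d)
    (hf : f ≤ fhat) (hfn : 2 * fhat < n)
    (x : Fin n → EuclideanSpace ℝ (Fin d))
    (N : Fin n → Finset (Fin n)) (hN : ∀ k, IsNN n d fhat x k (N k))
    (y : Fin n → EuclideanSpace ℝ (Fin d))
    (hy : ∀ k, y k = ((n : ℝ) - fhat)⁻¹ • ∑ i ∈ N k, x i)
    (M : Fin n → Finset (Fin n)) (hM : ∀ k, IsNN n d fhat y k (M k))
    (kstar : Fin n)
    (hks : ∀ k, ∑ i ∈ M kstar, ‖y i - y kstar‖ ^ 2 ≤ ∑ i ∈ M k, ‖y i - y k‖ ^ 2)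
    (S : Finset (Fin n)) (hS : S.card = n - f) :
    ‖y kstar - (S.card : ℝ)⁻¹ • ∑ i ∈ S, x i‖ ^ 2
      ≤ (84 * (fhat : ℝ) / ((n : ℝ) - f - fhat)) *
          ((S.card : ℝ)⁻¹ * ∑ i ∈ S, ‖x i - (S.card : ℝ)⁻¹ • ∑ j ∈ S, x j‖ ^ 2) := by
  classical
  have hfn' : fhat ≤ n := by omega
  have hfn'' : f ≤ n := by omega
  have hffn : f + fhat < n := by omega
  set xbar : EuclideanSpace ℝ (Fin d) := (S.card : ℝ)⁻¹ • ∑ i ∈ S, x i with hxbar_def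
  set T : ℝ := ∑ i ∈ S, ‖x i - xbar‖ ^ 2 with hT_def
  have hcast_s : (S.card : ℝ) = (n : ℝ) - f := by
    rw [hS, Nat.cast_sub hfn'']
  have hspos : (0:ℝ) < S.card := by
    rw [hcast_s]; have : (f:ℝ) < n := by exact_mod_cast (by omega : f < n)
    linarith
  have hsxbar : (S.card : ℝ) • xbar = ∑ i ∈ S, x i := by
    rw [hxbar_def, smul_inv_smul₀ (ne_of_gt hspos)]
  have hTnn : 0 ≤ T := Finset.sum_nonneg fun i _ => sq_nonneg _
  have hhpos : (0:ℝ) < (n : ℝ) - f - fhat := by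
    have : ((f:ℝ) + fhat) < n := by exact_mod_cast hffn
    linarith
  have hmpos : (0:ℝ) < (n : ℝ) - fhat := by
    have : (fhat:ℝ) < n := by exact_mod_cast (by omega : fhat < n)
    linarith
  set Sy : ℝ := ∑ k ∈ S, ‖y k - xbar‖ ^ 2 with hSy_def
  have hSynn : 0 ≤ Sy := Finset.sum_nonneg fun i _ => sq_nonneg _
  have hSne : S.Nonempty := by
    rw [← Finset.card_pos, hS]; omega
  -- ===================== Krum part =====================
  have hKrum : ‖y kstar - xbar‖ ^ 2 * ((n : ℝ) - f - fhat) ≤ (204/35) * Sy := by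
    set ybar : EuclideanSpace ℝ (Fin d) := (S.card : ℝ)⁻¹ • ∑ k ∈ S, y k with hybar_def
    have hybar : (S.card : ℝ) • ybar = ∑ k ∈ S, y k := by
      rw [hybar_def, smul_inv_smul₀ (ne_of_gt hspos)]
    have hdecomp := aux_sum_norm_sub_sq S y ybar xbar hybar
    have hVle : ∑ k ∈ S, ‖y k - ybar‖ ^ 2 ≤ Sy := by
      have hnn : (0:ℝ) ≤ (S.card : ℝ) * ‖ybar - xbar‖ ^ 2 := by positivity
      rw [hSy_def]
      linarith [hdecomp]
    obtain ⟨k0, hk0S, hk0min⟩ := S.exists_min_image (fun k => ‖y k - ybar‖) hSne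
    have hk0V : (S.card:ℝ) * ‖y k0 - ybar‖ ^ 2 ≤ ∑ k ∈ S, ‖y k - ybar‖ ^ 2 := by
      calc (S.card:ℝ) * ‖y k0 - ybar‖ ^ 2 = ∑ _k ∈ S, ‖y k0 - ybar‖ ^ 2 := by
            rw [Finset.sum_const, nsmul_eq_mul]
        _ ≤ ∑ k ∈ S, ‖y k - ybar‖ ^ 2 :=
            Finset.sum_le_sum fun k hk => pow_le_pow_left₀ (norm_nonneg _) (hk0min k hk) 2
    have hsumk0 : ∑ j ∈ S, ‖y j - y k0‖ ^ 2 ≤ 2 * Sy := by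
      have h := aux_sum_norm_sub_sq S y ybar (y k0) hybar
      rw [norm_sub_rev ybar (y k0)] at h
      linarith [h, hk0V, hVle]
    have hScore : ∑ i ∈ M k0, ‖y i - y k0‖ ^ 2 ≤ ∑ j ∈ S, ‖y j - y k0‖ ^ 2 := by
      have eM := Finset.sum_inter_add_sum_sdiff (M k0) S (fun i => ‖y i - y k0‖ ^ 2)
      have eS := Finset.sum_inter_add_sum_sdiff S (M k0) (fun i => ‖y i - y k0‖ ^ 2)
      have hIC : ∑ i ∈ M k0 ∩ S, ‖y i - y k0‖ ^ 2 = ∑ i ∈ S ∩ M k0, ‖y i - y k0‖ ^ 2 := by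
        rw [Finset.inter_comm]
      have hc12 : (M k0 \ S).card ≤ (S \ M k0).card := by
        have e1 := Finset.card_sdiff_add_card_inter (M k0) S
        have e2 := Finset.card_sdiff_add_card_inter S (M k0)
        have e3 : (M k0 ∩ S).card = (S ∩ M k0).card := by rw [Finset.inter_comm]
        have e4 : (M k0).card = n - fhat := (hM k0).1
        have e5 : (M k0).card ≤ S.card := by rw [e4, hS]; omega
        omega
      have hbadpart : ∑ i ∈ M k0 \ S, ‖y i - y k0‖ ^ 2 ≤ ∑ j ∈ S \ M k0, ‖y j - y k0‖ ^ 2 := by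
        rcases Nat.eq_zero_or_pos (M k0 \ S).card with h0 | hposc
        · rw [Finset.card_eq_zero.1 h0, Finset.sum_empty]
          exact Finset.sum_nonneg fun _ _ => sq_nonneg _
        · have hc2pos : 0 < (S \ M k0).card := lt_of_lt_of_le hposc hc12
          have hperi : ∀ i ∈ M k0 \ S, ((S \ M k0).card : ℝ) * ‖y i - y k0‖ ^ 2
              ≤ ∑ j ∈ S \ M k0, ‖y j - y k0‖ ^ 2 := by
            intro i hi
            have him : i ∈ M k0 := (Finset.mem_sdiff.1 hi).1
            calc ((S \ M k0).card : ℝ) * ‖y i - y k0‖ ^ 2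
                = ∑ _j ∈ S \ M k0, ‖y i - y k0‖ ^ 2 := by rw [Finset.sum_const, nsmul_eq_mul]
              _ ≤ ∑ j ∈ S \ M k0, ‖y j - y k0‖ ^ 2 :=
                  Finset.sum_le_sum fun j hj => pow_le_pow_left₀ (norm_nonneg _)
                    ((hM k0).2 i him j (Finset.mem_sdiff.1 hj).2) 2
          have hstep : ((S \ M k0).card : ℝ) * ∑ i ∈ M k0 \ S, ‖y i - y k0‖ ^ 2
              ≤ ((M k0 \ S).card : ℝ) * ∑ j ∈ S \ M k0, ‖y j - y k0‖ ^ 2 := by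
            rw [Finset.mul_sum]
            calc ∑ i ∈ M k0 \ S, ((S \ M k0).card : ℝ) * ‖y i - y k0‖ ^ 2
                ≤ ∑ _i ∈ M k0 \ S, ∑ j ∈ S \ M k0, ‖y j - y k0‖ ^ 2 :=
                  Finset.sum_le_sum hperi
              _ = ((M k0 \ S).card : ℝ) * ∑ j ∈ S \ M k0, ‖y j - y k0‖ ^ 2 := by
                  rw [Finset.sum_const, nsmul_eq_mul]
          have hc2R : (0:ℝ) < ((S \ M k0).card : ℝ) := by exact_mod_cast hc2pos
          have hcleR : ((M k0 \ S).card:ℝ) ≤ ((S \ M k0).card:ℝ) := by exact_mod_cast hc12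
          have hsumnn : 0 ≤ ∑ j ∈ S \ M k0, ‖y j - y k0‖ ^ 2 :=
            Finset.sum_nonneg fun _ _ => sq_nonneg _
          have hbnn : 0 ≤ ∑ i ∈ M k0 \ S, ‖y i - y k0‖ ^ 2 :=
            Finset.sum_nonneg fun _ _ => sq_nonneg _
          nlinarith [hstep]
      calc ∑ i ∈ M k0, ‖y i - y k0‖ ^ 2
          = ∑ i ∈ M k0 ∩ S, ‖y i - y k0‖ ^ 2 + ∑ i ∈ M k0 \ S, ‖y i - y k0‖ ^ 2 := eM.symm
        _ ≤ ∑ i ∈ S ∩ M k0, ‖y i - y k0‖ ^ 2 + ∑ j ∈ S \ M k0, ‖y j - y k0‖ ^ 2 := by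
            rw [hIC]; linarith [hbadpart]
        _ = ∑ j ∈ S, ‖y j - y k0‖ ^ 2 := eS
    have hScoreStar : ∑ i ∈ M kstar, ‖y i - y kstar‖ ^ 2 ≤ 2 * Sy :=
      le_trans (hks k0) (le_trans hScore hsumk0)
    have hHcard : n - f - fhat ≤ (M kstar ∩ S).card := by
      have e1 := Finset.card_sdiff_add_card_inter (M kstar) S
      have e2 : (M kstar).card = n - fhat := (hM kstar).1
      have e3 : (M kstar \ S).card ≤ f := by
        have hsub : M kstar \ S ⊆ Sᶜ := fun i hi => Finset.mem_compl.2 (Finset.mem_sdiff.1 hi).2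
        have h2 : (Sᶜ).card = f := by
          rw [Finset.card_compl, hS]
          simp only [Fintype.card_fin]
          omega
        exact h2 ▸ Finset.card_le_card hsub
      omega
    have hHne : (M kstar ∩ S).Nonempty := Finset.card_pos.1 (by omega)
    obtain ⟨i0, hi0H, hi0min⟩ := (M kstar ∩ S).exists_min_image
      (fun i => (17/10)*‖y i - y kstar‖ ^ 2 + (17/7)*‖y i - xbar‖ ^ 2) hHne
    have hW : ∑ i ∈ M kstar ∩ S, ((17/10)*‖y i - y kstar‖ ^ 2 + (17/7)*‖y i - xbar‖ ^ 2)
        ≤ (204/35) * Sy := by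
      rw [Finset.sum_add_distrib, ← Finset.mul_sum, ← Finset.mul_sum]
      have hA : ∑ i ∈ M kstar ∩ S, ‖y i - y kstar‖ ^ 2 ≤ 2 * Sy :=
        le_trans (Finset.sum_le_sum_of_subset_of_nonneg Finset.inter_subset_left
          (fun _ _ _ => sq_nonneg _)) hScoreStar
      have hB : ∑ i ∈ M kstar ∩ S, ‖y i - xbar‖ ^ 2 ≤ Sy :=
        Finset.sum_le_sum_of_subset_of_nonneg Finset.inter_subset_right
          (fun _ _ _ => sq_nonneg _)
      linarith
    have hcardH : ((n:ℝ) - f - fhat) ≤ ((M kstar ∩ S).card : ℝ) := by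
      have h1 : ((n - f - fhat : ℕ) : ℝ) ≤ ((M kstar ∩ S).card : ℝ) := by exact_mod_cast hHcard
      have h2 : ((n - f - fhat : ℕ) : ℝ) = (n:ℝ) - f - fhat := by
        have e : (n - f - fhat : ℕ) = n - (f + fhat) := by omega
        rw [e, Nat.cast_sub (by omega)]
        push_cast
        ring
      linarith
    have hgi0 : ((n:ℝ) - f - fhat) * ((17/10)*‖y i0 - y kstar‖ ^ 2 + (17/7)*‖y i0 - xbar‖ ^ 2)
        ≤ (204/35) * Sy := by
      have hgnn : (0:ℝ) ≤ (17/10)*‖y i0 - y kstar‖ ^ 2 + (17/7)*‖y i0 - xbar‖ ^ 2 := by positivity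
      calc ((n:ℝ) - f - fhat) * ((17/10)*‖y i0 - y kstar‖ ^ 2 + (17/7)*‖y i0 - xbar‖ ^ 2)
          ≤ ((M kstar ∩ S).card : ℝ) * ((17/10)*‖y i0 - y kstar‖ ^ 2 + (17/7)*‖y i0 - xbar‖ ^ 2) :=
            mul_le_mul_of_nonneg_right hcardH hgnn
        _ = ∑ _i ∈ M kstar ∩ S, ((17/10)*‖y i0 - y kstar‖ ^ 2 + (17/7)*‖y i0 - xbar‖ ^ 2) := by
            rw [Finset.sum_const, nsmul_eq_mul]
        _ ≤ ∑ i ∈ M kstar ∩ S, ((17/10)*‖y i - y kstar‖ ^ 2 + (17/7)*‖y i - xbar‖ ^ 2) :=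
            Finset.sum_le_sum fun i hi => hi0min i hi
        _ ≤ (204/35) * Sy := hW
    have htri : ‖y kstar - xbar‖ ≤ ‖y i0 - y kstar‖ + ‖y i0 - xbar‖ := by
      have h1 : y kstar - xbar = -(y i0 - y kstar) + (y i0 - xbar) := by abel
      rw [h1]
      exact le_trans (norm_add_le _ _) (by rw [norm_neg])
    have hsq : ‖y kstar - xbar‖ ^ 2 ≤ (17/10)*‖y i0 - y kstar‖ ^ 2 + (17/7)*‖y i0 - xbar‖ ^ 2 :=
      le_trans (pow_le_pow_left₀ (norm_nonneg _) htri 2) (aux_young1710 _ _)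
    calc ‖y kstar - xbar‖ ^ 2 * ((n : ℝ) - f - fhat)
        ≤ ((17/10)*‖y i0 - y kstar‖ ^ 2 + (17/7)*‖y i0 - xbar‖ ^ 2) * ((n : ℝ) - f - fhat) :=
          mul_le_mul_of_nonneg_right hsq (le_of_lt hhpos)
      _ = ((n:ℝ) - f - fhat) * ((17/10)*‖y i0 - y kstar‖ ^ 2 + (17/7)*‖y i0 - xbar‖ ^ 2) := by ring
      _ ≤ (204/35) * Sy := hgi0
  -- ===================== per-k decomposition lemmas =====================
  have hsum0 : ∑ i ∈ S, (x i - xbar) = 0 := by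
    rw [Finset.sum_sub_distrib, Finset.sum_const, ← Nat.cast_smul_eq_nsmul ℝ, hsxbar, sub_self]
  have hNcast : ∀ k, (((N k).card : ℕ) : ℝ) = (n:ℝ) - fhat := by
    intro k; rw [(hN k).1, Nat.cast_sub hfn']
  have hkey : ∀ k, ((n:ℝ) - fhat) • (y k - xbar) = ∑ i ∈ N k, (x i - xbar) := by
    intro k
    rw [hy k, smul_sub, smul_inv_smul₀ (ne_of_gt hmpos), Finset.sum_sub_distrib,
      Finset.sum_const, ← Nat.cast_smul_eq_nsmul ℝ, hNcast k]
  have hsplit : ∀ k, ∑ i ∈ N k, (x i - xbar)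
      = (∑ i ∈ N k \ S, (x i - xbar)) - ∑ j ∈ S \ N k, (x j - xbar) := by
    intro k
    have e1 := Finset.sum_inter_add_sum_sdiff (N k) S (fun i => x i - xbar)
    have e2 := Finset.sum_inter_add_sum_sdiff S (N k) (fun i => x i - xbar)
    rw [hsum0] at e2
    rw [Finset.inter_comm] at e1
    have h3 : ∑ i ∈ S ∩ N k, (x i - xbar) = - ∑ j ∈ S \ N k, (x j - xbar) :=
      eq_neg_of_add_eq_zero_left e2
    rw [← e1, h3]
    abel
  -- cards
  have hucard : ∀ k, (S \ N k).card ≤ fhat := by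
    intro k
    have hsub : S \ N k ⊆ (N k)ᶜ := fun i hi => Finset.mem_compl.2 (Finset.mem_sdiff.1 hi).2
    have h2 : ((N k)ᶜ).card = fhat := by
      rw [Finset.card_compl, (hN k).1]
      simp only [Fintype.card_fin]
      omega
    exact h2 ▸ Finset.card_le_card hsub
  have hvcard : ∀ k, (N k \ S).card ≤ f := by
    intro k
    have hsub : N k \ S ⊆ Sᶜ := fun i hi => Finset.mem_compl.2 (Finset.mem_sdiff.1 hi).2
    have h2 : (Sᶜ).card = f := by
      rw [Finset.card_compl, hS]
      simp only [Fintype.card_fin]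
      omega
    exact h2 ▸ Finset.card_le_card hsub
  have huv : ∀ k, ((S \ N k).card : ℝ) = ((N k \ S).card : ℝ) + ((fhat:ℝ) - f) := by
    intro k
    have e1 := Finset.card_sdiff_add_card_inter S (N k)
    have e2 := Finset.card_sdiff_add_card_inter (N k) S
    have e3 : (S ∩ N k).card = (N k ∩ S).card := by rw [Finset.inter_comm]
    have e4 : (N k).card = n - fhat := (hN k).1
    have key : (S \ N k).card + (n - fhat) = (N k \ S).card + (n - f) := by omega
    have keyR : ((S \ N k).card : ℝ) + ((n:ℝ) - fhat) = ((N k \ S).card : ℝ) + ((n:ℝ) - f) := by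
      have := congrArg (fun m : ℕ => (m : ℝ)) key
      push_cast [Nat.cast_sub hfn', Nat.cast_sub hfn''] at this
      linarith [this]
    linarith
  -- per-k zero case helper
  have hzerok : ∀ k, (S \ N k).card = 0 → y k - xbar = 0 := by
    intro k hcard0
    have hempty : S \ N k = ∅ := Finset.card_eq_zero.1 hcard0
    have hsub : S ⊆ N k := by rwa [Finset.sdiff_eq_empty_iff_subset] at hempty
    have hcards : (N k).card ≤ S.card := by rw [(hN k).1, hS]; omega
    have hEq : S = N k := Finset.eq_of_subset_of_card_le hsub hcards
    have h0 : ((n:ℝ) - fhat) • (y k - xbar) = 0 := by rw [hkey k, ← hEq, hsum0]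
    exact (smul_eq_zero.1 h0).resolve_left (ne_of_gt hmpos)
  -- degenerate fhat = 0
  by_cases hf0 : fhat = 0
  · have h0 : y kstar - xbar = 0 := hzerok kstar (by have := hucard kstar; omega)
    rw [h0]
    simp [hf0]
  have hf1 : 1 ≤ fhat := Nat.one_le_iff_ne_zero.mpr hf0
  have hHpos : (0:ℝ) < fhat := by exact_mod_cast hf1
  -- bad-point distance bound
  have hbad : ∀ k, ∀ i ∈ N k \ S, ((S \ N k).card : ℝ) * ‖x i - x k‖
      ≤ ∑ j ∈ S \ N k, ‖x j - x k‖ := by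
    intro k i hi
    have him : i ∈ N k := (Finset.mem_sdiff.1 hi).1
    calc ((S \ N k).card : ℝ) * ‖x i - x k‖
        = ∑ _j ∈ S \ N k, ‖x i - x k‖ := by rw [Finset.sum_const, nsmul_eq_mul]
      _ ≤ ∑ j ∈ S \ N k, ‖x j - x k‖ :=
          Finset.sum_le_sum fun j hj => (hN k).2 i him j (Finset.mem_sdiff.1 hj).2
  have hsnn : (0:ℝ) ≤ (n:ℝ) - f := by
    rw [← hcast_s]; positivity
  have h2Hn : 2*(fhat:ℝ) ≤ (n:ℝ) := by
    have : ((2*fhat : ℕ) : ℝ) ≤ (n:ℕ) := by exact_mod_cast (le_of_lt hfn)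
    push_cast at this
    linarith
  have hFnn : (0:ℝ) ≤ (f:ℝ) := by positivity
  have hFH : (f:ℝ) ≤ (fhat:ℝ) := by exact_mod_cast hf
  -- per-k preliminary bounds shared by both cases
  have hfinal : (204/35) * Sy * ((n:ℝ) - f) * ((fhat:ℝ) * ((n:ℝ)-fhat)^2)
      ≤ 84 * (fhat:ℝ)^2 * ((n:ℝ)-fhat)^2 * T := by
    by_cases hcase : 8 * f ≤ 5 * fhat
    · -- ===== Case A =====
      have hpk : ∀ k ∈ S, (fhat:ℝ) * ((((n:ℝ)-fhat) * ‖y k - xbar‖) ^ 2)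
          ≤ (5/3) * ((fhat:ℝ)+(f:ℝ))^2 * (∑ j ∈ S \ N k, ‖x j - xbar‖ ^ 2)
            + 10 * (f:ℝ)^2 * (fhat:ℝ) * ‖x k - xbar‖ ^ 2 := by
        intro k _hk
        rcases Nat.eq_zero_or_pos (S \ N k).card with hu0 | hupos
        · rw [hzerok k hu0]
          simp only [norm_zero, mul_zero, ne_eq, OfNat.ofNat_ne_zero, not_false_eq_true,
            zero_pow, mul_zero]
          positivity
        · have huR : (0:ℝ) < ((S \ N k).card : ℝ) := by exact_mod_cast hupos
          have hu1 : (1:ℝ) ≤ ((S \ N k).card : ℝ) := by exact_mod_cast hupos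
          have hvnn : (0:ℝ) ≤ ((N k \ S).card : ℝ) := by positivity
          have hvF : ((N k \ S).card : ℝ) ≤ (f:ℝ) := by exact_mod_cast hvcard k
          have huH : ((S \ N k).card : ℝ) ≤ (fhat:ℝ) := by exact_mod_cast hucard k
          have hQP : (∑ j ∈ S \ N k, ‖x j - x k‖)
              ≤ (∑ j ∈ S \ N k, ‖x j - xbar‖) + ((S \ N k).card : ℝ) * ‖x k - xbar‖ := by
            calc ∑ j ∈ S \ N k, ‖x j - x k‖
                ≤ ∑ j ∈ S \ N k, (‖x j - xbar‖ + ‖x k - xbar‖) := by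
                  refine Finset.sum_le_sum fun j _hj => ?_
                  have h1 : x j - x k = (x j - xbar) + (xbar - x k) := by abel
                  rw [h1]
                  refine le_trans (norm_add_le _ _) ?_
                  rw [norm_sub_rev xbar (x k)]
              _ = (∑ j ∈ S \ N k, ‖x j - xbar‖) + ((S \ N k).card : ℝ) * ‖x k - xbar‖ := by
                  rw [Finset.sum_add_distrib, Finset.sum_const, nsmul_eq_mul]
          have hbadnorm : ∑ i ∈ N k \ S, ‖x i - xbar‖
              ≤ (((N k \ S).card : ℝ)/((S \ N k).card : ℝ)) * (∑ j ∈ S \ N k, ‖x j - x k‖)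
                + ((N k \ S).card : ℝ) * ‖x k - xbar‖ := by
            have hper : ∀ i ∈ N k \ S, ‖x i - xbar‖
                ≤ (∑ j ∈ S \ N k, ‖x j - x k‖)/((S \ N k).card : ℝ) + ‖x k - xbar‖ := by
              intro i hi
              have h1 := hbad k i hi
              have h2 : ‖x i - x k‖ ≤ (∑ j ∈ S \ N k, ‖x j - x k‖)/((S \ N k).card : ℝ) := by
                rw [le_div_iff₀ huR]
                linarith [h1]
              have h3 : x i - xbar = (x i - x k) + (x k - xbar) := by abel
              calc ‖x i - xbar‖ ≤ ‖x i - x k‖ + ‖x k - xbar‖ := by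
                    rw [h3]; exact norm_add_le _ _
                _ ≤ _ := by linarith
            calc ∑ i ∈ N k \ S, ‖x i - xbar‖
                ≤ ∑ _i ∈ N k \ S, ((∑ j ∈ S \ N k, ‖x j - x k‖)/((S \ N k).card : ℝ)
                    + ‖x k - xbar‖) := Finset.sum_le_sum hper
              _ = ((N k \ S).card : ℝ) * ((∑ j ∈ S \ N k, ‖x j - x k‖)/((S \ N k).card : ℝ))
                  + ((N k \ S).card : ℝ) * ‖x k - xbar‖ := by
                  rw [Finset.sum_const, nsmul_eq_mul]; ring
              _ = _ := by ring
          have hvu_nn : (0:ℝ) ≤ ((N k \ S).card : ℝ)/((S \ N k).card : ℝ) := by positivity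
          have hmain : ((n:ℝ)-fhat) * ‖y k - xbar‖
              ≤ (1 + ((N k \ S).card : ℝ)/((S \ N k).card : ℝ)) * (∑ j ∈ S \ N k, ‖x j - xbar‖)
                + 2 * ((N k \ S).card : ℝ) * ‖x k - xbar‖ := by
            have h0 : ((n:ℝ)-fhat) * ‖y k - xbar‖ = ‖((n:ℝ)-fhat) • (y k - xbar)‖ := by
              rw [norm_smul, Real.norm_eq_abs, abs_of_pos hmpos]
            rw [h0, hkey k, hsplit k]
            have t1 : ‖(∑ i ∈ N k \ S, (x i - xbar)) - ∑ j ∈ S \ N k, (x j - xbar)‖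
                ≤ (∑ i ∈ N k \ S, ‖x i - xbar‖) + (∑ j ∈ S \ N k, ‖x j - xbar‖) :=
              le_trans (norm_sub_le _ _) (add_le_add (norm_sum_le _ _) (norm_sum_le _ _))
            have hQscaled := mul_le_mul_of_nonneg_left hQP hvu_nn
            rw [mul_add] at hQscaled
            have hcancel : (((N k \ S).card : ℝ)/((S \ N k).card : ℝ))
                * (((S \ N k).card : ℝ) * ‖x k - xbar‖)
                = ((N k \ S).card : ℝ) * ‖x k - xbar‖ := by
              field_simp
            rw [hcancel] at hQscaled
            have hexpand : (1 + ((N k \ S).card : ℝ)/((S \ N k).card : ℝ))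
                * (∑ j ∈ S \ N k, ‖x j - xbar‖)
                = (∑ j ∈ S \ N k, ‖x j - xbar‖)
                  + (((N k \ S).card : ℝ)/((S \ N k).card : ℝ)) * (∑ j ∈ S \ N k, ‖x j - xbar‖) := by
              ring
            rw [hexpand]
            linarith [t1, hbadnorm, hQscaled]
          have hLnn : (0:ℝ) ≤ ((n:ℝ)-fhat) * ‖y k - xbar‖ :=
            mul_nonneg (le_of_lt hmpos) (norm_nonneg _)
          have hsq := le_trans (pow_le_pow_left₀ hLnn hmain 2) (aux_young53 _ _)
          have hP2 : (∑ j ∈ S \ N k, ‖x j - xbar‖)^2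
              ≤ ((S \ N k).card : ℝ) * ∑ j ∈ S \ N k, ‖x j - xbar‖ ^ 2 :=
            aux_sq_sum_le _ _
          have hEnn : (0:ℝ) ≤ ∑ j ∈ S \ N k, ‖x j - xbar‖ ^ 2 :=
            Finset.sum_nonneg fun _ _ => sq_nonneg _
          have hcoef : (fhat:ℝ)*((1 + ((N k \ S).card : ℝ)/((S \ N k).card : ℝ))^2
              * ((S \ N k).card : ℝ)) ≤ ((fhat:ℝ)+(f:ℝ))^2 := by
            have hveq : ((N k \ S).card : ℝ) = ((S \ N k).card : ℝ) - ((fhat:ℝ) - f) := by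
              linarith [huv k]
            have hv0 : (0:ℝ) ≤ ((S \ N k).card : ℝ) - ((fhat:ℝ) - (f:ℝ)) := by
              rw [← hveq]; linarith [hvnn]
            have hmono := aux_coeff_mono ((S \ N k).card : ℝ) (f:ℝ) (fhat:ℝ) hu1 huH hFnn hFH hv0
            have hid : (1 + ((N k \ S).card : ℝ)/((S \ N k).card : ℝ))^2 * ((S \ N k).card : ℝ)
                = (((S \ N k).card : ℝ) + (((S \ N k).card : ℝ) - ((fhat:ℝ) - (f:ℝ))))^2
                  / ((S \ N k).card : ℝ) := by
              rw [hveq]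
              generalize ((S \ N k).card : ℝ) = u at huR ⊢
              field_simp
            rw [hid]
            calc (fhat:ℝ) * ((((S \ N k).card : ℝ) + (((S \ N k).card : ℝ) - ((fhat:ℝ) - (f:ℝ))))^2
                  / ((S \ N k).card : ℝ))
                ≤ (fhat:ℝ) * (((fhat:ℝ)+(f:ℝ))^2/(fhat:ℝ)) :=
                  mul_le_mul_of_nonneg_left hmono (le_of_lt hHpos)
              _ = ((fhat:ℝ)+(f:ℝ))^2 := mul_div_cancel₀ _ (ne_of_gt hHpos)
          have e1 : (fhat:ℝ) * ((1 + ((N k \ S).card : ℝ)/((S \ N k).card : ℝ))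
              * (∑ j ∈ S \ N k, ‖x j - xbar‖))^2
              ≤ ((fhat:ℝ)+(f:ℝ))^2 * (∑ j ∈ S \ N k, ‖x j - xbar‖ ^ 2) := by
            calc (fhat:ℝ) * ((1 + ((N k \ S).card : ℝ)/((S \ N k).card : ℝ))
                  * (∑ j ∈ S \ N k, ‖x j - xbar‖))^2
                = ((fhat:ℝ)*(1 + ((N k \ S).card : ℝ)/((S \ N k).card : ℝ))^2)
                  * (∑ j ∈ S \ N k, ‖x j - xbar‖)^2 := by ring
              _ ≤ ((fhat:ℝ)*(1 + ((N k \ S).card : ℝ)/((S \ N k).card : ℝ))^2)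
                  * (((S \ N k).card : ℝ) * ∑ j ∈ S \ N k, ‖x j - xbar‖ ^ 2) := by
                  refine mul_le_mul_of_nonneg_left hP2 ?_
                  positivity
              _ = ((fhat:ℝ)*((1 + ((N k \ S).card : ℝ)/((S \ N k).card : ℝ))^2
                  * ((S \ N k).card : ℝ))) * (∑ j ∈ S \ N k, ‖x j - xbar‖ ^ 2) := by ring
              _ ≤ ((fhat:ℝ)+(f:ℝ))^2 * (∑ j ∈ S \ N k, ‖x j - xbar‖ ^ 2) :=
                  mul_le_mul_of_nonneg_right hcoef hEnn
          have e2 : ((N k \ S).card:ℝ)^2 * ‖x k - xbar‖^2 ≤ (f:ℝ)^2 * ‖x k - xbar‖^2 :=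
            mul_le_mul_of_nonneg_right (pow_le_pow_left₀ hvnn hvF 2) (sq_nonneg _)
          have hsqH := mul_le_mul_of_nonneg_left hsq (le_of_lt hHpos)
          have e2H := mul_le_mul_of_nonneg_left e2 (le_of_lt hHpos)
          linarith [hsqH, e1, e2H]
      -- sum the per-k bounds
      have hsumA : (fhat:ℝ) * (((n:ℝ)-fhat)^2 * Sy)
          ≤ (5/3) * ((fhat:ℝ)+(f:ℝ))^2 * (((n:ℝ)-f) * T) + 10 * (f:ℝ)^2 * (fhat:ℝ) * T := by
        have hsum1 := Finset.sum_le_sum hpk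
        have l1 : ∑ k ∈ S, (fhat:ℝ) * ((((n:ℝ)-fhat) * ‖y k - xbar‖) ^ 2)
            = (fhat:ℝ) * (((n:ℝ)-fhat)^2 * Sy) := by
          rw [hSy_def, Finset.mul_sum, Finset.mul_sum]
          exact Finset.sum_congr rfl fun k _ => by ring
        have r1 : ∑ k ∈ S, ((5/3) * ((fhat:ℝ)+(f:ℝ))^2 * (∑ j ∈ S \ N k, ‖x j - xbar‖ ^ 2)
              + 10 * (f:ℝ)^2 * (fhat:ℝ) * ‖x k - xbar‖ ^ 2)
            = (5/3) * ((fhat:ℝ)+(f:ℝ))^2 * (∑ k ∈ S, ∑ j ∈ S \ N k, ‖x j - xbar‖ ^ 2)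
              + 10 * (f:ℝ)^2 * (fhat:ℝ) * T := by
          rw [Finset.sum_add_distrib, ← Finset.mul_sum, ← Finset.mul_sum, hT_def]
        have r2 : (∑ k ∈ S, ∑ j ∈ S \ N k, ‖x j - xbar‖ ^ 2) ≤ ((n:ℝ)-f) * T := by
          calc ∑ k ∈ S, ∑ j ∈ S \ N k, ‖x j - xbar‖ ^ 2
              ≤ ∑ _k ∈ S, T := Finset.sum_le_sum fun k _hk =>
                Finset.sum_le_sum_of_subset_of_nonneg (Finset.sdiff_subset)
                  (fun _ _ _ => sq_nonneg _)
            _ = (S.card:ℝ) * T := by rw [Finset.sum_const, nsmul_eq_mul]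
            _ = ((n:ℝ)-f) * T := by rw [hcast_s]
        rw [l1, r1] at hsum1
        have hc53 : (0:ℝ) ≤ (5/3) * ((fhat:ℝ)+(f:ℝ))^2 := by positivity
        linarith [hsum1, mul_le_mul_of_nonneg_left r2 hc53]
      have hstar := aux_starA (f:ℝ) (fhat:ℝ) (n:ℝ) hFnn
        (by exact_mod_cast hcase) h2Hn
      calc (204/35) * Sy * ((n:ℝ)-f) * ((fhat:ℝ) * ((n:ℝ)-fhat)^2)
          = (204/35) * ((n:ℝ)-f) * ((fhat:ℝ) * (((n:ℝ)-fhat)^2 * Sy)) := by ring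
        _ ≤ (204/35) * ((n:ℝ)-f) * ((5/3) * ((fhat:ℝ)+(f:ℝ))^2 * (((n:ℝ)-f) * T)
              + 10 * (f:ℝ)^2 * (fhat:ℝ) * T) := by
            refine mul_le_mul_of_nonneg_left hsumA ?_
            positivity
        _ = (4/7) * ((17*((fhat:ℝ)+(f:ℝ))^2*((n:ℝ)-(f:ℝ))^2
              + 102*(f:ℝ)^2*(fhat:ℝ)*((n:ℝ)-(f:ℝ))) * T) := by ring
        _ ≤ (4/7) * ((147*(fhat:ℝ)^2*((n:ℝ)-(fhat:ℝ))^2) * T) := by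
            refine mul_le_mul_of_nonneg_left (mul_le_mul_of_nonneg_right hstar hTnn) ?_
            norm_num
        _ = 84 * (fhat:ℝ)^2 * ((n:ℝ)-fhat)^2 * T := by ring
    · -- ===== Case B =====
      have hpk : ∀ k ∈ S, (fhat:ℝ) * ((((n:ℝ)-fhat) * ‖y k - xbar‖) ^ 2)
          ≤ (8/7) * ((fhat:ℝ)+(f:ℝ))^2 * (∑ j ∈ S, ‖x j - x k‖ ^ 2)
            + 8 * ((fhat:ℝ)-(f:ℝ))^2 * (fhat:ℝ) * ‖x k - xbar‖ ^ 2 := by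
        intro k _hk
        rcases Nat.eq_zero_or_pos (S \ N k).card with hu0 | hupos
        · rw [hzerok k hu0]
          simp only [norm_zero, mul_zero, ne_eq, OfNat.ofNat_ne_zero, not_false_eq_true,
            zero_pow, mul_zero]
          positivity
        · have huR : (0:ℝ) < ((S \ N k).card : ℝ) := by exact_mod_cast hupos
          have hu1 : (1:ℝ) ≤ ((S \ N k).card : ℝ) := by exact_mod_cast hupos
          have hvnn : (0:ℝ) ≤ ((N k \ S).card : ℝ) := by positivity
          have hvF : ((N k \ S).card : ℝ) ≤ (f:ℝ) := by exact_mod_cast hvcard k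
          have huH : ((S \ N k).card : ℝ) ≤ (fhat:ℝ) := by exact_mod_cast hucard k
          -- decomposition B
          have ha1 : ∑ i ∈ N k \ S, (x i - xbar)
              = (∑ i ∈ N k \ S, (x i - x k)) + ((N k \ S).card:ℝ) • (x k - xbar) := by
            calc ∑ i ∈ N k \ S, (x i - xbar)
                = ∑ i ∈ N k \ S, ((x i - x k) + (x k - xbar)) := by
                  exact Finset.sum_congr rfl fun i _ => by abel
              _ = (∑ i ∈ N k \ S, (x i - x k)) + ((N k \ S).card:ℝ) • (x k - xbar) := by
                  rw [Finset.sum_add_distrib, Finset.sum_const, ← Nat.cast_smul_eq_nsmul ℝ]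
          have ha2 : ∑ j ∈ S \ N k, (x j - xbar)
              = (∑ j ∈ S \ N k, (x j - x k)) + ((S \ N k).card:ℝ) • (x k - xbar) := by
            calc ∑ j ∈ S \ N k, (x j - xbar)
                = ∑ j ∈ S \ N k, ((x j - x k) + (x k - xbar)) := by
                  exact Finset.sum_congr rfl fun j _ => by abel
              _ = (∑ j ∈ S \ N k, (x j - x k)) + ((S \ N k).card:ℝ) • (x k - xbar) := by
                  rw [Finset.sum_add_distrib, Finset.sum_const, ← Nat.cast_smul_eq_nsmul ℝ]
          have hsplitB : ∑ i ∈ N k, (x i - xbar)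
              = ((∑ i ∈ N k \ S, (x i - x k)) - ∑ j ∈ S \ N k, (x j - x k))
                - ((((S \ N k).card:ℝ) - ((N k \ S).card:ℝ)) • (x k - xbar)) := by
            rw [hsplit k, ha1, ha2, sub_smul]
            abel
          -- norm bound
          have hbadB : ∑ i ∈ N k \ S, ‖x i - x k‖
              ≤ (((N k \ S).card : ℝ)/((S \ N k).card : ℝ)) * (∑ j ∈ S \ N k, ‖x j - x k‖) := by
            have hper : ∀ i ∈ N k \ S, ‖x i - x k‖
                ≤ (∑ j ∈ S \ N k, ‖x j - x k‖)/((S \ N k).card : ℝ) := by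
              intro i hi
              rw [le_div_iff₀ huR]
              linarith [hbad k i hi]
            calc ∑ i ∈ N k \ S, ‖x i - x k‖
                ≤ ∑ _i ∈ N k \ S, (∑ j ∈ S \ N k, ‖x j - x k‖)/((S \ N k).card : ℝ) :=
                  Finset.sum_le_sum hper
              _ = ((N k \ S).card : ℝ) * ((∑ j ∈ S \ N k, ‖x j - x k‖)/((S \ N k).card : ℝ)) := by
                  rw [Finset.sum_const, nsmul_eq_mul]
              _ = _ := by ring
          have hguv : (((S \ N k).card:ℝ) - ((N k \ S).card:ℝ)) = (fhat:ℝ) - (f:ℝ) := by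
            linarith [huv k]
          have hmain : ((n:ℝ)-fhat) * ‖y k - xbar‖
              ≤ (1 + ((N k \ S).card : ℝ)/((S \ N k).card : ℝ)) * (∑ j ∈ S \ N k, ‖x j - x k‖)
                + ((fhat:ℝ)-(f:ℝ)) * ‖x k - xbar‖ := by
            have h0 : ((n:ℝ)-fhat) * ‖y k - xbar‖ = ‖((n:ℝ)-fhat) • (y k - xbar)‖ := by
              rw [norm_smul, Real.norm_eq_abs, abs_of_pos hmpos]
            rw [h0, hkey k, hsplitB]
            have t1 : ‖((∑ i ∈ N k \ S, (x i - x k)) - ∑ j ∈ S \ N k, (x j - x k))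
                - ((((S \ N k).card:ℝ) - ((N k \ S).card:ℝ)) • (x k - xbar))‖
                ≤ ((∑ i ∈ N k \ S, ‖x i - x k‖) + (∑ j ∈ S \ N k, ‖x j - x k‖))
                  + ((fhat:ℝ)-(f:ℝ)) * ‖x k - xbar‖ := by
              refine le_trans (norm_sub_le _ _) (add_le_add ?_ ?_)
              · exact le_trans (norm_sub_le _ _) (add_le_add (norm_sum_le _ _) (norm_sum_le _ _))
              · rw [norm_smul, Real.norm_eq_abs, hguv, abs_of_nonneg (by linarith : (0:ℝ) ≤ (fhat:ℝ)-(f:ℝ))]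
            have hexpand : (1 + ((N k \ S).card : ℝ)/((S \ N k).card : ℝ))
                * (∑ j ∈ S \ N k, ‖x j - x k‖)
                = (∑ j ∈ S \ N k, ‖x j - x k‖)
                  + (((N k \ S).card : ℝ)/((S \ N k).card : ℝ)) * (∑ j ∈ S \ N k, ‖x j - x k‖) := by
              ring
            rw [hexpand]
            linarith [t1, hbadB]
          have hLnn : (0:ℝ) ≤ ((n:ℝ)-fhat) * ‖y k - xbar‖ :=
            mul_nonneg (le_of_lt hmpos) (norm_nonneg _)
          have hsq := le_trans (pow_le_pow_left₀ hLnn hmain 2) (aux_young87 _ _)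
          have hQ2 : (∑ j ∈ S \ N k, ‖x j - x k‖)^2
              ≤ ((S \ N k).card : ℝ) * ∑ j ∈ S \ N k, ‖x j - x k‖ ^ 2 :=
            aux_sq_sum_le _ _
          have hsub2 : (∑ j ∈ S \ N k, ‖x j - x k‖ ^ 2) ≤ ∑ j ∈ S, ‖x j - x k‖ ^ 2 :=
            Finset.sum_le_sum_of_subset_of_nonneg (Finset.sdiff_subset) (fun _ _ _ => sq_nonneg _)
          have hWnn : (0:ℝ) ≤ ∑ j ∈ S, ‖x j - x k‖ ^ 2 :=
            Finset.sum_nonneg fun _ _ => sq_nonneg _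
          have hcoef : (fhat:ℝ)*((1 + ((N k \ S).card : ℝ)/((S \ N k).card : ℝ))^2
              * ((S \ N k).card : ℝ)) ≤ ((fhat:ℝ)+(f:ℝ))^2 := by
            have hveq : ((N k \ S).card : ℝ) = ((S \ N k).card : ℝ) - ((fhat:ℝ) - f) := by
              linarith [huv k]
            have hv0 : (0:ℝ) ≤ ((S \ N k).card : ℝ) - ((fhat:ℝ) - (f:ℝ)) := by
              rw [← hveq]; linarith [hvnn]
            have hmono := aux_coeff_mono ((S \ N k).card : ℝ) (f:ℝ) (fhat:ℝ) hu1 huH hFnn hFH hv0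
            have hid : (1 + ((N k \ S).card : ℝ)/((S \ N k).card : ℝ))^2 * ((S \ N k).card : ℝ)
                = (((S \ N k).card : ℝ) + (((S \ N k).card : ℝ) - ((fhat:ℝ) - (f:ℝ))))^2
                  / ((S \ N k).card : ℝ) := by
              rw [hveq]
              generalize ((S \ N k).card : ℝ) = u at huR ⊢
              field_simp
            rw [hid]
            calc (fhat:ℝ) * ((((S \ N k).card : ℝ) + (((S \ N k).card : ℝ) - ((fhat:ℝ) - (f:ℝ))))^2
                  / ((S \ N k).card : ℝ))
                ≤ (fhat:ℝ) * (((fhat:ℝ)+(f:ℝ))^2/(fhat:ℝ)) :=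
                  mul_le_mul_of_nonneg_left hmono (le_of_lt hHpos)
              _ = ((fhat:ℝ)+(f:ℝ))^2 := mul_div_cancel₀ _ (ne_of_gt hHpos)
          have e1 : (fhat:ℝ) * ((1 + ((N k \ S).card : ℝ)/((S \ N k).card : ℝ))
              * (∑ j ∈ S \ N k, ‖x j - x k‖))^2
              ≤ ((fhat:ℝ)+(f:ℝ))^2 * (∑ j ∈ S, ‖x j - x k‖ ^ 2) := by
            calc (fhat:ℝ) * ((1 + ((N k \ S).card : ℝ)/((S \ N k).card : ℝ))
                  * (∑ j ∈ S \ N k, ‖x j - x k‖))^2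
                = ((fhat:ℝ)*(1 + ((N k \ S).card : ℝ)/((S \ N k).card : ℝ))^2)
                  * (∑ j ∈ S \ N k, ‖x j - x k‖)^2 := by ring
              _ ≤ ((fhat:ℝ)*(1 + ((N k \ S).card : ℝ)/((S \ N k).card : ℝ))^2)
                  * (((S \ N k).card : ℝ) * ∑ j ∈ S \ N k, ‖x j - x k‖ ^ 2) := by
                  refine mul_le_mul_of_nonneg_left hQ2 ?_
                  positivity
              _ = ((fhat:ℝ)*((1 + ((N k \ S).card : ℝ)/((S \ N k).card : ℝ))^2
                  * ((S \ N k).card : ℝ))) * (∑ j ∈ S \ N k, ‖x j - x k‖ ^ 2) := by ring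
              _ ≤ ((fhat:ℝ)+(f:ℝ))^2 * (∑ j ∈ S \ N k, ‖x j - x k‖ ^ 2) :=
                  mul_le_mul_of_nonneg_right hcoef
                    (Finset.sum_nonneg fun _ _ => sq_nonneg _)
              _ ≤ ((fhat:ℝ)+(f:ℝ))^2 * (∑ j ∈ S, ‖x j - x k‖ ^ 2) :=
                  mul_le_mul_of_nonneg_left hsub2 (by positivity)
          have hsqH := mul_le_mul_of_nonneg_left hsq (le_of_lt hHpos)
          linarith [hsqH, e1]
      -- sum the per-k bounds
      have hdouble : ∑ k ∈ S, ∑ j ∈ S, ‖x j - x k‖ ^ 2 = 2 * ((n:ℝ)-f) * T := by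
        have hWk : ∀ k ∈ S, ∑ j ∈ S, ‖x j - x k‖ ^ 2 = T + (S.card:ℝ) * ‖xbar - x k‖ ^ 2 :=
          fun k _ => aux_sum_norm_sub_sq S x xbar (x k) hsxbar
        calc ∑ k ∈ S, ∑ j ∈ S, ‖x j - x k‖ ^ 2
            = ∑ k ∈ S, (T + (S.card:ℝ) * ‖xbar - x k‖ ^ 2) :=
              Finset.sum_congr rfl hWk
          _ = (S.card:ℝ) * T + (S.card:ℝ) * ∑ k ∈ S, ‖xbar - x k‖ ^ 2 := by
              rw [Finset.sum_add_distrib, Finset.sum_const, nsmul_eq_mul, ← Finset.mul_sum]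
          _ = (S.card:ℝ) * T + (S.card:ℝ) * T := by
              have : ∑ k ∈ S, ‖xbar - x k‖ ^ 2 = T := by
                rw [hT_def]
                exact Finset.sum_congr rfl fun k _ => by rw [norm_sub_rev]
              rw [this]
          _ = 2 * ((n:ℝ)-f) * T := by rw [hcast_s]; ring
      have hsumB : (fhat:ℝ) * (((n:ℝ)-fhat)^2 * Sy)
          ≤ (8/7) * ((fhat:ℝ)+(f:ℝ))^2 * (2 * ((n:ℝ)-f) * T)
            + 8 * ((fhat:ℝ)-(f:ℝ))^2 * (fhat:ℝ) * T := by
        have hsum1 := Finset.sum_le_sum hpk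
        have l1 : ∑ k ∈ S, (fhat:ℝ) * ((((n:ℝ)-fhat) * ‖y k - xbar‖) ^ 2)
            = (fhat:ℝ) * (((n:ℝ)-fhat)^2 * Sy) := by
          rw [hSy_def, Finset.mul_sum, Finset.mul_sum]
          exact Finset.sum_congr rfl fun k _ => by ring
        have r1 : ∑ k ∈ S, ((8/7) * ((fhat:ℝ)+(f:ℝ))^2 * (∑ j ∈ S, ‖x j - x k‖ ^ 2)
              + 8 * ((fhat:ℝ)-(f:ℝ))^2 * (fhat:ℝ) * ‖x k - xbar‖ ^ 2)
            = (8/7) * ((fhat:ℝ)+(f:ℝ))^2 * (∑ k ∈ S, ∑ j ∈ S, ‖x j - x k‖ ^ 2)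
              + 8 * ((fhat:ℝ)-(f:ℝ))^2 * (fhat:ℝ) * T := by
          rw [Finset.sum_add_distrib, ← Finset.mul_sum, ← Finset.mul_sum, hT_def]
        rw [l1, r1, hdouble] at hsum1
        exact hsum1
      have hcaseR : 5*(fhat:ℝ) ≤ 8*(f:ℝ) := by
        have : (5*fhat : ℕ) ≤ 8*f := by omega
        exact_mod_cast this
      have hstar := aux_starB (f:ℝ) (fhat:ℝ) (n:ℝ) hcaseR hFH h2Hn
      calc (204/35) * Sy * ((n:ℝ)-f) * ((fhat:ℝ) * ((n:ℝ)-fhat)^2)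
          = (204/35) * ((n:ℝ)-f) * ((fhat:ℝ) * (((n:ℝ)-fhat)^2 * Sy)) := by ring
        _ ≤ (204/35) * ((n:ℝ)-f) * ((8/7) * ((fhat:ℝ)+(f:ℝ))^2 * (2 * ((n:ℝ)-f) * T)
              + 8 * ((fhat:ℝ)-(f:ℝ))^2 * (fhat:ℝ) * T) := by
            refine mul_le_mul_of_nonneg_left hsumB ?_
            positivity
        _ = (12/245) * ((272*((fhat:ℝ)+(f:ℝ))^2*((n:ℝ)-(f:ℝ))^2
              + 952*((fhat:ℝ)-(f:ℝ))^2*(fhat:ℝ)*((n:ℝ)-(f:ℝ))) * T) := by ring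
        _ ≤ (12/245) * ((1715*(fhat:ℝ)^2*((n:ℝ)-(fhat:ℝ))^2) * T) := by
            refine mul_le_mul_of_nonneg_left (mul_le_mul_of_nonneg_right hstar hTnn) ?_
            norm_num
        _ = 84 * (fhat:ℝ)^2 * ((n:ℝ)-fhat)^2 * T := by ring
  -- ===================== conclусион =====================
  rw [hcast_s]
  have h1 : ‖y kstar - xbar‖ ^ 2 * (((n : ℝ) - f - fhat) * (((n:ℝ) - f) * ((fhat:ℝ) * ((n:ℝ)-fhat)^2)))
      ≤ 84 * (fhat:ℝ)^2 * ((n:ℝ)-fhat)^2 * T := by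
    calc ‖y kstar - xbar‖ ^ 2 * (((n : ℝ) - f - fhat) * (((n:ℝ) - f) * ((fhat:ℝ) * ((n:ℝ)-fhat)^2)))
        = (‖y kstar - xbar‖ ^ 2 * ((n : ℝ) - f - fhat)) * (((n:ℝ) - f) * ((fhat:ℝ) * ((n:ℝ)-fhat)^2)) := by ring
      _ ≤ ((204/35) * Sy) * (((n:ℝ) - f) * ((fhat:ℝ) * ((n:ℝ)-fhat)^2)) := by
          have hw1 : (0:ℝ) < (n:ℝ) - f := by rw [← hcast_s]; exact hspos
          exact mul_le_mul_of_nonneg_right hKrum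
            (mul_nonneg (le_of_lt hw1) (by positivity))
      _ = (204/35) * Sy * ((n:ℝ) - f) * ((fhat:ℝ) * ((n:ℝ)-fhat)^2) := by ring
      _ ≤ 84 * (fhat:ℝ)^2 * ((n:ℝ)-fhat)^2 * T := hfinal
  -- turn into goal
  have hw1 : (0:ℝ) < (n:ℝ) - f := by rw [← hcast_s]; exact hspos
  have hrhs : (84 * (fhat:ℝ) / ((n:ℝ) - f - fhat)) * (((n:ℝ) - f)⁻¹ * T)
      = (84 * (fhat:ℝ) * T) / (((n:ℝ) - f - fhat) * ((n:ℝ) - f)) := by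
    field_simp
  rw [hrhs, le_div_iff₀ (by positivity)]
  have hpos2 : (0:ℝ) < (fhat:ℝ) * ((n:ℝ) - fhat)^2 := by
    apply mul_pos hHpos; positivity
  refine le_of_mul_le_mul_right ?_ hpos2
  calc ‖y kstar - xbar‖ ^ 2 * (((n:ℝ) - f - fhat) * ((n:ℝ) - f)) * ((fhat:ℝ) * ((n:ℝ) - fhat)^2)
      = ‖y kstar - xbar‖ ^ 2 * (((n : ℝ) - f - fhat) * (((n:ℝ) - f) * ((fhat:ℝ) * ((n:ℝ)-fhat)^2))) := by ring
    _ ≤ 84 * (fhat:ℝ)^2 * ((n:ℝ)-fhat)^2 * T := h1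
    _ = 84 * (fhat:ℝ) * T * ((fhat:ℝ) * ((n:ℝ) - fhat)^2) := by ring
end

section
/- Let n, d ≥ 1, let f, f̂ be integers with 0 ≤ f ≤ f̂ < n/2, let κ ≥ 0, and let A : (ℝ^d)ⁿ → ℝ^d be an (f,κ)-robust aggregator. Let x₁,…,x_n ∈ ℝ^d, for each k ∈ {1,…,n} let N_k be a set of (n−f̂) nearest neighbors of x_k among x₁,…,x_n, and set y_k = (1/(n−f̂))∑_{i∈N_k} x_i (the f̂-NNM transform). Then for every S ⊆ {1,…,n} with |S| = n − f, ‖A(y₁,…,y_n) − x̄_S‖² ≤ (12f̂(κ+1)/(n−f))·(1/|S|)∑_{i∈S}‖x_i − x̄_S‖²; that is, A∘(f̂-NNM) is (f,κ')-robust with κ' = 12f̂(κ+1)/(n−f). -/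
open Finset

private lemma two_mul_le_of_sq_le (X P Q : ℝ) (hP : 0 ≤ P) (hQ : 0 ≤ Q)
    (h : X ^ 2 ≤ P * Q) : 2 * X ≤ P + Q := by
  nlinarith [sq_nonneg (P - Q)]

private lemma poly_ineq (a g e h : ℕ) :
    ((a+g+2*e+h : ℕ):ℝ) * (((a:ℝ) + ((a+e:ℕ):ℝ) + 2*((a+g:ℕ):ℝ)) *
      (((g+e+h:ℕ):ℝ)*((a+e:ℕ):ℝ) + (a:ℝ)*((a+g+2*e+h:ℕ):ℝ) + 2*((a+g:ℕ):ℝ)*((a+e:ℕ):ℝ)))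
      ≤ 12*((a+g+e:ℕ):ℝ) * ((a+e:ℕ):ℝ) * (((a+g+e+h:ℕ):ℝ))^2 := by
  have h0 : (0:ℝ) ≤ 11*(e:ℝ)^2*(h:ℝ)^2 + 21*(e:ℝ)^3*h + 10*(e:ℝ)^4 + 10*g*e*(h:ℝ)^2
      + 38*g*(e:ℝ)^2*h + 25*g*(e:ℝ)^3 + 16*(g:ℝ)^2*e*h + 19*(g:ℝ)^2*(e:ℝ)^2 + 6*(g:ℝ)^3*e
      + 18*a*e*(h:ℝ)^2 + 50*a*(e:ℝ)^2*h + 29*a*(e:ℝ)^3 + 8*a*g*(h:ℝ)^2 + 54*a*g*e*h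
      + 42*a*g*(e:ℝ)^2 + 12*a*(g:ℝ)^2*h + 24*a*(g:ℝ)^2*e + 4*a*(g:ℝ)^3 + 4*(a:ℝ)^2*(h:ℝ)^2
      + 27*(a:ℝ)^2*e*h + 17*(a:ℝ)^2*(e:ℝ)^2 + 14*(a:ℝ)^2*g*h + 15*(a:ℝ)^2*g*e
      + 6*(a:ℝ)^2*(g:ℝ)^2 + 4*(a:ℝ)^3*h + 1*(a:ℝ)^3*e + 2*(a:ℝ)^3*g := by positivity
  have expand : 12*((a+g+e:ℕ):ℝ) * ((a+e:ℕ):ℝ) * (((a+g+e+h:ℕ):ℝ))^2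
      - ((a+g+2*e+h : ℕ):ℝ) * (((a:ℝ) + ((a+e:ℕ):ℝ) + 2*((a+g:ℕ):ℝ)) *
      (((g+e+h:ℕ):ℝ)*((a+e:ℕ):ℝ) + (a:ℝ)*((a+g+2*e+h:ℕ):ℝ) + 2*((a+g:ℕ):ℝ)*((a+e:ℕ):ℝ)))
      = 11*(e:ℝ)^2*(h:ℝ)^2 + 21*(e:ℝ)^3*h + 10*(e:ℝ)^4 + 10*g*e*(h:ℝ)^2
      + 38*g*(e:ℝ)^2*h + 25*g*(e:ℝ)^3 + 16*(g:ℝ)^2*e*h + 19*(g:ℝ)^2*(e:ℝ)^2 + 6*(g:ℝ)^3*e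
      + 18*a*e*(h:ℝ)^2 + 50*a*(e:ℝ)^2*h + 29*a*(e:ℝ)^3 + 8*a*g*(h:ℝ)^2 + 54*a*g*e*h
      + 42*a*g*(e:ℝ)^2 + 12*a*(g:ℝ)^2*h + 24*a*(g:ℝ)^2*e + 4*a*(g:ℝ)^3 + 4*(a:ℝ)^2*(h:ℝ)^2
      + 27*(a:ℝ)^2*e*h + 17*(a:ℝ)^2*(e:ℝ)^2 + 14*(a:ℝ)^2*g*h + 15*(a:ℝ)^2*g*e
      + 6*(a:ℝ)^2*(g:ℝ)^2 + 4*(a:ℝ)^3*h + 1*(a:ℝ)^3*e + 2*(a:ℝ)^3*g := by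
    push_cast; ring
  linarith

set_option maxHeartbeats 1000000 in
private lemma key_real (aR F FH P4 B M I0 σ W τ r s : ℝ)
    (ha : 0 ≤ aR) (hF : 0 ≤ F) (hP4 : 0 ≤ P4) (hB : 0 < B) (hM : 0 ≤ M) (hI0 : 0 ≤ I0)
    (hσ : 0 ≤ σ) (hW : 0 ≤ W) (hτ : 0 ≤ τ)
    (hr0 : 0 ≤ r) (hr2 : r^2 = M) (hs0 : 0 ≤ s) (hs2 : s^2 = 12*FH)
    (hpoly : M*((aR + B + 2*F) * (I0*B + aR*M + 2*F*B)) ≤ 12*FH*B*P4^2)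
    (hW2 : M*W^2 ≤ B*I0*σ^2) (hτ2 : B*τ^2 ≤ σ^2) :
    M*(W + aR*τ) + 2*F*r*σ ≤ s*P4*σ := by
  have hB0 : 0 ≤ B := hB.le
  have hσ2 : 0 ≤ σ^2 := sq_nonneg σ
  have nBI : 0 ≤ B*I0*σ^2 := mul_nonneg (mul_nonneg hB0 hI0) hσ2
  have nAM : 0 ≤ aR*M*σ^2 := mul_nonneg (mul_nonneg ha hM) hσ2
  have nFB : 0 ≤ 2*F*B*σ^2 := by
    have := mul_nonneg (mul_nonneg (mul_nonneg (by norm_num : (0:ℝ) ≤ 2) hF) hB0) hσ2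
    linarith
  have e1 : B*(r*W)^2 ≤ B*(B*I0*σ^2) := by
    have h2 := mul_le_mul_of_nonneg_left hW2 hB0
    have h1 : B*(r*W)^2 = B*(M*W^2) := by rw [← hr2]; ring
    rw [h1]; exact h2
  have e2 : B*(r*aR*τ)^2 ≤ aR*(aR*M*σ^2) := by
    have h2 : aR^2*M*(B*τ^2) ≤ aR^2*M*σ^2 :=
      mul_le_mul_of_nonneg_left hτ2 (mul_nonneg (sq_nonneg aR) hM)
    have h1 : B*(r*aR*τ)^2 = aR^2*M*(B*τ^2) := by rw [← hr2]; ring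
    rw [h1]; nlinarith [h2]
  have e3 : B*(2*F*σ)^2 = 2*F*(2*F*B*σ^2) := by ring
  have nA1 : 0 ≤ B*(r*W)^2 := mul_nonneg hB0 (sq_nonneg _)
  have nA2 : 0 ≤ B*(r*aR*τ)^2 := mul_nonneg hB0 (sq_nonneg _)
  have nA3 : 0 ≤ B*(2*F*σ)^2 := mul_nonneg hB0 (sq_nonneg _)
  have c12 : 2*(B*((r*W)*(r*aR*τ))) ≤ aR*(B*I0*σ^2) + B*(aR*M*σ^2) := by
    apply two_mul_le_of_sq_le _ _ _ (mul_nonneg ha nBI) (mul_nonneg hB0 nAM)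
    have hprod : (B*(r*W)^2)*(B*(r*aR*τ)^2) ≤ (B*(B*I0*σ^2))*(aR*(aR*M*σ^2)) :=
      mul_le_mul e1 e2 nA2 (mul_nonneg hB0 nBI)
    calc (B*((r*W)*(r*aR*τ)))^2 = (B*(r*W)^2)*(B*(r*aR*τ)^2) := by ring
      _ ≤ (B*(B*I0*σ^2))*(aR*(aR*M*σ^2)) := hprod
      _ = (aR*(B*I0*σ^2)) * (B*(aR*M*σ^2)) := by ring
  have c13 : 2*(B*((r*W)*(2*F*σ))) ≤ 2*F*(B*I0*σ^2) + B*(2*F*B*σ^2) := by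
    apply two_mul_le_of_sq_le _ _ _ (by nlinarith [nBI, hF]) (mul_nonneg hB0 nFB)
    have hprod : (B*(r*W)^2)*(B*(2*F*σ)^2) ≤ (B*(B*I0*σ^2))*(2*F*(2*F*B*σ^2)) := by
      apply mul_le_mul e1 (le_of_eq e3) nA3 (mul_nonneg hB0 nBI)
    calc (B*((r*W)*(2*F*σ)))^2 = (B*(r*W)^2)*(B*(2*F*σ)^2) := by ring
      _ ≤ (B*(B*I0*σ^2))*(2*F*(2*F*B*σ^2)) := hprod
      _ = (2*F*(B*I0*σ^2)) * (B*(2*F*B*σ^2)) := by ring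
  have c23 : 2*(B*((r*aR*τ)*(2*F*σ))) ≤ 2*F*(aR*M*σ^2) + aR*(2*F*B*σ^2) := by
    apply two_mul_le_of_sq_le _ _ _ (by nlinarith [nAM, hF]) (mul_nonneg ha nFB)
    have hprod : (B*(r*aR*τ)^2)*(B*(2*F*σ)^2) ≤ (aR*(aR*M*σ^2))*(2*F*(2*F*B*σ^2)) := by
      apply mul_le_mul e2 (le_of_eq e3) nA3 (mul_nonneg ha nAM)
    calc (B*((r*aR*τ)*(2*F*σ)))^2 = (B*(r*aR*τ)^2)*(B*(2*F*σ)^2) := by ring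
      _ ≤ (aR*(aR*M*σ^2))*(2*F*(2*F*B*σ^2)) := hprod
      _ = (2*F*(aR*M*σ^2)) * (aR*(2*F*B*σ^2)) := by ring
  have hBY : B*((r*W)+(r*aR*τ)+(2*F*σ))^2
      ≤ ((aR + B + 2*F) * ((I0*B + aR*M + 2*F*B))) * σ^2 := by
    have hexpand : B*((r*W)+(r*aR*τ)+(2*F*σ))^2 = B*(r*W)^2 + B*(r*aR*τ)^2 + B*(2*F*σ)^2
        + 2*(B*((r*W)*(r*aR*τ))) + 2*(B*((r*W)*(2*F*σ))) + 2*(B*((r*aR*τ)*(2*F*σ))) := by ring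
    have hsum : B*(B*I0*σ^2) + aR*(aR*M*σ^2) + 2*F*(2*F*B*σ^2)
        + (aR*(B*I0*σ^2) + B*(aR*M*σ^2)) + (2*F*(B*I0*σ^2) + B*(2*F*B*σ^2))
        + (2*F*(aR*M*σ^2) + aR*(2*F*B*σ^2))
        = ((aR + B + 2*F) * ((I0*B + aR*M + 2*F*B))) * σ^2 := by ring
    linarith
  have hstep : B*(r*((r*W)+(r*aR*τ)+(2*F*σ)))^2 ≤ (s^2*P4^2*σ^2)*B := by
    have h1 : B*(r*((r*W)+(r*aR*τ)+(2*F*σ)))^2 = M*(B*((r*W)+(r*aR*τ)+(2*F*σ))^2) := by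
      rw [← hr2]; ring
    have h2 : M*(B*((r*W)+(r*aR*τ)+(2*F*σ))^2)
        ≤ M*(((aR + B + 2*F) * ((I0*B + aR*M + 2*F*B))) * σ^2) :=
      mul_le_mul_of_nonneg_left hBY hM
    have h3 : M*(((aR + B + 2*F) * ((I0*B + aR*M + 2*F*B))) * σ^2) ≤ (12*FH*B*P4^2)*σ^2 := by
      have := mul_le_mul_of_nonneg_right hpoly hσ2
      calc M*(((aR + B + 2*F) * ((I0*B + aR*M + 2*F*B))) * σ^2)
          = (M*((aR + B + 2*F) * (I0*B + aR*M + 2*F*B)))*σ^2 := by ring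
        _ ≤ (12*FH*B*P4^2)*σ^2 := this
    rw [h1, hs2]
    calc M*(B*((r*W)+(r*aR*τ)+(2*F*σ))^2) ≤ (12*FH*B*P4^2)*σ^2 := le_trans h2 h3
      _ = (12*FH*P4^2*σ^2)*B := by ring
  have hY0 : 0 ≤ (r*W)+(r*aR*τ)+(2*F*σ) := by
    have := mul_nonneg hr0 hW
    have := mul_nonneg (mul_nonneg hr0 ha) hτ
    have := mul_nonneg (mul_nonneg (by norm_num : (0:ℝ) ≤ 2) hF) hσ
    linarith
  have hrY2 : (r*((r*W)+(r*aR*τ)+(2*F*σ)))^2 ≤ (s*P4*σ)^2 := by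
    have h4 := (mul_le_mul_iff_of_pos_right hB).mp
      (by linarith [hstep] : (r*((r*W)+(r*aR*τ)+(2*F*σ)))^2 * B ≤ (s^2*P4^2*σ^2)*B)
    calc (r*((r*W)+(r*aR*τ)+(2*F*σ)))^2 ≤ s^2*P4^2*σ^2 := h4
      _ = (s*P4*σ)^2 := by ring
  have hfin : r*((r*W)+(r*aR*τ)+(2*F*σ)) ≤ s*P4*σ := by
    apply le_of_pow_le_pow_left₀ (by norm_num) (mul_nonneg (mul_nonneg hs0 hP4) hσ) hrY2
  calc M*(W + aR*τ) + 2*F*r*σ = r*((r*W)+(r*aR*τ)+(2*F*σ)) := by rw [← hr2]; ring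
    _ ≤ s*P4*σ := hfin

private lemma key_ineq (a g e h : ℕ) (σ W τ : ℝ) (hσ : 0 ≤ σ) (hW : 0 ≤ W) (hτ : 0 ≤ τ)
    (hb : 0 < a + e)
    (hW2 : ((a+g+2*e+h : ℕ):ℝ) * W^2 ≤ ((a+e : ℕ):ℝ) * ((g+e+h : ℕ):ℝ) * σ^2)
    (hτ2 : ((a+e : ℕ):ℝ) * τ^2 ≤ σ^2) :
    ((a+g+2*e+h : ℕ):ℝ) * (W + (a:ℝ)*τ) + 2*((a+g:ℕ):ℝ) * Real.sqrt ((a+g+2*e+h : ℕ):ℝ) * σ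
      ≤ Real.sqrt (12*((a+g+e:ℕ):ℝ)) * ((a+g+e+h:ℕ):ℝ) * σ := by
  exact key_real (a:ℝ) ((a+g:ℕ):ℝ) ((a+g+e:ℕ):ℝ) ((a+g+e+h:ℕ):ℝ) ((a+e:ℕ):ℝ)
      ((a+g+2*e+h : ℕ):ℝ) ((g+e+h:ℕ):ℝ) σ W τ _ _
      (Nat.cast_nonneg a) (Nat.cast_nonneg _) (Nat.cast_nonneg _)
      (by exact_mod_cast hb) (Nat.cast_nonneg _) (Nat.cast_nonneg _) hσ hW hτ
      (Real.sqrt_nonneg _) (Real.sq_sqrt (Nat.cast_nonneg _)) (Real.sqrt_nonneg _)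
      (Real.sq_sqrt (by positivity)) (poly_ineq a g e h) hW2 hτ2

private lemma norm_sum_sq_le {E : Type*} [NormedAddCommGroup E] {ι : Type*} (s : Finset ι)
    (v : ι → E) : ‖∑ i ∈ s, v i‖^2 ≤ (s.card : ℝ) * ∑ i ∈ s, ‖v i‖^2 := by
  have h1 : ‖∑ i ∈ s, v i‖ ≤ ∑ i ∈ s, ‖v i‖ := norm_sum_le s v
  have h2 : (∑ i ∈ s, ‖v i‖)^2 ≤ (s.card : ℝ) * ∑ i ∈ s, ‖v i‖^2 := by
    have := Finset.sum_mul_sq_le_sq_mul_sq s (fun _ => (1:ℝ)) (fun i => ‖v i‖)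
    simpa using this
  calc ‖∑ i ∈ s, v i‖^2 ≤ (∑ i ∈ s, ‖v i‖)^2 := by
        apply pow_le_pow_left₀ (norm_nonneg _) h1
    _ ≤ _ := h2

private lemma var_split {E : Type*} [NormedAddCommGroup E] [InnerProductSpace ℝ E] {ι : Type*}
    (s : Finset ι) (y : ι → E) (c yb : E) (hyb : (s.card : ℝ) • yb = ∑ i ∈ s, y i) :
    ∑ i ∈ s, ‖y i - c‖^2 = (∑ i ∈ s, ‖y i - yb‖^2) + (s.card : ℝ) * ‖yb - c‖^2 := by
  have key : ∀ i ∈ s, ‖y i - c‖^2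
      = ‖y i - yb‖^2 + (2*(inner ℝ (y i - yb) (yb - c) : ℝ) + ‖yb - c‖^2) := by
    intro i _
    rw [show y i - c = (y i - yb) + (yb - c) by abel, norm_add_sq_real]
    ring
  rw [Finset.sum_congr rfl key, Finset.sum_add_distrib, Finset.sum_add_distrib]
  have hzero : ∑ i ∈ s, (y i - yb) = 0 := by
    rw [Finset.sum_sub_distrib, Finset.sum_const, ← Nat.cast_smul_eq_nsmul ℝ, hyb, sub_self]
  have hinner : ∑ i ∈ s, 2*(inner ℝ (y i - yb) (yb - c) : ℝ) = 0 := by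
    rw [← Finset.mul_sum, ← sum_inner, hzero, inner_zero_left, mul_zero]
  rw [hinner, Finset.sum_const, nsmul_eq_mul]
  ring

private lemma kappa_combine (κ m s t0 V : ℝ) (hκ : 0 ≤ κ) (hm : 0 < m) (hs : 0 ≤ s)
    (ht0 : 0 ≤ t0) (hV : 0 ≤ V) (h1 : s^2 ≤ κ/m*V) :
    (s+t0)^2 ≤ (κ+1)/m*(V + m*t0^2) := by
  have h1' : m*s^2 ≤ κ*V := by
    have := mul_le_mul_of_nonneg_left h1 hm.le
    calc m*s^2 ≤ m*(κ/m*V) := this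
      _ = κ*V := by field_simp
  rw [div_mul_eq_mul_div, le_div_iff₀ hm]
  rcases eq_or_lt_of_le hκ with hk0 | hkpos
  · have hs2 : s^2 = 0 := le_antisymm (by nlinarith [h1']) (sq_nonneg s)
    have hs0 : s = 0 := sq_eq_zero_iff.mp hs2
    rw [hs0, ← hk0]; nlinarith [hV]
  · nlinarith [mul_nonneg hm.le (sq_nonneg (s - κ*t0)),
      mul_le_mul_of_nonneg_left h1' (by linarith : (0:ℝ) ≤ κ+1), hkpos]

set_option maxHeartbeats 1000000 in
/-- NNM boosting: if `A` is `(f,κ)`-robust and `0 ≤ f ≤ f̂ < n/2`, then `A ∘ (f̂-NNM)` is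
`(f,κ')`-robust with `κ' = 12 f̂ (κ+1) / (n - f)`. -/
theorem stmt_4 (n d f fhat : ℕ) (hn : 1 ≤ n) (hd : 1 ≤ d)
    (hf : f ≤ fhat) (hfn : 2 * fhat < n) (κ : ℝ) (hκ : 0 ≤ κ)
    (A : (Fin n → EuclideanSpace ℝ (Fin d)) → EuclideanSpace ℝ (Fin d))
    (hA : IsRobust n d f κ A)
    (x : Fin n → EuclideanSpace ℝ (Fin d))
    (N : Fin n → Finset (Fin n)) (hN : ∀ k, IsNN n d fhat x k (N k))
    (y : Fin n → EuclideanSpace ℝ (Fin d))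
    (hy : ∀ k, y k = ((n : ℝ) - fhat)⁻¹ • ∑ i ∈ N k, x i)
    (S : Finset (Fin n)) (hS : S.card = n - f) :
    ‖A y - (S.card : ℝ)⁻¹ • ∑ i ∈ S, x i‖ ^ 2
      ≤ (12 * (fhat : ℝ) * (κ + 1) / ((n : ℝ) - f)) *
          ((S.card : ℝ)⁻¹ * ∑ i ∈ S, ‖x i - (S.card : ℝ)⁻¹ • ∑ j ∈ S, x j‖ ^ 2) := by
  classical
  have hfhn : fhat < n := by omega
  have hfln : f < n := by omega
  set m : ℕ := n - f with hmdef
  set p : ℕ := n - fhat with hpdef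
  have hmpos : 0 < m := by omega
  have hppos : 0 < p := by omega
  have hfp : fhat < p := by omega
  have hm2p : m ≤ 2*p := by omega
  have hSm : (S.card : ℝ) = (m:ℝ) := by rw [hS]
  have hSpos : (0:ℝ) < (m:ℝ) := by exact_mod_cast hmpos
  have hppos' : (0:ℝ) < (p:ℝ) := by exact_mod_cast hppos
  have hne : (S.card : ℝ) ≠ 0 := by rw [hSm]; exact ne_of_gt hSpos
  have hpcast : (n:ℝ) - (fhat:ℝ) = (p:ℝ) := by
    rw [hpdef]; exact (Nat.cast_sub (le_of_lt hfhn)).symm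
  have hMn : (n:ℝ) - (f:ℝ) = (m:ℝ) := by
    rw [hmdef]; exact (Nat.cast_sub (le_of_lt hfln)).symm
  set xbar : EuclideanSpace ℝ (Fin d) := (S.card : ℝ)⁻¹ • ∑ i ∈ S, x i with hxbar
  set σ2 : ℝ := ∑ i ∈ S, ‖x i - xbar‖^2 with hσ2def
  have hσ2nn : 0 ≤ σ2 := by
    rw [hσ2def]; exact Finset.sum_nonneg fun i _ => sq_nonneg _
  set σ : ℝ := Real.sqrt σ2 with hσdef
  have hσnn : 0 ≤ σ := Real.sqrt_nonneg _
  have hσsq : σ^2 = σ2 := Real.sq_sqrt hσ2nn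
  set R : ℝ := Real.sqrt ((m:ℕ):ℝ) with hRdef
  set Q : ℝ := Real.sqrt (12*((fhat:ℕ):ℝ)) with hQdef
  have hR0 : 0 ≤ R := Real.sqrt_nonneg _
  have hR2 : R^2 = (m:ℝ) := Real.sq_sqrt (Nat.cast_nonneg _)
  have hQ0 : 0 ≤ Q := Real.sqrt_nonneg _
  have hQ2 : Q^2 = 12*(fhat:ℝ) := Real.sq_sqrt (by positivity)
  have hsum0 : ∑ i ∈ S, (x i - xbar) = 0 := by
    rw [Finset.sum_sub_distrib, Finset.sum_const, ← Nat.cast_smul_eq_nsmul ℝ, hxbar,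
      smul_inv_smul₀ hne, sub_self]
  have hc0 : 2*(f:ℝ)*R*σ ≤ Q*(p:ℝ)*σ := by
    have hfp' : f ≤ p := by omega
    have h1' : f^2 ≤ fhat*p := by
      calc f^2 = f*f := sq f
        _ ≤ fhat*p := Nat.mul_le_mul hf hfp'
    have hnat : 4*f^2*m ≤ 12*fhat*p^2 := by
      calc 4*f^2*m ≤ 4*(fhat*p)*(2*p) := Nat.mul_le_mul (Nat.mul_le_mul_left 4 h1') hm2p
        _ = 8*(fhat*p^2) := by ring
        _ ≤ 12*(fhat*p^2) := Nat.mul_le_mul_right _ (by norm_num)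
        _ = 12*fhat*p^2 := by ring
    have hcastineq : 4*(f:ℝ)^2*(m:ℝ) ≤ 12*(fhat:ℝ)*(p:ℝ)^2 := by exact_mod_cast hnat
    have e1 : (2*(f:ℝ)*R)^2 = 4*(f:ℝ)^2*(m:ℝ) := by
      rw [show (2*(f:ℝ)*R)^2 = 4*(f:ℝ)^2*R^2 by ring, hR2]
    have e2 : (Q*(p:ℝ))^2 = 12*(fhat:ℝ)*(p:ℝ)^2 := by
      rw [show (Q*(p:ℝ))^2 = Q^2*(p:ℝ)^2 by ring, hQ2]
    have h2 : 2*(f:ℝ)*R ≤ Q*(p:ℝ) := by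
      apply le_of_pow_le_pow_left₀ two_ne_zero (mul_nonneg hQ0 (le_of_lt hppos'))
      rw [e1, e2]; exact hcastineq
    exact mul_le_mul_of_nonneg_right h2 hσnn
  -- per-k bound
  have perk : ∀ k ∈ S, (m:ℝ)*((p:ℝ)*‖y k - xbar‖)
      ≤ (Q*(p:ℝ)*σ - 2*(f:ℝ)*R*σ) + 2*(f:ℝ)*(m:ℝ)*‖x k - xbar‖ := by
    intro k hk
    obtain ⟨hNc, hNnear⟩ := hN k
    have hNcp : (N k).card = p := by rw [hpdef]; exact hNc
    set B : Finset (Fin n) := S \ N k with hBdef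
    set U : Finset (Fin n) := N k \ S with hUdef
    set I : Finset (Fin n) := N k ∩ S with hIdef
    have hIU : I.card + U.card = (N k).card := by
      rw [hIdef, hUdef]; exact Finset.card_inter_add_card_sdiff (N k) S
    have hIS : I.card + B.card = S.card := by
      have h0 := Finset.card_inter_add_card_sdiff S (N k)
      rw [Finset.inter_comm] at h0
      rw [hIdef, hBdef]; exact h0
    have hUf : U.card ≤ f := by
      have hsub : U ⊆ univ \ S := by
        intro i hi
        rw [hUdef, Finset.mem_sdiff] at hi
        rw [Finset.mem_sdiff]
        exact ⟨Finset.mem_univ i, hi.2⟩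
      have h2 := Finset.card_le_card hsub
      rw [Finset.card_univ_diff, Fintype.card_fin, hS] at h2
      omega
    have hBfh : B.card ≤ fhat := by
      have hsub : B ⊆ univ \ N k := by
        intro i hi
        rw [hBdef, Finset.mem_sdiff] at hi
        rw [Finset.mem_sdiff]
        exact ⟨Finset.mem_univ i, hi.2⟩
      have h2 := Finset.card_le_card hsub
      rw [Finset.card_univ_diff, Fintype.card_fin, hNcp] at h2
      omega
    have hBU : B.card = U.card + (fhat - f) := by omega
    have hsplitS : (∑ i ∈ I, (x i - xbar)) + (∑ i ∈ B, (x i - xbar)) = 0 := by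
      have h0 := Finset.sum_inter_add_sum_sdiff S (N k) (fun i => x i - xbar)
      rw [Finset.inter_comm] at h0
      rw [hIdef, hBdef, h0]
      exact hsum0
    have hIB : ∑ i ∈ I, (x i - xbar) = - ∑ i ∈ B, (x i - xbar) :=
      eq_neg_of_add_eq_zero_left hsplitS
    have hsplitN : ∑ i ∈ N k, (x i - xbar)
        = (∑ i ∈ I, (x i - xbar)) + (∑ i ∈ U, (x i - xbar)) := by
      rw [hIdef, hUdef]
      exact (Finset.sum_inter_add_sum_sdiff (N k) S _).symm
    set W : ℝ := ‖∑ i ∈ I, (x i - xbar)‖ with hWdef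
    have hW0 : 0 ≤ W := norm_nonneg _
    have hWB2 : W^2 ≤ (B.card:ℝ) * ∑ i ∈ B, ‖x i - xbar‖^2 := by
      rw [hWdef, hIB, norm_neg]; exact norm_sum_sq_le B _
    have hWI2 : W^2 ≤ (I.card:ℝ) * ∑ i ∈ I, ‖x i - xbar‖^2 := norm_sum_sq_le I _
    have hpart : (∑ i ∈ I, ‖x i - xbar‖^2) + (∑ i ∈ B, ‖x i - xbar‖^2) = σ2 := by
      have h0 := Finset.sum_inter_add_sum_sdiff S (N k) (fun i => ‖x i - xbar‖^2)
      rw [Finset.inter_comm] at h0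
      rw [hIdef, hBdef, h0, hσ2def]
    have hW2 : (m:ℝ)*W^2 ≤ (B.card:ℝ)*(I.card:ℝ)*σ2 := by
      have h1 := mul_le_mul_of_nonneg_left hWB2 (Nat.cast_nonneg (α := ℝ) I.card)
      have h2 := mul_le_mul_of_nonneg_left hWI2 (Nat.cast_nonneg (α := ℝ) B.card)
      have hcm : (m:ℝ) = (I.card:ℝ) + (B.card:ℝ) := by
        have h3 : I.card + B.card = m := by omega
        exact_mod_cast h3.symm
      rw [hcm, ← hpart]
      nlinarith [h1, h2]
    have hy' : y k = ((p:ℝ))⁻¹ • ∑ i ∈ N k, x i := by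
      have h0 := hy k
      rw [hpcast] at h0
      exact h0
    have hNsum : ∑ i ∈ N k, (x i - xbar) = (p:ℝ) • (y k - xbar) := by
      rw [Finset.sum_sub_distrib, Finset.sum_const, hNcp, ← Nat.cast_smul_eq_nsmul ℝ,
        smul_sub, hy', smul_inv_smul₀ (ne_of_gt hppos')]
    have hyid : (p:ℝ)*‖y k - xbar‖ = ‖∑ i ∈ N k, (x i - xbar)‖ := by
      rw [hNsum, norm_smul, Real.norm_natCast]
    rcases Nat.eq_zero_or_pos B.card with hb0 | hbpos
    · have hU0 : U.card = 0 := by omega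
      have hBe : B = ∅ := Finset.card_eq_zero.mp hb0
      have hUe : U = ∅ := Finset.card_eq_zero.mp hU0
      have hz : ∑ i ∈ N k, (x i - xbar) = 0 := by
        rw [hsplitN, hUe, Finset.sum_empty, add_zero, hIB, hBe, Finset.sum_empty, neg_zero]
      have hz2 : (m:ℝ)*((p:ℝ)*‖y k - xbar‖) = 0 := by
        rw [hyid, hz, norm_zero, mul_zero]
      rw [hz2]
      have h4 := mul_nonneg (mul_nonneg (mul_nonneg (by norm_num : (0:ℝ) ≤ 2)
        (Nat.cast_nonneg (α := ℝ) f)) (Nat.cast_nonneg (α := ℝ) m)) (norm_nonneg (x k - xbar))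
      linarith [hc0]
    · obtain ⟨j0, hj0B, hj0min⟩ := B.exists_min_image (fun j => ‖x j - xbar‖)
        (Finset.card_pos.mp hbpos)
      have hτ0 : 0 ≤ ‖x j0 - xbar‖ := norm_nonneg _
      have hτ2 : (B.card:ℝ)*‖x j0 - xbar‖^2 ≤ σ2 := by
        have h1 : B.card • ‖x j0 - xbar‖^2 ≤ ∑ j ∈ B, ‖x j - xbar‖^2 :=
          Finset.card_nsmul_le_sum B _ _ (fun j hj => pow_le_pow_left₀ hτ0 (hj0min j hj) 2)
        have h2 : ∑ j ∈ B, ‖x j - xbar‖^2 ≤ σ2 := by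
          rw [hσ2def]
          apply Finset.sum_le_sum_of_subset_of_nonneg
          · rw [hBdef]; exact Finset.sdiff_subset
          · intro i _ _; exact sq_nonneg _
        have h3 : (B.card:ℝ)*‖x j0 - xbar‖^2 = B.card • ‖x j0 - xbar‖^2 := by
          rw [nsmul_eq_mul]
        rw [h3]
        exact le_trans (by exact_mod_cast h1) h2
      have hu : ‖∑ i ∈ U, (x i - xbar)‖ ≤ (U.card:ℝ)*(‖x j0 - xbar‖ + 2*‖x k - xbar‖) := by
        have h1 := norm_sum_le U (fun i => x i - xbar)
        have h2 : ∀ i ∈ U, ‖x i - xbar‖ ≤ ‖x j0 - xbar‖ + 2*‖x k - xbar‖ := by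
          intro i hi
          rw [hUdef, Finset.mem_sdiff] at hi
          have hj0' : j0 ∈ B := hj0B
          rw [hBdef, Finset.mem_sdiff] at hj0'
          have hnear := hNnear i hi.1 j0 hj0'.2
          have t1 : ‖x i - xbar‖ ≤ ‖x i - x k‖ + ‖x k - xbar‖ := by
            have h3 := norm_add_le (x i - x k) (x k - xbar)
            rw [sub_add_sub_cancel] at h3
            exact h3
          have t2 : ‖x j0 - x k‖ ≤ ‖x j0 - xbar‖ + ‖x k - xbar‖ := by
            have h3 := norm_add_le (x j0 - xbar) (xbar - x k)
            rw [sub_add_sub_cancel] at h3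
            rw [norm_sub_rev xbar (x k)] at h3
            exact h3
          linarith
        have h3 := Finset.sum_le_card_nsmul U _ _ h2
        rw [nsmul_eq_mul] at h3
        exact le_trans h1 h3
      have hDk : (p:ℝ)*‖y k - xbar‖
          ≤ W + (U.card:ℝ)*(‖x j0 - xbar‖ + 2*‖x k - xbar‖) := by
        rw [hyid, hsplitN]
        have h4 := norm_add_le (∑ i ∈ I, (x i - xbar)) (∑ i ∈ U, (x i - xbar))
        rw [← hWdef] at h4
        linarith
      have ea : U.card + (fhat - f) = B.card := by omega
      have eg : (f - U.card) + (fhat - f) + (n - 2*fhat) = I.card := by omega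
      have em : U.card + (f - U.card) + 2*(fhat - f) + (n - 2*fhat) = m := by omega
      have ef : U.card + (f - U.card) = f := by omega
      have efh : U.card + (f - U.card) + (fhat - f) = fhat := by omega
      have ep : U.card + (f - U.card) + (fhat - f) + (n - 2*fhat) = p := by omega
      have K := key_ineq U.card (f - U.card) (fhat - f) (n - 2*fhat) σ W ‖x j0 - xbar‖
        hσnn hW0 hτ0 (by omega)
        (by rw [em, ea, eg, hσsq]; exact hW2)
        (by rw [ea, hσsq]; exact hτ2)
      rw [em, ep, efh, ef, ← hRdef, ← hQdef] at K
      have hDkm := mul_le_mul_of_nonneg_left hDk (le_of_lt hSpos)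
      have haf : (U.card:ℝ) ≤ (f:ℝ) := by exact_mod_cast hUf
      have htknn : (0:ℝ) ≤ ‖x k - xbar‖ := norm_nonneg _
      have hcross : (U.card:ℝ)*(m:ℝ)*‖x k - xbar‖ ≤ (f:ℝ)*(m:ℝ)*‖x k - xbar‖ :=
        mul_le_mul_of_nonneg_right (mul_le_mul_of_nonneg_right haf hSpos.le) htknn
      nlinarith [hDkm, K, hcross]
  -- summation over k
  have hsq : ∑ k ∈ S, ((m:ℝ)*((p:ℝ)*‖y k - xbar‖))^2
      ≤ ∑ k ∈ S, ((Q*(p:ℝ)*σ - 2*(f:ℝ)*R*σ) + 2*(f:ℝ)*(m:ℝ)*‖x k - xbar‖)^2 := by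
    apply Finset.sum_le_sum
    intro k hk
    apply pow_le_pow_left₀ (by positivity) (perk k hk)
  have hTsum : ∑ k ∈ S, ‖x k - xbar‖ ≤ R*σ := by
    have h1 : (∑ k ∈ S, ‖x k - xbar‖)^2 ≤ (m:ℝ)*σ2 := by
      have h0 := Finset.sum_mul_sq_le_sq_mul_sq S (fun _ => (1:ℝ)) (fun k => ‖x k - xbar‖)
      simp only [one_pow, one_mul, Finset.sum_const, nsmul_eq_mul, mul_one] at h0
      rw [hSm] at h0
      rw [hσ2def]
      exact h0
    have h2 : (R*σ)^2 = (m:ℝ)*σ2 := by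
      rw [mul_pow, hR2, hσsq]
    apply le_of_pow_le_pow_left₀ two_ne_zero (mul_nonneg hR0 hσnn)
    rw [h2]; exact h1
  have hcnn : 0 ≤ Q*(p:ℝ)*σ - 2*(f:ℝ)*R*σ := by linarith [hc0]
  have hexp : ∑ k ∈ S, ((Q*(p:ℝ)*σ - 2*(f:ℝ)*R*σ) + 2*(f:ℝ)*(m:ℝ)*‖x k - xbar‖)^2
      ≤ 12*(fhat:ℝ)*(m:ℝ)*(p:ℝ)^2*σ2 := by
    have e0 : ∀ k ∈ S, ((Q*(p:ℝ)*σ - 2*(f:ℝ)*R*σ) + 2*(f:ℝ)*(m:ℝ)*‖x k - xbar‖)^2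
        = (Q*(p:ℝ)*σ - 2*(f:ℝ)*R*σ)^2
          + 2*(Q*(p:ℝ)*σ - 2*(f:ℝ)*R*σ)*(2*(f:ℝ)*(m:ℝ))*‖x k - xbar‖
          + (2*(f:ℝ)*(m:ℝ))^2*‖x k - xbar‖^2 := by
      intro k _; ring
    have e1 : ∑ k ∈ S, ((Q*(p:ℝ)*σ - 2*(f:ℝ)*R*σ) + 2*(f:ℝ)*(m:ℝ)*‖x k - xbar‖)^2
        = (m:ℝ)*(Q*(p:ℝ)*σ - 2*(f:ℝ)*R*σ)^2
          + 2*(Q*(p:ℝ)*σ - 2*(f:ℝ)*R*σ)*(2*(f:ℝ)*(m:ℝ))*(∑ k ∈ S, ‖x k - xbar‖)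
          + (2*(f:ℝ)*(m:ℝ))^2*σ2 := by
      rw [Finset.sum_congr rfl e0, Finset.sum_add_distrib, Finset.sum_add_distrib,
        Finset.sum_const, ← Finset.mul_sum, ← Finset.mul_sum, nsmul_eq_mul, hSm, hσ2def]
    have e2 : 2*(Q*(p:ℝ)*σ - 2*(f:ℝ)*R*σ)*(2*(f:ℝ)*(m:ℝ))*(∑ k ∈ S, ‖x k - xbar‖)
        ≤ 2*(Q*(p:ℝ)*σ - 2*(f:ℝ)*R*σ)*(2*(f:ℝ)*(m:ℝ))*(R*σ) := by
      apply mul_le_mul_of_nonneg_left hTsum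
      positivity
    have e3 : (m:ℝ)*(Q*(p:ℝ)*σ - 2*(f:ℝ)*R*σ)^2
          + 2*(Q*(p:ℝ)*σ - 2*(f:ℝ)*R*σ)*(2*(f:ℝ)*(m:ℝ))*(R*σ)
          + (2*(f:ℝ)*(m:ℝ))^2*σ2
        = 12*(fhat:ℝ)*(m:ℝ)*(p:ℝ)^2*σ2 := by
      rw [← hσsq, ← hQ2]
      rw [show (m:ℝ) = R^2 from hR2.symm]
      ring
    linarith [e1, e2, e3]
  have hEsq : ∑ k ∈ S, ((m:ℝ)*((p:ℝ)*‖y k - xbar‖))^2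
      = (m:ℝ)^2*(p:ℝ)^2*∑ k ∈ S, ‖y k - xbar‖^2 := by
    rw [Finset.mul_sum]
    apply Finset.sum_congr rfl
    intro k _; ring
  have hVsum : ∑ k ∈ S, ‖y k - xbar‖^2 ≤ 12*(fhat:ℝ)*σ2/(m:ℝ) := by
    have h1 : (m:ℝ)^2*(p:ℝ)^2*(∑ k ∈ S, ‖y k - xbar‖^2) ≤ 12*(fhat:ℝ)*(m:ℝ)*(p:ℝ)^2*σ2 := by
      rw [← hEsq]; linarith [hsq, hexp]
    rw [le_div_iff₀ hSpos]
    have h2 : ((∑ k ∈ S, ‖y k - xbar‖^2) * (m:ℝ)) * ((m:ℝ)*(p:ℝ)^2)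
        ≤ (12*(fhat:ℝ)*σ2) * ((m:ℝ)*(p:ℝ)^2) := by nlinarith [h1]
    exact (mul_le_mul_iff_of_pos_right (by positivity)).mp h2
  -- apply robustness of A to y
  have hrob := hA y S (by omega)
  set ybar : EuclideanSpace ℝ (Fin d) := (S.card : ℝ)⁻¹ • ∑ i ∈ S, y i with hybardef
  rw [hSm] at hrob
  have hybar_s : (S.card:ℝ) • ybar = ∑ i ∈ S, y i := by
    rw [hybardef]; exact smul_inv_smul₀ hne _
  have hvar := var_split S y xbar ybar hybar_s
  rw [hSm] at hvar
  have hVnn : 0 ≤ ∑ i ∈ S, ‖y i - ybar‖^2 := Finset.sum_nonneg fun i _ => sq_nonneg _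
  have htri : ‖A y - xbar‖ ≤ ‖A y - ybar‖ + ‖ybar - xbar‖ := by
    have h3 := norm_add_le (A y - ybar) (ybar - xbar)
    rw [sub_add_sub_cancel] at h3
    exact h3
  have hcomb := kappa_combine κ (m:ℝ) ‖A y - ybar‖ ‖ybar - xbar‖ (∑ i ∈ S, ‖y i - ybar‖^2)
    hκ hSpos (norm_nonneg _) (norm_nonneg _) hVnn hrob
  calc ‖A y - xbar‖^2 ≤ (‖A y - ybar‖ + ‖ybar - xbar‖)^2 :=
        pow_le_pow_left₀ (norm_nonneg _) htri 2
    _ ≤ (κ+1)/(m:ℝ)*((∑ i ∈ S, ‖y i - ybar‖^2) + (m:ℝ)*‖ybar - xbar‖^2) := hcomb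
    _ = (κ+1)/(m:ℝ)*(∑ i ∈ S, ‖y i - xbar‖^2) := by rw [← hvar]
    _ ≤ (κ+1)/(m:ℝ)*(12*(fhat:ℝ)*σ2/(m:ℝ)) := by
        apply mul_le_mul_of_nonneg_left hVsum (by positivity)
    _ = 12 * (fhat:ℝ) * (κ + 1) / ((n:ℝ) - (f:ℝ)) * ((S.card:ℝ)⁻¹ * σ2) := by
        rw [hMn, hSm]
        field_simp
end

section
/- Let n, d ≥ 1, let f, f̂ be integers with 0 ≤ f ≤ f̂ < n/2, and let x₁,…,x_n ∈ ℝ^d. For each k ∈ {1,…,n} let N_k be a set of (n−f̂) nearest neighbors of x_k, and let k* ∈ {1,…,n} satisfy ∑_{i∈N_{k*}}‖x_i − x_{k*}‖² = min_{k∈{1,…,n}} ∑_{i∈N_k}‖x_i − x_k‖² (the f̂-Krum selection). Then for every S ⊆ {1,…,n} with |S| = n − f, ‖x_{k*} − x̄_S‖² ≤ (6(n−f)/(n−f−f̂))·(1/|S|)∑_{i∈S}‖x_i − x̄_S‖²; that is, f̂-Krum is (f,κ)-robust with κ = 6(n−f)/(n−f−f̂). -/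
open Finset

-- bias-variance
lemma bias_var {E : Type*} [NormedAddCommGroup E] [InnerProductSpace ℝ E]
    {ι : Type*} (S : Finset ι) (x : ι → E) (hS : S.Nonempty) (y : E) :
    ∑ i ∈ S, ‖x i - y‖ ^ 2
      = ∑ i ∈ S, ‖x i - (S.card : ℝ)⁻¹ • ∑ j ∈ S, x j‖ ^ 2
        + (S.card : ℝ) * ‖y - (S.card : ℝ)⁻¹ • ∑ j ∈ S, x j‖ ^ 2 := by
  set c : E := (S.card : ℝ)⁻¹ • ∑ j ∈ S, x j with hc
  have hcard : (S.card : ℝ) ≠ 0 := by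
    exact_mod_cast (Finset.card_pos.mpr hS).ne'
  have hzero : ∑ i ∈ S, (x i - c) = 0 := by
    rw [Finset.sum_sub_distrib, Finset.sum_const, hc,
      ← Nat.cast_smul_eq_nsmul ℝ, smul_smul, mul_inv_cancel₀ hcard, one_smul, sub_self]
  have hexp : ∀ i, ‖x i - y‖ ^ 2
      = ‖x i - c‖ ^ 2 + 2 * inner ℝ (x i - c) (c - y) + ‖c - y‖ ^ 2 := by
    intro i
    have : x i - y = (x i - c) + (c - y) := by abel
    rw [this, @norm_add_sq_real]
  rw [Finset.sum_congr rfl fun i _ => hexp i]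
  rw [Finset.sum_add_distrib, Finset.sum_add_distrib]
  have : ∑ i ∈ S, 2 * inner ℝ (x i - c) (c - y) = (0:ℝ) := by
    rw [← Finset.mul_sum, ← sum_inner, hzero, inner_zero_left, mul_zero]
  rw [this, Finset.sum_const, norm_sub_rev c y]
  push_cast
  ring

-- NN sum bound
lemma nn_sum_le {α : Type*} [DecidableEq α] (g : α → ℝ) (hg : ∀ i, 0 ≤ g i)
    (N T : Finset α) (hcard : T.card = N.card)
    (hNN : ∀ i ∈ N, ∀ j ∉ N, g i ≤ g j) :
    ∑ i ∈ N, g i ≤ ∑ i ∈ T, g i := by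
  have h1 : ∑ i ∈ N ∩ T, g i + ∑ i ∈ N \ T, g i = ∑ i ∈ N, g i :=
    Finset.sum_inter_add_sum_sdiff N T g
  have h2 : ∑ i ∈ T ∩ N, g i + ∑ i ∈ T \ N, g i = ∑ i ∈ T, g i :=
    Finset.sum_inter_add_sum_sdiff T N g
  have hic : N ∩ T = T ∩ N := Finset.inter_comm N T
  have hcd : (N \ T).card = (T \ N).card := by
    have a1 := Finset.card_inter_add_card_sdiff N T
    have a2 := Finset.card_inter_add_card_sdiff T N
    rw [hic] at a1
    omega
  have key : ∑ i ∈ N \ T, g i ≤ ∑ i ∈ T \ N, g i := by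
    rcases Finset.eq_empty_or_nonempty (N \ T) with he | hne
    · rw [he, Finset.sum_empty]
      exact Finset.sum_nonneg fun i _ => hg i
    · have hTN : (T \ N).Nonempty := by
        rw [← Finset.card_pos, ← hcd, Finset.card_pos]; exact hne
      obtain ⟨j0, hj0, hj0min⟩ := Finset.exists_min_image (T \ N) g hTN
      have hbd : ∀ i ∈ N \ T, g i ≤ g j0 := by
        intro i hi
        exact hNN i (Finset.mem_sdiff.mp hi).1 j0 (Finset.mem_sdiff.mp hj0).2
      calc ∑ i ∈ N \ T, g i ≤ (N \ T).card • g j0 :=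
            Finset.sum_le_card_nsmul _ _ _ hbd
        _ = (T \ N).card • g j0 := by rw [hcd]
        _ ≤ ∑ i ∈ T \ N, g i := Finset.card_nsmul_le_sum _ _ _ hj0min
  linarith [h1, h2, hic ▸ h1]

/-- `f̂`-Krum is `(f,κ)`-robust with `κ = 6(n-f)/(n-f-f̂)` for `0 ≤ f ≤ f̂ < n/2`. -/
theorem stmt_5 (n d f fhat : ℕ) (hn : 1 ≤ n) (hd : 1 ≤ d)
    (hf : f ≤ fhat) (hfn : 2 * fhat < n)
    (x : Fin n → EuclideanSpace ℝ (Fin d))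
    (N : Fin n → Finset (Fin n)) (hN : ∀ k, IsNN n d fhat x k (N k))
    (kstar : Fin n)
    (hks : ∀ k, ∑ i ∈ N kstar, ‖x i - x kstar‖ ^ 2 ≤ ∑ i ∈ N k, ‖x i - x k‖ ^ 2)
    (S : Finset (Fin n)) (hS : S.card = n - f) :
    ‖x kstar - (S.card : ℝ)⁻¹ • ∑ i ∈ S, x i‖ ^ 2
      ≤ (6 * ((n : ℝ) - f) / ((n : ℝ) - f - fhat)) *
          ((S.card : ℝ)⁻¹ * ∑ i ∈ S, ‖x i - (S.card : ℝ)⁻¹ • ∑ j ∈ S, x j‖ ^ 2) := by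
  have hScard : S.card = n - f := hS
  have hSpos : 0 < S.card := by omega
  have hSne : S.Nonempty := Finset.card_pos.mp hSpos
  set c : EuclideanSpace ℝ (Fin d) := (S.card : ℝ)⁻¹ • ∑ j ∈ S, x j with hc
  set V : ℝ := ∑ i ∈ S, ‖x i - c‖ ^ 2 with hV
  have hVnn : 0 ≤ V := Finset.sum_nonneg fun i _ => sq_nonneg _
  -- pick k0 ∈ S with small distance to mean
  have hex : ∃ k0 ∈ S, (S.card : ℝ) * ‖x k0 - c‖ ^ 2 ≤ V := by
    apply Finset.exists_le_of_sum_le hSne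
    have heq : ∑ i ∈ S, (S.card : ℝ) * ‖x i - c‖ ^ 2 = ∑ _i ∈ S, V := by
      rw [← Finset.mul_sum, Finset.sum_const, nsmul_eq_mul, hV]
    exact le_of_eq heq
  obtain ⟨k0, hk0S, hk0⟩ := hex
  -- score bound
  obtain ⟨T, hTS, hTcard⟩ := Finset.exists_subset_card_eq (s := S) (n := n - fhat) (by omega)
  have hscore : ∑ i ∈ N kstar, ‖x i - x kstar‖ ^ 2 ≤ 2 * V := by
    calc ∑ i ∈ N kstar, ‖x i - x kstar‖ ^ 2
        ≤ ∑ i ∈ N k0, ‖x i - x k0‖ ^ 2 := hks k0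
      _ ≤ ∑ i ∈ T, ‖x i - x k0‖ ^ 2 := by
          apply nn_sum_le _ (fun i => sq_nonneg _) _ _ (by rw [hTcard, (hN k0).1])
          intro i hi j hj
          exact pow_le_pow_left₀ (norm_nonneg _) ((hN k0).2 i hi j hj) 2
      _ ≤ ∑ i ∈ S, ‖x i - x k0‖ ^ 2 :=
          Finset.sum_le_sum_of_subset_of_nonneg hTS fun i _ _ => sq_nonneg _
      _ = V + (S.card : ℝ) * ‖x k0 - c‖ ^ 2 := bias_var S x hSne (x k0)
      _ ≤ 2 * V := by linarith
  -- the intersection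
  set M := N kstar ∩ S with hM
  have hMcard : n - f - fhat ≤ M.card := by
    show n - f - fhat ≤ (N kstar ∩ S).card
    have h1 := Finset.card_inter_add_card_union (N kstar) S
    have h2 : (N kstar ∪ S).card ≤ n := by
      simpa using Finset.card_le_card (Finset.subset_univ (N kstar ∪ S))
    have h3 := (hN kstar).1
    omega
  have hMN : M ⊆ N kstar := Finset.inter_subset_left
  have hMS : M ⊆ S := Finset.inter_subset_right
  have key : (M.card : ℝ) * ‖x kstar - c‖ ^ 2 ≤ 6 * V := by
    have step : ∀ i ∈ M, ‖x kstar - c‖ ^ 2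
        ≤ 2 * ‖x i - x kstar‖ ^ 2 + 2 * ‖x i - c‖ ^ 2 := by
      intro i _
      have htri : ‖x kstar - c‖ ≤ ‖x i - x kstar‖ + ‖x i - c‖ := by
        have : x kstar - c = -(x i - x kstar) + (x i - c) := by abel
        rw [this]
        exact le_trans (norm_add_le _ _) (by rw [norm_neg])
      nlinarith [norm_nonneg (x kstar - c), norm_nonneg (x i - x kstar),
        norm_nonneg (x i - c), sq_nonneg (‖x i - x kstar‖ - ‖x i - c‖)]
    calc (M.card : ℝ) * ‖x kstar - c‖ ^ 2
        = ∑ _i ∈ M, ‖x kstar - c‖ ^ 2 := by rw [Finset.sum_const, nsmul_eq_mul]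
      _ ≤ ∑ i ∈ M, (2 * ‖x i - x kstar‖ ^ 2 + 2 * ‖x i - c‖ ^ 2) :=
          Finset.sum_le_sum step
      _ = 2 * ∑ i ∈ M, ‖x i - x kstar‖ ^ 2 + 2 * ∑ i ∈ M, ‖x i - c‖ ^ 2 := by
          rw [Finset.sum_add_distrib, Finset.mul_sum, Finset.mul_sum]
      _ ≤ 2 * ∑ i ∈ N kstar, ‖x i - x kstar‖ ^ 2 + 2 * V := by
          have a1 := Finset.sum_le_sum_of_subset_of_nonneg hMN
            (fun i _ _ => sq_nonneg (‖x i - x kstar‖))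
          have a2 := Finset.sum_le_sum_of_subset_of_nonneg hMS
            (fun i _ _ => sq_nonneg (‖x i - c‖))
          rw [hV]; linarith
      _ ≤ 6 * V := by linarith
  -- final arithmetic
  have hp : 1 ≤ n - f - fhat := by omega
  have hcast1 : ((n : ℝ) - f - fhat) = ((n - f - fhat : ℕ) : ℝ) := by
    have h1 : f ≤ n := by omega
    have h2 : fhat ≤ n - f := by omega
    rw [Nat.cast_sub h2, Nat.cast_sub h1]
  have hPpos : (0:ℝ) < (n : ℝ) - f - fhat := by
    rw [hcast1]; exact_mod_cast hp
  have hApos : (0:ℝ) < (S.card : ℝ) := by exact_mod_cast hSpos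
  have hkey2 : ((n : ℝ) - f - fhat) * ‖x kstar - c‖ ^ 2 ≤ 6 * V := by
    refine le_trans ?_ key
    have : ((n : ℝ) - f - fhat) ≤ (M.card : ℝ) := by
      rw [hcast1]; exact_mod_cast hMcard
    nlinarith [sq_nonneg (‖x kstar - c‖)]
  have hAcast : (S.card : ℝ) = (n : ℝ) - f := by
    rw [hScard, Nat.cast_sub (by omega)]
  rw [hAcast, div_mul_eq_mul_div, le_div_iff₀ hPpos]
  have hAne : ((n:ℝ) - f) ≠ 0 := by rw [← hAcast]; exact hApos.ne'
  calc ‖x kstar - c‖ ^ 2 * ((n:ℝ) - f - fhat) ≤ 6 * V := by linarith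
    _ = 6 * ((n:ℝ) - f) * (((n:ℝ) - f)⁻¹ * V) := by field_simp
end

section
/- Let n, d ≥ 1, let f, f̂ be integers with 0 ≤ f ≤ f̂ < n/2, and let x₁,…,x_n ∈ ℝ^d. Fix k ∈ {1,…,n}, let N_k be a set of (n−f̂) nearest neighbors of x_k, and set y_k = (1/(n−f̂))∑_{i∈N_k} x_i. Then for every S ⊆ {1,…,n} with |S| = n − f, writing x̄_S = (1/|S|)∑_{i∈S} x_i, it holds that ‖y_k − x̄_S‖² ≤ (6f̂/((n−f)²))·∑_{i∈S}‖x_i − x_k‖². -/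
open Finset

lemma stmt8_aux (b c a g M Sa F : ℝ) (hb : 0 ≤ b) (hg : 0 ≤ g) (ha : 0 ≤ a) (hc : 1 ≤ c)
    (hbc : b + g = c) (hcF : c ≤ F) (hFM : F + 1 ≤ M) (hSaM : Sa = M + g)
    (hac : a + c = Sa) :
    (b * Sa + M * c) ^ 2 + g ^ 2 * c * a ≤ 6 * F * M ^ 2 * c := by
  have hb' : b = c - g := by linarith
  have ha' : a = M + g - c := by linarith
  have hcM : c ≤ M := by linarith
  have hM0 : (0:ℝ) ≤ M := by linarith
  subst hb' ha' hSaM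
  nlinarith [mul_nonneg (mul_nonneg (mul_nonneg hM0 hg) (by linarith : (0:ℝ) ≤ c)) (by linarith : (0:ℝ) ≤ M - g),
    mul_nonneg (mul_nonneg (mul_nonneg hM0 hM0) hg) (by linarith : (0:ℝ) ≤ c - g),
    mul_nonneg (mul_nonneg (mul_nonneg (by norm_num : (0:ℝ) ≤ 2) hM0) hg) (by nlinarith : (0:ℝ) ≤ 2*c*(M - (c-g)) + (c-g)*g),
    mul_nonneg (mul_nonneg hg (mul_nonneg hg hg)) (by linarith : (0:ℝ) ≤ c - g),
    mul_nonneg (mul_nonneg (mul_nonneg hM0 hM0) (by linarith : (0:ℝ) ≤ c)) (by linarith : (0:ℝ) ≤ c - g),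
    mul_nonneg (mul_nonneg (mul_nonneg hM0 hM0) (by linarith : (0:ℝ) ≤ c)) (by linarith : (0:ℝ) ≤ F - c)]

lemma stmt8_cs (p q G T : ℝ) : (p*G + q*T)^2 ≤ (p^2 + q^2)*(G^2 + T^2) := by
  nlinarith [sq_nonneg (p*T - q*G)]

lemma stmt8_expand (M Sa sc r1 r2 r3 : ℝ) (hM : M ≠ 0) (hSa : Sa ≠ 0) :
    M * Sa * sc * (M⁻¹*r1 + Sa⁻¹*r2 + (M⁻¹ - Sa⁻¹)*r3)
      = Sa * (sc*r1) + (M*sc)*r2 + ((Sa-M)*sc)*r3 := by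
  field_simp

set_option maxHeartbeats 2000000 in
/-- For `0 ≤ f ≤ f̂ < n/2`, the `f̂`-NNM mixed point `y_k = (1/(n-f̂)) ∑_{i∈N_k} x_i`
satisfies `‖y_k - x̄_S‖² ≤ (6f̂/(n-f)²) ∑_{i∈S} ‖x_i - x_k‖²` for every `S` with
`|S| = n - f`. -/
theorem stmt_8 (n d f fhat : ℕ) (hn : 1 ≤ n) (hd : 1 ≤ d)
    (hf : f ≤ fhat) (hfn : 2 * fhat < n)
    (x : Fin n → EuclideanSpace ℝ (Fin d)) (k : Fin n)
    (Nk : Finset (Fin n)) (hNk : IsNN n d fhat x k Nk)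
    (y : EuclideanSpace ℝ (Fin d)) (hy : y = ((n : ℝ) - fhat)⁻¹ • ∑ i ∈ Nk, x i)
    (S : Finset (Fin n)) (hS : S.card = n - f) :
    ‖y - (S.card : ℝ)⁻¹ • ∑ i ∈ S, x i‖ ^ 2
      ≤ (6 * (fhat : ℝ) / ((n : ℝ) - f) ^ 2) * ∑ i ∈ S, ‖x i - x k‖ ^ 2 := by
  classical
  obtain ⟨hNcard, hNN⟩ := hNk
  have hfn' : f ≤ n := by omega
  have hfhatn : fhat ≤ n := by omega
  set A : Finset (Fin n) := Nk \ S with hA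
  set B : Finset (Fin n) := S \ Nk with hB
  set C : Finset (Fin n) := S ∩ Nk with hC
  set M : ℝ := (n : ℝ) - fhat with hM
  set Sa : ℝ := (n : ℝ) - f with hSa
  -- positivity facts
  have h2n : ((2 * fhat + 1 : ℕ) : ℝ) ≤ n := Nat.cast_le.mpr hfn
  have hfR : ((f:ℝ)) ≤ fhat := Nat.cast_le.mpr hf
  have hF1M : (fhat : ℝ) + 1 ≤ M := by rw [hM]; push_cast at h2n; linarith
  have hMpos : (0:ℝ) < M := by have : (0:ℝ) ≤ fhat := Nat.cast_nonneg _; linarith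
  have hMSa : M ≤ Sa := by rw [hM, hSa]; linarith
  have hSapos : (0:ℝ) < Sa := lt_of_lt_of_le hMpos hMSa
  have hNcast : (Nk.card : ℝ) = M := by rw [hNcard, Nat.cast_sub hfhatn, hM]
  have hScast : (S.card : ℝ) = Sa := by rw [hS, Nat.cast_sub hfn', hSa]
  -- card identities
  have hCB : C.card + B.card = S.card := card_inter_add_card_sdiff S Nk
  have hCA : C.card + A.card = Nk.card := by
    have h := card_inter_add_card_sdiff Nk S
    rwa [inter_comm Nk S, ← hC, ← hA] at h
  have hUnion : (S ∪ Nk).card ≤ n := by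
    refine le_trans (card_le_univ _) ?_; simp
  have hUI : (S ∪ Nk).card + (S ∩ Nk).card = S.card + Nk.card :=
    card_union_add_card_inter S Nk
  have hABcard : A.card + (fhat - f) = B.card := by
    rw [← hC] at hUI; omega
  have hBf : B.card ≤ fhat := by rw [← hC] at hUI; omega
  -- subset facts
  have hCsubNk : C ⊆ Nk := by rw [hC]; exact inter_subset_right
  have hCsubS : C ⊆ S := by rw [hC]; exact inter_subset_left
  have hNkC : Nk \ C = A := by
    rw [hC, hA]; ext i; simp only [mem_sdiff, mem_inter]; tauto
  have hSCB : S \ C = B := by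
    rw [hC, hB]; ext i; simp only [mem_sdiff, mem_inter]; tauto
  -- the deviation vector decomposition
  have hsum_sub : ∀ (T : Finset (Fin n)),
      ∑ i ∈ T, (x i - x k) = (∑ i ∈ T, x i) - (T.card : ℝ) • x k := by
    intro T
    rw [Finset.sum_sub_distrib, Finset.sum_const, ← Nat.cast_smul_eq_nsmul ℝ]
  have hy' : y - (S.card : ℝ)⁻¹ • ∑ i ∈ S, x i
      = M⁻¹ • (∑ i ∈ A, (x i - x k)) - Sa⁻¹ • (∑ i ∈ B, (x i - x k))
        + (M⁻¹ - Sa⁻¹) • (∑ i ∈ C, (x i - x k)) := by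
    have hNsplit : ∑ i ∈ A, (x i - x k) + ∑ i ∈ C, (x i - x k)
        = ∑ i ∈ Nk, (x i - x k) := by
      rw [← hNkC]; exact Finset.sum_sdiff hCsubNk
    have hSsplit : ∑ i ∈ B, (x i - x k) + ∑ i ∈ C, (x i - x k)
        = ∑ i ∈ S, (x i - x k) := by
      rw [← hSCB]; exact Finset.sum_sdiff hCsubS
    have e1 : ∑ i ∈ Nk, x i
        = ∑ i ∈ A, (x i - x k) + ∑ i ∈ C, (x i - x k) + M • x k := by
      rw [hNsplit, hsum_sub, hNcast]; abel
    have e2 : ∑ i ∈ S, x i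
        = ∑ i ∈ B, (x i - x k) + ∑ i ∈ C, (x i - x k) + Sa • x k := by
      rw [hSsplit, hsum_sub, hScast]; abel
    rw [hy, hScast, e1, e2]
    have hMM : M⁻¹ * M = 1 := inv_mul_cancel₀ hMpos.ne'
    have hSS : Sa⁻¹ * Sa = 1 := inv_mul_cancel₀ hSapos.ne'
    match_scalars
    · field_simp
    · field_simp
    · field_simp; ring
    · field_simp
  -- norm bound from the decomposition
  have hinv_nonneg : (0:ℝ) ≤ M⁻¹ - Sa⁻¹ := sub_nonneg.mpr (inv_anti₀ hMpos hMSa)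
  have hnorm : ‖y - (S.card : ℝ)⁻¹ • ∑ i ∈ S, x i‖
      ≤ M⁻¹ * ‖∑ i ∈ A, (x i - x k)‖ + Sa⁻¹ * ‖∑ i ∈ B, (x i - x k)‖
        + (M⁻¹ - Sa⁻¹) * ‖∑ i ∈ C, (x i - x k)‖ := by
    rw [hy']
    refine (norm_add_le _ _).trans ?_
    have h1 := norm_sub_le (M⁻¹ • ∑ i ∈ A, (x i - x k)) (Sa⁻¹ • ∑ i ∈ B, (x i - x k))
    have e3 : ‖M⁻¹ • ∑ i ∈ A, (x i - x k)‖ = M⁻¹ * ‖∑ i ∈ A, (x i - x k)‖ := by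
      rw [norm_smul, Real.norm_eq_abs, abs_of_nonneg (by positivity)]
    have e4 : ‖Sa⁻¹ • ∑ i ∈ B, (x i - x k)‖ = Sa⁻¹ * ‖∑ i ∈ B, (x i - x k)‖ := by
      rw [norm_smul, Real.norm_eq_abs, abs_of_nonneg (by positivity)]
    have e5 : ‖(M⁻¹ - Sa⁻¹) • ∑ i ∈ C, (x i - x k)‖
        = (M⁻¹ - Sa⁻¹) * ‖∑ i ∈ C, (x i - x k)‖ := by
      rw [norm_smul, Real.norm_eq_abs, abs_of_nonneg hinv_nonneg]
    refine le_trans (add_le_add_left h1 _) ?_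
    rw [e3, e4, e5]
  -- Cauchy-Schwarz for sums of norms
  have hCSb : ∀ (T' : Finset (Fin n)), ‖∑ i ∈ T', (x i - x k)‖
      ≤ Real.sqrt (T'.card) * Real.sqrt (∑ i ∈ T', ‖x i - x k‖^2) := by
    intro T'
    refine (norm_sum_le _ _).trans ?_
    have h1 : (∑ i ∈ T', ‖x i - x k‖)^2 ≤ (T'.card : ℝ) * ∑ i ∈ T', ‖x i - x k‖^2 :=
      sq_sum_le_card_mul_sum_sq
    have h2 : (0:ℝ) ≤ ∑ i ∈ T', ‖x i - x k‖ := by positivity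
    calc ∑ i ∈ T', ‖x i - x k‖
        = Real.sqrt ((∑ i ∈ T', ‖x i - x k‖)^2) := (Real.sqrt_sq h2).symm
      _ ≤ Real.sqrt ((T'.card : ℝ) * ∑ i ∈ T', ‖x i - x k‖^2) := Real.sqrt_le_sqrt h1
      _ = Real.sqrt (T'.card) * Real.sqrt (∑ i ∈ T', ‖x i - x k‖^2) :=
          Real.sqrt_mul (Nat.cast_nonneg _) _
  -- case split on B = ∅
  by_cases hBemp : B = ∅
  · have hB0 : B.card = 0 := by rw [hBemp]; exact card_empty
    have hAemp : A = ∅ := card_eq_zero.mp (by omega)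
    have hffhat : fhat = f := by omega
    have hMSa' : M = Sa := by rw [hM, hSa, hffhat]
    rw [hy', hAemp, hBemp]
    simp only [Finset.sum_empty, smul_zero, sub_zero, zero_sub, hMSa', sub_self, zero_smul,
      add_zero, neg_zero, zero_add, norm_zero]
    have hpos : (0:ℝ) ≤ (6 * (fhat:ℝ) / Sa^2) * ∑ i ∈ S, ‖x i - x k‖^2 := by positivity
    nlinarith [hpos]
  · -- main case
    have hBne : B.Nonempty := Finset.nonempty_iff_ne_empty.mpr hBemp
    have hc1 : (1:ℝ) ≤ (B.card : ℝ) := Nat.one_le_cast.mpr hBne.card_pos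
    set G : ℝ := Real.sqrt (∑ i ∈ B, ‖x i - x k‖^2) with hG
    set T : ℝ := Real.sqrt (∑ i ∈ C, ‖x i - x k‖^2) with hT
    have hG0 : 0 ≤ G := Real.sqrt_nonneg _
    have hT0 : 0 ≤ T := Real.sqrt_nonneg _
    have hG2 : G^2 = ∑ i ∈ B, ‖x i - x k‖^2 := Real.sq_sqrt (by positivity)
    have hT2 : T^2 = ∑ i ∈ C, ‖x i - x k‖^2 := Real.sq_sqrt (by positivity)
    have hD : G^2 + T^2 = ∑ i ∈ S, ‖x i - x k‖^2 := by
      rw [hG2, hT2, ← hSCB]; exact Finset.sum_sdiff hCsubS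
    -- key nearest-neighbor bound
    have huA : Real.sqrt (B.card) * ‖∑ i ∈ A, (x i - x k)‖ ≤ (A.card : ℝ) * G := by
      have key : ∀ i ∈ A, Real.sqrt (B.card) * ‖x i - x k‖ ≤ G := by
        intro i hi
        have hiN : i ∈ Nk := (mem_sdiff.mp (by rwa [hA] at hi)).1
        have hsum : (B.card : ℝ) * ‖x i - x k‖^2 ≤ ∑ j ∈ B, ‖x j - x k‖^2 := by
          have h := Finset.card_nsmul_le_sum B (fun j => ‖x j - x k‖^2) (‖x i - x k‖^2) ?_
          · rwa [nsmul_eq_mul] at h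
          · intro j hj
            have hjN : j ∉ Nk := (mem_sdiff.mp (by rwa [hB] at hj)).2
            exact pow_le_pow_left₀ (norm_nonneg _) (hNN i hiN j hjN) 2
        calc Real.sqrt (B.card) * ‖x i - x k‖
            = Real.sqrt ((B.card : ℝ) * ‖x i - x k‖^2) := by
              rw [Real.sqrt_mul (Nat.cast_nonneg _), Real.sqrt_sq (norm_nonneg _)]
          _ ≤ G := Real.sqrt_le_sqrt hsum
      calc Real.sqrt (B.card) * ‖∑ i ∈ A, (x i - x k)‖
          ≤ Real.sqrt (B.card) * ∑ i ∈ A, ‖x i - x k‖ :=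
            mul_le_mul_of_nonneg_left (norm_sum_le _ _) (Real.sqrt_nonneg _)
        _ = ∑ i ∈ A, Real.sqrt (B.card) * ‖x i - x k‖ := Finset.mul_sum _ _ _
        _ ≤ ∑ i ∈ A, G := Finset.sum_le_sum key
        _ = (A.card : ℝ) * G := by rw [Finset.sum_const, nsmul_eq_mul]
    have hvB : ‖∑ i ∈ B, (x i - x k)‖ ≤ Real.sqrt (B.card) * G := hCSb B
    have htC : ‖∑ i ∈ C, (x i - x k)‖ ≤ Real.sqrt (C.card) * T := hCSb C
    have hsc2 : Real.sqrt (B.card) * Real.sqrt (B.card) = (B.card : ℝ) :=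
      Real.mul_self_sqrt (Nat.cast_nonneg _)
    have hSaM0 : (0:ℝ) ≤ Sa - M := sub_nonneg.mpr hMSa
    -- step 1 : multiplied-out norm bound
    have step1 : M * Sa * Real.sqrt (B.card) * ‖y - (S.card : ℝ)⁻¹ • ∑ i ∈ S, x i‖
        ≤ ((A.card:ℝ) * Sa + M * (B.card:ℝ)) * G
          + (Sa - M) * Real.sqrt (B.card) * (Real.sqrt (C.card) * T) := by
      calc M * Sa * Real.sqrt (B.card) * ‖y - (S.card : ℝ)⁻¹ • ∑ i ∈ S, x i‖
          ≤ M * Sa * Real.sqrt (B.card) *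
            (M⁻¹ * ‖∑ i ∈ A, (x i - x k)‖ + Sa⁻¹ * ‖∑ i ∈ B, (x i - x k)‖
              + (M⁻¹ - Sa⁻¹) * ‖∑ i ∈ C, (x i - x k)‖) := by
            exact mul_le_mul_of_nonneg_left hnorm (by positivity)
        _ = Sa * (Real.sqrt (B.card) * ‖∑ i ∈ A, (x i - x k)‖)
            + (M * Real.sqrt (B.card)) * ‖∑ i ∈ B, (x i - x k)‖
            + ((Sa - M) * Real.sqrt (B.card)) * ‖∑ i ∈ C, (x i - x k)‖ :=
            stmt8_expand M Sa (Real.sqrt (B.card)) _ _ _ hMpos.ne' hSapos.ne'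
        _ ≤ Sa * ((A.card:ℝ) * G)
            + (M * Real.sqrt (B.card)) * (Real.sqrt (B.card) * G)
            + ((Sa - M) * Real.sqrt (B.card)) * (Real.sqrt (C.card) * T) := by
            refine add_le_add (add_le_add ?_ ?_) ?_
            · exact mul_le_mul_of_nonneg_left huA (le_of_lt hSapos)
            · exact mul_le_mul_of_nonneg_left hvB (by positivity)
            · exact mul_le_mul_of_nonneg_left htC (by positivity)
        _ = ((A.card:ℝ) * Sa + M * (B.card:ℝ)) * G
            + (Sa - M) * Real.sqrt (B.card) * (Real.sqrt (C.card) * T) := by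
            linear_combination (M * G) * hsc2
    -- scalar coefficient inequality
    have hbcR : (A.card : ℝ) + (Sa - M) = (B.card : ℝ) := by
      have h := congrArg (Nat.cast : ℕ → ℝ) hABcard
      push_cast [Nat.cast_sub hf] at h
      rw [hM, hSa]; linarith
    have haR : (C.card : ℝ) + (B.card : ℝ) = Sa := by
      have h := congrArg (Nat.cast : ℕ → ℝ) hCB
      push_cast at h
      linarith [hScast]
    have hccF : (B.card : ℝ) ≤ (fhat : ℝ) := Nat.cast_le.mpr hBf
    have scalar := stmt8_aux (A.card) (B.card) (C.card) (Sa - M) M Sa fhat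
      (Nat.cast_nonneg _) hSaM0 (Nat.cast_nonneg _) hc1 hbcR hccF hF1M (by ring) haR
    -- squaring and Cauchy-Schwarz in two terms
    have hLnn : (0:ℝ) ≤ M * Sa * Real.sqrt (B.card) * ‖y - (S.card : ℝ)⁻¹ • ∑ i ∈ S, x i‖ := by
      positivity
    have sq1 := pow_le_pow_left₀ hLnn step1 2
    have hq : ((Sa - M) * Real.sqrt (B.card) * Real.sqrt (C.card))^2
        = (Sa - M)^2 * (B.card : ℝ) * (C.card : ℝ) := by
      rw [mul_pow, mul_pow, Real.sq_sqrt (Nat.cast_nonneg _), Real.sq_sqrt (Nat.cast_nonneg _)]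
    have CS2 : (((A.card:ℝ) * Sa + M * (B.card:ℝ)) * G
          + (Sa - M) * Real.sqrt (B.card) * (Real.sqrt (C.card) * T))^2
        ≤ (((A.card:ℝ) * Sa + M * (B.card:ℝ))^2 + (Sa - M)^2 * (B.card:ℝ) * (C.card:ℝ))
          * (G^2 + T^2) := by
      have h := stmt8_cs ((A.card:ℝ) * Sa + M * (B.card:ℝ))
        ((Sa - M) * Real.sqrt (B.card) * Real.sqrt (C.card)) G T
      calc (((A.card:ℝ) * Sa + M * (B.card:ℝ)) * G
          + (Sa - M) * Real.sqrt (B.card) * (Real.sqrt (C.card) * T))^2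
          = (((A.card:ℝ) * Sa + M * (B.card:ℝ)) * G
            + ((Sa - M) * Real.sqrt (B.card) * Real.sqrt (C.card)) * T)^2 := by ring
        _ ≤ (((A.card:ℝ) * Sa + M * (B.card:ℝ))^2
            + ((Sa - M) * Real.sqrt (B.card) * Real.sqrt (C.card))^2) * (G^2 + T^2) := h
        _ = (((A.card:ℝ) * Sa + M * (B.card:ℝ))^2
            + (Sa - M)^2 * (B.card:ℝ) * (C.card:ℝ)) * (G^2 + T^2) := by rw [hq]
    -- conclude
    rw [← hD, div_mul_eq_mul_div, le_div_iff₀ (by positivity : (0:ℝ) < Sa^2)]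
    have hpos2 : (0:ℝ) < M^2 * (B.card:ℝ) := by positivity
    refine le_of_mul_le_mul_right ?_ hpos2
    have hsq : (M * Sa * Real.sqrt (B.card))^2 = M^2 * Sa^2 * (B.card:ℝ) := by
      rw [mul_pow, mul_pow, Real.sq_sqrt (Nat.cast_nonneg _)]
    calc ‖y - (S.card : ℝ)⁻¹ • ∑ i ∈ S, x i‖^2 * Sa^2 * (M^2 * (B.card:ℝ))
        = (M * Sa * Real.sqrt (B.card))^2 * ‖y - (S.card : ℝ)⁻¹ • ∑ i ∈ S, x i‖^2 := by
          rw [hsq]; ring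
      _ ≤ (((A.card:ℝ) * Sa + M * (B.card:ℝ)) * G
            + (Sa - M) * Real.sqrt (B.card) * (Real.sqrt (C.card) * T))^2 := by
          calc (M * Sa * Real.sqrt (B.card))^2 * ‖y - (S.card : ℝ)⁻¹ • ∑ i ∈ S, x i‖^2
              = (M * Sa * Real.sqrt (B.card) * ‖y - (S.card : ℝ)⁻¹ • ∑ i ∈ S, x i‖)^2 := by
                ring
            _ ≤ _ := sq1
      _ ≤ (((A.card:ℝ) * Sa + M * (B.card:ℝ))^2 + (Sa - M)^2 * (B.card:ℝ) * (C.card:ℝ))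
            * (G^2 + T^2) := CS2
      _ ≤ (6 * (fhat:ℝ) * M^2 * (B.card:ℝ)) * (G^2 + T^2) := by
          exact mul_le_mul_of_nonneg_right scalar (by positivity)
      _ = 6 * (fhat:ℝ) * (G^2 + T^2) * (M^2 * (B.card:ℝ)) := by ring
end

section
/- Let n, d ≥ 1, let f, f̂ be integers with 0 ≤ f ≤ f̂ < n/2, and let x₁,…,x_n ∈ ℝ^d. For each k ∈ {1,…,n} let N_k be a set of (n−f̂) nearest neighbors of x_k and set y_k = (1/(n−f̂))∑_{i∈N_k} x_i. Then for every S ⊆ {1,…,n} with |S| = n − f, writing x̄_S = (1/|S|)∑_{i∈S} x_i and ȳ_S = (1/|S|)∑_{k∈S} y_k, it holds that ‖ȳ_S − x̄_S‖² + (1/|S|)∑_{k∈S}‖y_k − ȳ_S‖² ≤ (12f̂/(n−f))·(1/|S|)∑_{i∈S}‖x_i − x̄_S‖². -/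
open Finset

lemma keypoly (f fh n : ℝ) (hf0 : 0 ≤ f) (hff : f ≤ fh) (hn : 2*fh ≤ n) :
    (4*f*(n-f) + (389/70)*f^2 + (691/221)*fh*((n-f) - fh/2)) * (n-f)
      ≤ 12*fh*(n-fh)^2 := by
  have h1 : 0 ≤ fh - f := by linarith
  have h2 : 0 ≤ n - 2*fh := by linarith
  nlinarith [mul_nonneg hf0 (sq_nonneg (2*f - fh)),
    mul_nonneg (mul_nonneg h1 h1) h1, mul_nonneg (mul_nonneg h1 h1) h2,
    mul_nonneg (mul_nonneg h1 h2) h2, mul_nonneg (mul_nonneg hf0 h2) h2,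
    mul_nonneg (mul_nonneg hf0 h1) h2, mul_nonneg (mul_nonneg hf0 hf0) h2,
    mul_nonneg (mul_nonneg hf0 h1) h1, mul_nonneg (mul_nonneg hf0 hf0) hf0]

lemma key (f fh n P Q : ℝ) (hf0 : 0 ≤ f) (hff : f ≤ fh) (hn : 2*fh ≤ n)
    (hP : 0 ≤ P) (hP2 : P^2 = 2*f*(n-f)) (hQ : 0 ≤ Q)
    (hQ2 : Q^2 = fh*((n-f) - fh/2)) :
    (P + f + Q)^2 * (n-f) ≤ 12*fh*(n-fh)^2 := by
  have h1 : (P + f + Q)^2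
      ≤ 4*f*(n-f) + (389/70)*f^2 + (691/221)*fh*((n-f) - fh/2) := by
    nlinarith [sq_nonneg ((7/20)*P - f), sq_nonneg ((13/20)*P - Q),
      sq_nonneg ((17/10)*f - Q)]
  have hs : (0:ℝ) ≤ n - f := by linarith
  calc (P + f + Q)^2 * (n-f)
      ≤ (4*f*(n-f) + (389/70)*f^2 + (691/221)*fh*((n-f) - fh/2)) * (n-f) :=
        mul_le_mul_of_nonneg_right h1 hs
    _ ≤ 12*fh*(n-fh)^2 := keypoly f fh n hf0 hff hn

lemma mink2 {ι : Type*} (s : Finset ι) (p q : ι → ℝ) :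
    ∑ i ∈ s, (p i + q i)^2
      ≤ (Real.sqrt (∑ i ∈ s, p i^2) + Real.sqrt (∑ i ∈ s, q i^2))^2 := by
  have hp : 0 ≤ ∑ i ∈ s, p i^2 := sum_nonneg fun i _ => sq_nonneg _
  have hq : 0 ≤ ∑ i ∈ s, q i^2 := sum_nonneg fun i _ => sq_nonneg _
  have hcs : (∑ i ∈ s, p i * q i)^2 ≤ (∑ i ∈ s, p i^2) * (∑ i ∈ s, q i^2) :=
    Finset.sum_mul_sq_le_sq_mul_sq s p q
  have h2 : ∑ i ∈ s, p i * q i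
      ≤ Real.sqrt (∑ i ∈ s, p i^2) * Real.sqrt (∑ i ∈ s, q i^2) := by
    calc ∑ i ∈ s, p i * q i ≤ |∑ i ∈ s, p i * q i| := le_abs_self _
      _ = Real.sqrt ((∑ i ∈ s, p i * q i)^2) := (Real.sqrt_sq_eq_abs _).symm
      _ ≤ Real.sqrt ((∑ i ∈ s, p i^2) * (∑ i ∈ s, q i^2)) := Real.sqrt_le_sqrt hcs
      _ = _ := Real.sqrt_mul hp _
  have hexp : ∑ i ∈ s, (p i + q i)^2
      = (∑ i ∈ s, p i^2) + 2 * (∑ i ∈ s, p i * q i) + (∑ i ∈ s, q i^2) := by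
    rw [sum_congr rfl (fun i _ => by ring :
      ∀ i ∈ s, (p i + q i)^2 = p i^2 + 2*(p i * q i) + q i^2)]
    rw [sum_add_distrib, sum_add_distrib, ← mul_sum]
  rw [hexp, add_sq, Real.sq_sqrt hp, Real.sq_sqrt hq]
  linarith

lemma mink3 {ι : Type*} (s : Finset ι) (p q r : ι → ℝ) :
    ∑ i ∈ s, (p i + q i + r i)^2
      ≤ (Real.sqrt (∑ i ∈ s, p i^2) + Real.sqrt (∑ i ∈ s, q i^2)
          + Real.sqrt (∑ i ∈ s, r i^2))^2 := by
  have h1 := mink2 s (fun i => p i + q i) r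
  have h2 := mink2 s p q
  have hnn : 0 ≤ Real.sqrt (∑ i ∈ s, p i^2) + Real.sqrt (∑ i ∈ s, q i^2) :=
    add_nonneg (Real.sqrt_nonneg _) (Real.sqrt_nonneg _)
  have h3 : Real.sqrt (∑ i ∈ s, (p i + q i)^2)
      ≤ Real.sqrt (∑ i ∈ s, p i^2) + Real.sqrt (∑ i ∈ s, q i^2) := by
    calc Real.sqrt (∑ i ∈ s, (p i + q i)^2)
        ≤ Real.sqrt ((Real.sqrt (∑ i ∈ s, p i^2) + Real.sqrt (∑ i ∈ s, q i^2))^2) :=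
          Real.sqrt_le_sqrt h2
      _ = _ := Real.sqrt_sq hnn
  calc ∑ i ∈ s, (p i + q i + r i)^2
      ≤ (Real.sqrt (∑ i ∈ s, (p i + q i)^2) + Real.sqrt (∑ i ∈ s, r i^2))^2 := h1
    _ ≤ (Real.sqrt (∑ i ∈ s, p i^2) + Real.sqrt (∑ i ∈ s, q i^2)
          + Real.sqrt (∑ i ∈ s, r i^2))^2 := by
        apply pow_le_pow_left₀ (add_nonneg (Real.sqrt_nonneg _) (Real.sqrt_nonneg _))
        linarith

section bv
variable {E : Type*} [NormedAddCommGroup E] [InnerProductSpace ℝ E]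

lemma bias_var_s8 {ι : Type*} (s : Finset ι) (z : ι → E) (w zb : E)
    (hzb : ∑ k ∈ s, (z k - zb) = 0) :
    ∑ k ∈ s, ‖z k - w‖^2
      = ∑ k ∈ s, ‖z k - zb‖^2 + (s.card : ℝ) * ‖zb - w‖^2 := by
  have h1 : ∀ k ∈ s, ‖z k - w‖^2
      = ‖z k - zb‖^2 + 2 * (inner ℝ (z k - zb) (zb - w) : ℝ) + ‖zb - w‖^2 := by
    intro k _
    rw [← norm_add_sq_real]
    congr 1
    abel
  rw [sum_congr rfl h1, sum_add_distrib, sum_add_distrib, ← mul_sum, ← sum_inner,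
    hzb, inner_zero_left, sum_const, nsmul_eq_mul]
  ring

end bv


set_option maxHeartbeats 1000000 in
/-- For `0 ≤ f ≤ f̂ < n/2` and the `f̂`-NNM points `y_k = (1/(n-f̂)) ∑_{i∈N_k} x_i`:
for every `S` with `|S| = n - f`,
`‖ȳ_S - x̄_S‖² + (1/|S|) ∑_{k∈S} ‖y_k - ȳ_S‖² ≤ (12f̂/(n-f)) (1/|S|) ∑_{i∈S} ‖x_i - x̄_S‖²`. -/
theorem stmt_9 (n d f fhat : ℕ) (hn : 1 ≤ n) (hd : 1 ≤ d)
    (hf : f ≤ fhat) (hfn : 2 * fhat < n)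
    (x : Fin n → EuclideanSpace ℝ (Fin d))
    (N : Fin n → Finset (Fin n)) (hN : ∀ k, IsNN n d fhat x k (N k))
    (y : Fin n → EuclideanSpace ℝ (Fin d))
    (hy : ∀ k, y k = ((n : ℝ) - fhat)⁻¹ • ∑ i ∈ N k, x i)
    (S : Finset (Fin n)) (hS : S.card = n - f) :
    ‖(S.card : ℝ)⁻¹ • ∑ k ∈ S, y k - (S.card : ℝ)⁻¹ • ∑ i ∈ S, x i‖ ^ 2
      + (S.card : ℝ)⁻¹ * ∑ k ∈ S, ‖y k - (S.card : ℝ)⁻¹ • ∑ j ∈ S, y j‖ ^ 2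
      ≤ (12 * (fhat : ℝ) / ((n : ℝ) - f)) *
          ((S.card : ℝ)⁻¹ * ∑ i ∈ S, ‖x i - (S.card : ℝ)⁻¹ • ∑ j ∈ S, x j‖ ^ 2) := by
  -- basic facts
  have hfhn : fhat < n := by omega
  have hfln : f < n := by omega
  have hcard : S.card = n - f := hS
  have hcast : (S.card : ℝ) = (n : ℝ) - f := by
    rw [hS, Nat.cast_sub hfln.le]
  have hcpos : (0 : ℝ) < (S.card : ℝ) := by
    rw [hcast]
    have : (f : ℝ) < n := by exact_mod_cast hfln
    linarith
  set c : ℝ := (S.card : ℝ) with hc_def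
  set xbar : EuclideanSpace ℝ (Fin d) := c⁻¹ • ∑ i ∈ S, x i with hxbar
  set ybar : EuclideanSpace ℝ (Fin d) := c⁻¹ • ∑ k ∈ S, y k with hybar
  set u : Fin n → EuclideanSpace ℝ (Fin d) := fun i => x i - xbar with hu
  set V : ℝ := ∑ j ∈ S, ‖u j‖^2 with hV
  have hV0 : 0 ≤ V := sum_nonneg fun i _ => sq_nonneg _
  have hcsmul : ∀ z : Fin n → EuclideanSpace ℝ (Fin d),
      ∑ k ∈ S, (z k - c⁻¹ • ∑ j ∈ S, z j) = 0 := by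
    intro z
    rw [sum_sub_distrib, sum_const, ← Nat.cast_smul_eq_nsmul ℝ, smul_smul,
      mul_inv_cancel₀ (ne_of_gt hcpos), one_smul, sub_self]
  have hsumu : ∑ i ∈ S, u i = 0 := hcsmul x
  have hsumy : ∑ k ∈ S, (y k - ybar) = 0 := hcsmul y
  set m : ℝ := (n : ℝ) - fhat with hm_def
  have hmpos : (0 : ℝ) < m := by
    have : (fhat : ℝ) < n := by exact_mod_cast hfhn
    simp only [hm_def]; linarith
  have hNcard : ∀ k, ((N k).card : ℝ) = m := by
    intro k
    rw [(hN k).1, Nat.cast_sub hfhn.le]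
  -- the two exceptional sets
  set T : Fin n → Finset (Fin n) := fun k => S \ N k with hT
  set B : Fin n → Finset (Fin n) := fun k => N k \ S with hB
  have htle : ∀ k, (T k).card ≤ fhat := by
    intro k
    have h1 : T k ⊆ (N k)ᶜ := by
      intro i hi
      simp only [hT, mem_sdiff] at hi
      simp [mem_compl, hi.2]
    calc (T k).card ≤ ((N k)ᶜ).card := card_le_card h1
      _ = n - (N k).card := by rw [card_compl, Fintype.card_fin]
      _ = n - (n - fhat) := by rw [(hN k).1]
      _ ≤ fhat := by omega
  have hble : ∀ k, (B k).card ≤ f := by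
    intro k
    have h1 : B k ⊆ Sᶜ := by
      intro i hi
      simp only [hB, mem_sdiff] at hi
      simp [mem_compl, hi.2]
    calc (B k).card ≤ (Sᶜ).card := card_le_card h1
      _ = n - S.card := by rw [card_compl, Fintype.card_fin]
      _ = n - (n - f) := by rw [hS]
      _ ≤ f := by omega
  have hbt : ∀ k, (B k).card ≤ (T k).card := by
    intro k
    have h1 : (B k).card + (N k ∩ S).card = (N k).card := card_sdiff_add_card_inter _ _
    have h2 : (T k).card + (S ∩ N k).card = S.card := card_sdiff_add_card_inter _ _
    have h3 : (S ∩ N k).card = (N k ∩ S).card := by rw [inter_comm]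
    have h4 : (N k).card ≤ S.card := by rw [(hN k).1, hS]; omega
    omega
  -- decomposition of m • (y k - xbar)
  have hdecomp : ∀ k ∈ S, m • (y k - xbar)
      = (∑ i ∈ B k, (x i - x k)) + ((B k).card : ℝ) • u k - ∑ j ∈ T k, u j := by
    intro k hk
    have h1 : m • (y k - xbar) = ∑ i ∈ N k, u i := by
      rw [smul_sub, hy k, smul_smul, mul_inv_cancel₀ (ne_of_gt hmpos), one_smul]
      rw [← hNcard k, Nat.cast_smul_eq_nsmul, ← sum_const, ← sum_sub_distrib]
    have h2 : ∑ i ∈ N k, u i = (∑ i ∈ N k ∩ S, u i) + ∑ i ∈ B k, u i :=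
      (sum_inter_add_sum_sdiff _ _ _).symm
    have h3 : (∑ i ∈ S ∩ N k, u i) + ∑ j ∈ T k, u j = 0 := by
      rw [sum_inter_add_sum_sdiff, hsumu]
    have h4 : ∑ i ∈ N k ∩ S, u i = - ∑ j ∈ T k, u j := by
      rw [inter_comm]
      linear_combination (norm := abel) h3
    have h5 : ∑ i ∈ B k, u i = (∑ i ∈ B k, (x i - x k)) + ((B k).card : ℝ) • u k := by
      have : ∀ i ∈ B k, u i = (x i - x k) + u k := by
        intro i _
        simp only [hu]
        abel
      rw [sum_congr rfl this, sum_add_distrib, sum_const, Nat.cast_smul_eq_nsmul]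
    rw [h1, h2, h4, h5]
    abel
  -- scalar quantities
  set a : Fin n → ℝ := fun k => ∑ i ∈ B k, ‖x i - x k‖ with ha_def
  set e : Fin n → ℝ := fun k => ‖∑ j ∈ T k, u j‖ with he_def
  set Dk : Fin n → ℝ := fun k => ∑ j ∈ T k, ‖x j - x k‖^2 with hDk_def
  set Uk : Fin n → ℝ := fun k => ∑ j ∈ T k, ‖u j‖^2 with hUk_def
  have hDk0 : ∀ k, 0 ≤ Dk k := fun k => sum_nonneg fun i _ => sq_nonneg _
  have hUk0 : ∀ k, 0 ≤ Uk k := fun k => sum_nonneg fun i _ => sq_nonneg _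
  have ha0 : ∀ k, 0 ≤ a k := fun k => sum_nonneg fun i _ => norm_nonneg _
  have he0 : ∀ k, 0 ≤ e k := fun k => norm_nonneg _
  -- per-k norm bound
  have hnorm : ∀ k ∈ S, m * ‖y k - xbar‖ ≤ a k + (f : ℝ) * ‖u k‖ + e k := by
    intro k hk
    have h1 : m * ‖y k - xbar‖ = ‖m • (y k - xbar)‖ := by
      rw [norm_smul, Real.norm_eq_abs, abs_of_pos hmpos]
    rw [h1, hdecomp k hk]
    calc ‖(∑ i ∈ B k, (x i - x k)) + ((B k).card : ℝ) • u k - ∑ j ∈ T k, u j‖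
        ≤ ‖(∑ i ∈ B k, (x i - x k)) + ((B k).card : ℝ) • u k‖ + ‖∑ j ∈ T k, u j‖ :=
          norm_sub_le _ _
      _ ≤ ‖∑ i ∈ B k, (x i - x k)‖ + ‖((B k).card : ℝ) • u k‖ + ‖∑ j ∈ T k, u j‖ := by
          have := norm_add_le (∑ i ∈ B k, (x i - x k)) (((B k).card : ℝ) • u k)
          linarith
      _ ≤ a k + (f : ℝ) * ‖u k‖ + e k := by
          have h2 : ‖∑ i ∈ B k, (x i - x k)‖ ≤ a k := norm_sum_le _ _
          have h3 : ‖((B k).card : ℝ) • u k‖ ≤ (f : ℝ) * ‖u k‖ := by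
            rw [norm_smul, Real.norm_eq_abs, abs_of_nonneg (Nat.cast_nonneg _)]
            have : ((B k).card : ℝ) ≤ f := by exact_mod_cast hble k
            exact mul_le_mul_of_nonneg_right this (norm_nonneg _) |>.trans_eq rfl
          simp only [he_def]
          linarith
  -- bound on a k
  have ha2 : ∀ k ∈ S, a k ^ 2 ≤ (f : ℝ) * Dk k := by
    intro k hk
    rcases Nat.eq_zero_or_pos (T k).card with ht0 | htpos
    · have hb0 : (B k).card = 0 := by have := hbt k; omega
      have : B k = ∅ := card_eq_zero.mp hb0
      have ha' : a k = 0 := by simp [ha_def, this]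
      rw [ha']
      have h0 : ((0:ℝ))^2 = 0 := by norm_num
      rw [h0]
      exact mul_nonneg (Nat.cast_nonneg f) (hDk0 k)
    · -- double counting : (T k).card * a k ≤ (B k).card * ∑_{T k} dist
      have hcompare : ((T k).card : ℝ) * a k
          ≤ ((B k).card : ℝ) * ∑ j ∈ T k, ‖x j - x k‖ := by
        have h1 : ∀ i ∈ B k, ∀ j ∈ T k, ‖x i - x k‖ ≤ ‖x j - x k‖ := by
          intro i hi j hj
          simp only [hB, mem_sdiff] at hi
          simp only [hT, mem_sdiff] at hj
          exact (hN k).2 i hi.1 j hj.2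
        calc ((T k).card : ℝ) * a k = ∑ j ∈ T k, a k := by rw [sum_const, nsmul_eq_mul]
          _ ≤ ∑ j ∈ T k, ∑ i ∈ B k, ‖x j - x k‖ := by
              apply sum_le_sum
              intro j hj
              apply sum_le_sum
              intro i hi
              exact h1 i hi j hj
          _ = ((B k).card : ℝ) * ∑ j ∈ T k, ‖x j - x k‖ := by
              simp [sum_const, nsmul_eq_mul, mul_sum]
      -- Cauchy-Schwarz on T k
      have hcs : (∑ j ∈ T k, ‖x j - x k‖)^2 ≤ ((T k).card : ℝ) * Dk k := by
        simpa using sq_sum_le_card_mul_sum_sq (s := T k) (f := fun j => ‖x j - x k‖)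
      have htposR : (0:ℝ) < ((T k).card : ℝ) := by exact_mod_cast htpos
      have hbR : ((B k).card : ℝ) ≤ ((T k).card : ℝ) := by exact_mod_cast hbt k
      have hfR : ((B k).card : ℝ) ≤ (f : ℝ) := by exact_mod_cast hble k
      have hb0R : (0:ℝ) ≤ ((B k).card : ℝ) := Nat.cast_nonneg _
      have hsum0 : (0:ℝ) ≤ ∑ j ∈ T k, ‖x j - x k‖ :=
        sum_nonneg fun j _ => norm_nonneg _
      -- square the comparison
      have hsq : (((T k).card : ℝ) * a k)^2 ≤ (((B k).card : ℝ))^2 * (((T k).card : ℝ) * Dk k) := by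
        calc (((T k).card : ℝ) * a k)^2
            ≤ (((B k).card : ℝ) * ∑ j ∈ T k, ‖x j - x k‖)^2 := by
              apply sq_le_sq'
              · nlinarith [mul_nonneg (le_of_lt htposR) (ha0 k)]
              · exact hcompare
          _ = (((B k).card : ℝ))^2 * (∑ j ∈ T k, ‖x j - x k‖)^2 := by ring
          _ ≤ (((B k).card : ℝ))^2 * (((T k).card : ℝ) * Dk k) :=
              mul_le_mul_of_nonneg_left hcs (sq_nonneg _)
      have hb2 : (((B k).card : ℝ))^2 ≤ ((T k).card : ℝ) * (f : ℝ) := by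
        have := mul_le_mul hbR hfR hb0R (le_of_lt htposR)
        nlinarith
      have hstep : (((T k).card : ℝ))^2 * (a k)^2 ≤ (((T k).card : ℝ))^2 * ((f:ℝ) * Dk k) := by
        calc (((T k).card : ℝ))^2 * (a k)^2 = (((T k).card : ℝ) * a k)^2 := by ring
          _ ≤ (((B k).card : ℝ))^2 * (((T k).card : ℝ) * Dk k) := hsq
          _ ≤ (((T k).card : ℝ) * (f : ℝ)) * (((T k).card : ℝ) * Dk k) :=
              mul_le_mul_of_nonneg_right hb2 (mul_nonneg (le_of_lt htposR) (hDk0 k))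
          _ = (((T k).card : ℝ))^2 * ((f:ℝ) * Dk k) := by ring
      exact le_of_mul_le_mul_left hstep (pow_pos htposR 2)
  -- casts
  have hfR0 : (0:ℝ) ≤ (f:ℝ) := Nat.cast_nonneg _
  have hfhR0 : (0:ℝ) ≤ (fhat:ℝ) := Nat.cast_nonneg _
  have hffR : (f:ℝ) ≤ (fhat:ℝ) := by exact_mod_cast hf
  have h2fn : 2*(fhat:ℝ) ≤ (n:ℝ) := by
    have : (2*fhat:ℕ) ≤ n := hfn.le
    exact_mod_cast this
  have hfh_le_c : (fhat:ℝ) ≤ c := by rw [hcast]; linarith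
  -- bound on e k, combined form
  have he2 : ∀ k ∈ S, e k ^ 2 * (c + fhat) ≤ (fhat:ℝ) * c * V := by
    intro k hk
    have htR : ((T k).card : ℝ) ≤ (fhat:ℝ) := by exact_mod_cast htle k
    have he1 : e k ^ 2 ≤ (fhat:ℝ) * Uk k := by
      have h1 : e k ≤ ∑ j ∈ T k, ‖u j‖ := norm_sum_le _ _
      have h2 : (∑ j ∈ T k, ‖u j‖)^2 ≤ ((T k).card : ℝ) * Uk k := by
        simpa using sq_sum_le_card_mul_sum_sq (s := T k) (f := fun j => ‖u j‖)
      have h3 : e k ^2 ≤ (∑ j ∈ T k, ‖u j‖)^2 :=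
        pow_le_pow_left₀ (he0 k) h1 2
      calc e k ^2 ≤ ((T k).card : ℝ) * Uk k := h3.trans h2
        _ ≤ (fhat:ℝ) * Uk k := mul_le_mul_of_nonneg_right htR (hUk0 k)
    have he2' : e k ^ 2 ≤ c * (V - Uk k) := by
      have h3 : (∑ i ∈ S ∩ N k, u i) + ∑ j ∈ T k, u j = 0 := by
        rw [sum_inter_add_sum_sdiff, hsumu]
      have h4 : e k = ‖∑ i ∈ S ∩ N k, u i‖ := by
        simp only [he_def]
        rw [show (∑ j ∈ T k, u j) = - ∑ i ∈ S ∩ N k, u i by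
          linear_combination (norm := abel) h3, norm_neg]
      have h5 : ‖∑ i ∈ S ∩ N k, u i‖ ≤ ∑ i ∈ S ∩ N k, ‖u i‖ := norm_sum_le _ _
      have h6 : (∑ i ∈ S ∩ N k, ‖u i‖)^2
          ≤ ((S ∩ N k).card : ℝ) * ∑ i ∈ S ∩ N k, ‖u i‖^2 := by
        simpa using sq_sum_le_card_mul_sum_sq (s := S ∩ N k) (f := fun j => ‖u j‖)
      have h7 : ((S ∩ N k).card : ℝ) ≤ c := by
        rw [hc_def]
        exact_mod_cast card_le_card (inter_subset_left : S ∩ N k ⊆ S)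
      have h8 : (∑ i ∈ S ∩ N k, ‖u i‖^2) = V - Uk k := by
        have := sum_inter_add_sum_sdiff S (N k) (fun j => ‖u j‖^2)
        simp only [hUk_def, hV]
        linarith [this]
      have h9 : (0:ℝ) ≤ ∑ i ∈ S ∩ N k, ‖u i‖^2 :=
        sum_nonneg fun i _ => sq_nonneg _
      calc e k ^2 ≤ (∑ i ∈ S ∩ N k, ‖u i‖)^2 := by
            rw [h4]; exact pow_le_pow_left₀ (norm_nonneg _) h5 2
        _ ≤ ((S ∩ N k).card : ℝ) * ∑ i ∈ S ∩ N k, ‖u i‖^2 := h6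
        _ ≤ c * ∑ i ∈ S ∩ N k, ‖u i‖^2 := mul_le_mul_of_nonneg_right h7 h9
        _ = c * (V - Uk k) := by rw [h8]
    nlinarith [mul_le_mul_of_nonneg_left he1 hcpos.le,
      mul_le_mul_of_nonneg_left he2' hfhR0]
  -- sum of distance squares over T k
  have hDsum : ∑ k ∈ S, Dk k ≤ 2*c*V := by
    have hstep1 : ∀ k ∈ S, Dk k ≤ ∑ j ∈ S, ‖x j - x k‖^2 := by
      intro k hk
      apply sum_le_sum_of_subset_of_nonneg (sdiff_subset)
      intro j _ _
      exact sq_nonneg _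
    have hident : ∑ k ∈ S, ∑ j ∈ S, ‖x j - x k‖^2 = 2*c*V := by
      have h1 : ∀ k ∈ S, ∑ j ∈ S, ‖x j - x k‖^2 = V + c * ‖u k‖^2 := by
        intro k hk
        have h2 : ∀ j ∈ S, ‖x j - x k‖^2
            = ‖u j‖^2 - 2*(inner ℝ (u j) (u k) : ℝ) + ‖u k‖^2 := by
          intro j _
          have hx : x j - x k = u j - u k := by simp only [hu]; abel
          rw [hx, norm_sub_sq_real]
        rw [sum_congr rfl h2, sum_add_distrib, sum_sub_distrib, ← mul_sum,
          ← sum_inner, hsumu, inner_zero_left, sum_const, nsmul_eq_mul]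
        simp only [hV]
        ring
      rw [sum_congr rfl h1, sum_add_distrib, sum_const, nsmul_eq_mul, ← mul_sum]
      simp only [hV]
      ring
    calc ∑ k ∈ S, Dk k ≤ ∑ k ∈ S, ∑ j ∈ S, ‖x j - x k‖^2 := sum_le_sum hstep1
      _ = 2*c*V := hident
  -- square-root quantities
  set W : ℝ := Real.sqrt V with hW_def
  set P : ℝ := Real.sqrt (2*(f:ℝ)*c) with hP_def
  set Q : ℝ := Real.sqrt ((fhat:ℝ)*(c - (fhat:ℝ)/2)) with hQ_def
  have hW0 : 0 ≤ W := Real.sqrt_nonneg _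
  have hP0 : 0 ≤ P := Real.sqrt_nonneg _
  have hQ0 : 0 ≤ Q := Real.sqrt_nonneg _
  have hW2 : W^2 = V := Real.sq_sqrt hV0
  have hP2 : P^2 = 2*(f:ℝ)*c := Real.sq_sqrt (by positivity)
  have hQ2 : Q^2 = (fhat:ℝ)*(c - (fhat:ℝ)/2) :=
    Real.sq_sqrt (mul_nonneg hfhR0 (by linarith))
  -- the three summed bounds
  have hsa : ∑ k ∈ S, (a k)^2 ≤ (P*W)^2 := by
    calc ∑ k ∈ S, (a k)^2 ≤ ∑ k ∈ S, (f:ℝ) * Dk k := sum_le_sum ha2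
      _ = (f:ℝ) * ∑ k ∈ S, Dk k := by rw [mul_sum]
      _ ≤ (f:ℝ) * (2*c*V) := mul_le_mul_of_nonneg_left hDsum hfR0
      _ = (P*W)^2 := by rw [mul_pow, hP2, hW2]; ring
  have hsb : ∑ k ∈ S, ((f:ℝ)*‖u k‖)^2 = ((f:ℝ)*W)^2 := by
    calc ∑ k ∈ S, ((f:ℝ)*‖u k‖)^2 = (f:ℝ)^2 * ∑ k ∈ S, ‖u k‖^2 := by
          rw [mul_sum]
          exact sum_congr rfl fun k _ => by ring
      _ = ((f:ℝ)*W)^2 := by rw [mul_pow, hW2, hV]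
  have hse : ∑ k ∈ S, (e k)^2 ≤ (Q*W)^2 := by
    have hcf : (0:ℝ) < c + fhat := by linarith
    have h1 : (∑ k ∈ S, (e k)^2) * (c + fhat) ≤ (Q*W)^2 * (c + fhat) := by
      calc (∑ k ∈ S, (e k)^2) * (c + fhat) = ∑ k ∈ S, (e k)^2 * (c + fhat) := by
            rw [sum_mul]
        _ ≤ ∑ k ∈ S, (fhat:ℝ) * c * V := sum_le_sum he2
        _ = c * ((fhat:ℝ) * c * V) := by rw [sum_const, nsmul_eq_mul, hc_def]
        _ ≤ (Q*W)^2 * (c + fhat) := by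
            rw [mul_pow, hQ2, hW2]
            nlinarith [mul_nonneg (mul_nonneg (mul_nonneg hfhR0 hfhR0)
              (sub_nonneg.2 hfh_le_c)) hV0]
    exact le_of_mul_le_mul_right h1 hcf
  -- Minkowski assembly
  have hchain : ∑ k ∈ S, (m * ‖y k - xbar‖)^2 ≤ ((P + f + Q)*W)^2 := by
    have hstepA : ∑ k ∈ S, (m * ‖y k - xbar‖)^2
        ≤ ∑ k ∈ S, (a k + (f:ℝ)*‖u k‖ + e k)^2 := by
      apply sum_le_sum
      intro k hk
      exact pow_le_pow_left₀ (mul_nonneg hmpos.le (norm_nonneg _)) (hnorm k hk) 2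
    have hstepB := mink3 S a (fun k => (f:ℝ)*‖u k‖) e
    have hr1 : Real.sqrt (∑ k ∈ S, (a k)^2) ≤ P*W := by
      calc Real.sqrt (∑ k ∈ S, (a k)^2) ≤ Real.sqrt ((P*W)^2) := Real.sqrt_le_sqrt hsa
        _ = P*W := Real.sqrt_sq (mul_nonneg hP0 hW0)
    have hr2 : Real.sqrt (∑ k ∈ S, ((f:ℝ)*‖u k‖)^2) = (f:ℝ)*W := by
      rw [hsb]
      exact Real.sqrt_sq (mul_nonneg hfR0 hW0)
    have hr3 : Real.sqrt (∑ k ∈ S, (e k)^2) ≤ Q*W := by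
      calc Real.sqrt (∑ k ∈ S, (e k)^2) ≤ Real.sqrt ((Q*W)^2) := Real.sqrt_le_sqrt hse
        _ = Q*W := Real.sqrt_sq (mul_nonneg hQ0 hW0)
    have hnn : (0:ℝ) ≤ Real.sqrt (∑ k ∈ S, (a k)^2)
        + Real.sqrt (∑ k ∈ S, ((f:ℝ)*‖u k‖)^2) + Real.sqrt (∑ k ∈ S, (e k)^2) := by
      positivity
    calc ∑ k ∈ S, (m * ‖y k - xbar‖)^2
        ≤ ∑ k ∈ S, (a k + (f:ℝ)*‖u k‖ + e k)^2 := hstepA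
      _ ≤ (Real.sqrt (∑ k ∈ S, (a k)^2) + Real.sqrt (∑ k ∈ S, ((f:ℝ)*‖u k‖)^2)
            + Real.sqrt (∑ k ∈ S, (e k)^2))^2 := hstepB
      _ ≤ ((P + f + Q)*W)^2 := by
          apply pow_le_pow_left₀ hnn
          have : ((P:ℝ) + f + Q)*W = P*W + (f:ℝ)*W + Q*W := by ring
          rw [this]
          linarith
  -- key scalar inequality
  have hkey : (P + (f:ℝ) + Q)^2 * c ≤ 12*(fhat:ℝ)*m^2 := by
    have h := key (f:ℝ) (fhat:ℝ) (n:ℝ) P Q hfR0 hffR h2fn hP0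
      (by rw [hP2, hcast]) hQ0 (by rw [hQ2, hcast])
    rw [← hcast] at h
    simpa [hm_def] using h
  -- conclude : c * Σ ‖y k - xbar‖² ≤ 12 fhat V
  have hfinal : c * ∑ k ∈ S, ‖y k - xbar‖^2 ≤ 12*(fhat:ℝ)*V := by
    have hA : m^2 * ∑ k ∈ S, ‖y k - xbar‖^2 ≤ (P + f + Q)^2 * V := by
      calc m^2 * ∑ k ∈ S, ‖y k - xbar‖^2 = ∑ k ∈ S, (m * ‖y k - xbar‖)^2 := by
            rw [mul_sum]
            exact sum_congr rfl fun k _ => by ring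
        _ ≤ ((P + f + Q)*W)^2 := hchain
        _ = (P + f + Q)^2 * V := by rw [mul_pow, hW2]
    have h1 : m^2 * (c * ∑ k ∈ S, ‖y k - xbar‖^2) ≤ m^2 * (12*(fhat:ℝ)*V) := by
      calc m^2 * (c * ∑ k ∈ S, ‖y k - xbar‖^2)
          = c * (m^2 * ∑ k ∈ S, ‖y k - xbar‖^2) := by ring
        _ ≤ c * ((P + f + Q)^2 * V) := mul_le_mul_of_nonneg_left hA hcpos.le
        _ = ((P + f + Q)^2 * c) * V := by ring
        _ ≤ (12*(fhat:ℝ)*m^2) * V := mul_le_mul_of_nonneg_right hkey hV0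
        _ = m^2 * (12*(fhat:ℝ)*V) := by ring
    exact le_of_mul_le_mul_left h1 (by positivity)
  -- bias-variance reduction and conclusion
  have hbv := bias_var_s8 S y xbar ybar hsumy
  rw [← hc_def] at hbv
  have hVgoal : ∑ i ∈ S, ‖x i - xbar‖^2 = V := by
    simp only [hV, hu]
  have hLHS : ‖ybar - xbar‖^2 + c⁻¹ * ∑ k ∈ S, ‖y k - ybar‖^2
      = c⁻¹ * ∑ k ∈ S, ‖y k - xbar‖^2 := by
    rw [hbv]
    field_simp
    ring
  rw [← hcast, hLHS]
  have h2 : ∑ k ∈ S, ‖y k - xbar‖^2 ≤ c⁻¹ * (12*(fhat:ℝ)*V) := by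
    have := mul_le_mul_of_nonneg_left hfinal (inv_nonneg.2 hcpos.le)
    rwa [← mul_assoc, inv_mul_cancel₀ (ne_of_gt hcpos), one_mul] at this
  calc c⁻¹ * ∑ k ∈ S, ‖y k - xbar‖^2
      ≤ c⁻¹ * (c⁻¹ * (12*(fhat:ℝ)*V)) :=
        mul_le_mul_of_nonneg_left h2 (inv_nonneg.2 hcpos.le)
    _ = (12*(fhat:ℝ)/c) * (c⁻¹ * V) := by ring
end

section
/- Let n, d ≥ 1, let f, f̂ be integers with 0 ≤ f ≤ f̂ < n/2, and let x₁,…,x_n ∈ ℝ^d. For each k ∈ {1,…,n} let N_k be a set of (n−f̂) nearest neighbors of x_k, and let k* ∈ {1,…,n} satisfy ∑_{i∈N_{k*}}‖x_{k*} − x_i‖² = min_{k∈{1,…,n}} ∑_{i∈N_k}‖x_k − x_i‖². Then for every S ⊆ {1,…,n} with |S| = n − f, writing x̄_S = (1/|S|)∑_{i∈S} x_i, it holds that ∑_{i∈N_{k*}}‖x_{k*} − x_i‖² ≤ 2∑_{i∈S}‖x_i − x̄_S‖². -/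
open Finset

lemma aux_sum_le {α : Type*} [DecidableEq α] (g : α → ℝ) (A B : Finset α)
    (h : A.card = B.card) (hg : ∀ a ∈ A, ∀ b ∈ B, g a ≤ g b) :
    ∑ a ∈ A, g a ≤ ∑ b ∈ B, g b := by
  rcases A.eq_empty_or_nonempty with rfl | hA
  · have hB : B = ∅ := Finset.card_eq_zero.mp (by simpa using h.symm)
    simp [hB]
  · have hB : B.Nonempty := by
      rw [← Finset.card_pos, ← h, Finset.card_pos]; exact hA
    obtain ⟨b₀, hb₀, hmin⟩ := B.exists_min_image g hB
    calc ∑ a ∈ A, g a ≤ ∑ _a ∈ A, g b₀ :=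
          Finset.sum_le_sum fun a ha => hg a ha b₀ hb₀
      _ = A.card • g b₀ := by rw [Finset.sum_const]
      _ = B.card • g b₀ := by rw [h]
      _ ≤ ∑ b ∈ B, g b := Finset.card_nsmul_le_sum B g (g b₀) hmin

lemma nn_opt (n d fhat : ℕ) (z : Fin n → EuclideanSpace ℝ (Fin d)) (k : Fin n)
    (N T : Finset (Fin n)) (hN : IsNN n d fhat z k N) (hT : T.card = n - fhat) :
    ∑ i ∈ N, ‖z k - z i‖ ^ 2 ≤ ∑ i ∈ T, ‖z k - z i‖ ^ 2 := by
  obtain ⟨hcard, hnn⟩ := hN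
  have hc : (N \ T).card = (T \ N).card :=
    Finset.card_sdiff_comm (by rw [hcard, hT])
  have h1 : ∑ a ∈ N \ T, ‖z k - z a‖ ^ 2 ≤ ∑ b ∈ T \ N, ‖z k - z b‖ ^ 2 := by
    apply aux_sum_le _ _ _ hc
    intro a ha b hb
    have h2 := hnn a (Finset.mem_sdiff.mp ha).1 b (Finset.mem_sdiff.mp hb).2
    rw [norm_sub_rev (z a), norm_sub_rev (z b)] at h2
    exact pow_le_pow_left₀ (norm_nonneg _) h2 2
  calc ∑ i ∈ N, ‖z k - z i‖ ^ 2
      = ∑ i ∈ N ∩ T, ‖z k - z i‖ ^ 2 + ∑ i ∈ N \ T, ‖z k - z i‖ ^ 2 :=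
        (Finset.sum_inter_add_sum_sdiff N T _).symm
    _ ≤ ∑ i ∈ N ∩ T, ‖z k - z i‖ ^ 2 + ∑ i ∈ T \ N, ‖z k - z i‖ ^ 2 := by
        linarith
    _ = ∑ i ∈ T ∩ N, ‖z k - z i‖ ^ 2 + ∑ i ∈ T \ N, ‖z k - z i‖ ^ 2 := by
        rw [Finset.inter_comm]
    _ = ∑ i ∈ T, ‖z k - z i‖ ^ 2 := Finset.sum_inter_add_sum_sdiff T N _

/-- For the `f̂`-Krum selection `k*` (minimizing `∑_{i∈N_k} ‖x_k - x_i‖²`), every `S`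
with `|S| = n - f` (where `0 ≤ f ≤ f̂ < n/2`) satisfies
`∑_{i∈N_{k*}} ‖x_{k*} - x_i‖² ≤ 2 ∑_{i∈S} ‖x_i - x̄_S‖²`. -/
theorem stmt_10 (n d f fhat : ℕ) (hn : 1 ≤ n) (hd : 1 ≤ d)
    (hf : f ≤ fhat) (hfn : 2 * fhat < n)
    (x : Fin n → EuclideanSpace ℝ (Fin d))
    (N : Fin n → Finset (Fin n)) (hN : ∀ k, IsNN n d fhat x k (N k))
    (kstar : Fin n)
    (hks : ∀ k, ∑ i ∈ N kstar, ‖x kstar - x i‖ ^ 2 ≤ ∑ i ∈ N k, ‖x k - x i‖ ^ 2)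
    (S : Finset (Fin n)) (hS : S.card = n - f) :
    ∑ i ∈ N kstar, ‖x kstar - x i‖ ^ 2
      ≤ 2 * ∑ i ∈ S, ‖x i - (S.card : ℝ)⁻¹ • ∑ j ∈ S, x j‖ ^ 2 := by
  set m : EuclideanSpace ℝ (Fin d) := (S.card : ℝ)⁻¹ • ∑ j ∈ S, x j with hm
  set y : Fin n → EuclideanSpace ℝ (Fin d) := fun i => x i - m with hy
  have hfhatn : fhat < n := by omega
  have hScard_pos : 0 < S.card := by omega
  have hSne : S.Nonempty := Finset.card_pos.mp hScard_pos
  have hcardR : (S.card : ℝ) ≠ 0 := Nat.cast_ne_zero.mpr hScard_pos.ne'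
  -- sum of centered vectors is zero
  have hsum0 : ∑ i ∈ S, y i = 0 := by
    simp only [hy, Finset.sum_sub_distrib, Finset.sum_const]
    rw [hm, ← Nat.cast_smul_eq_nsmul ℝ, smul_smul, mul_inv_cancel₀ hcardR, one_smul, sub_self]
  -- bias-variance decomposition for any k
  have hdecomp : ∀ k : Fin n, ∑ i ∈ S, ‖x k - x i‖ ^ 2
      = S.card * ‖y k‖ ^ 2 + ∑ i ∈ S, ‖y i‖ ^ 2 := by
    intro k
    have : ∀ i, ‖x k - x i‖ ^ 2
        = ‖y k‖ ^ 2 - 2 * inner ℝ (y k) (y i) + ‖y i‖ ^ 2 := by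
      intro i
      have hxy : x k - x i = y k - y i := by simp [hy]
      rw [hxy, @norm_sub_sq_real]
    simp only [this, Finset.sum_add_distrib, Finset.sum_sub_distrib,
      Finset.sum_const, ← Finset.mul_sum, ← inner_sum, hsum0, inner_zero_right,
      mul_zero, sub_zero, nsmul_eq_mul]
  -- pick k₀ ∈ S minimizing ‖y k‖
  obtain ⟨k₀, hk₀S, hk₀min⟩ := S.exists_min_image (fun k => ‖y k‖ ^ 2) hSne
  -- T ⊆ S of size n - fhat
  obtain ⟨T, hTS, hT⟩ := Finset.exists_subset_card_eq (s := S) (n := n - fhat)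
    (by rw [hS]; omega)
  have step1 : ∑ i ∈ N kstar, ‖x kstar - x i‖ ^ 2
      ≤ ∑ i ∈ N k₀, ‖x k₀ - x i‖ ^ 2 := hks k₀
  have step2 : ∑ i ∈ N k₀, ‖x k₀ - x i‖ ^ 2 ≤ ∑ i ∈ T, ‖x k₀ - x i‖ ^ 2 :=
    nn_opt n d fhat x k₀ (N k₀) T (hN k₀) hT
  have step3 : ∑ i ∈ T, ‖x k₀ - x i‖ ^ 2 ≤ ∑ i ∈ S, ‖x k₀ - x i‖ ^ 2 :=
    Finset.sum_le_sum_of_subset_of_nonneg hTS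
      (fun i _ _ => by positivity)
  have step4 : (S.card : ℝ) * ‖y k₀‖ ^ 2 ≤ ∑ i ∈ S, ‖y i‖ ^ 2 := by
    calc (S.card : ℝ) * ‖y k₀‖ ^ 2 = ∑ _i ∈ S, ‖y k₀‖ ^ 2 := by
          rw [Finset.sum_const, nsmul_eq_mul]
      _ ≤ ∑ i ∈ S, ‖y i‖ ^ 2 := Finset.sum_le_sum fun i hi => hk₀min i hi
  have := hdecomp k₀
  calc ∑ i ∈ N kstar, ‖x kstar - x i‖ ^ 2
      ≤ ∑ i ∈ S, ‖x k₀ - x i‖ ^ 2 := le_trans step1 (le_trans step2 step3)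
    _ = S.card * ‖y k₀‖ ^ 2 + ∑ i ∈ S, ‖y i‖ ^ 2 := hdecomp k₀
    _ ≤ 2 * ∑ i ∈ S, ‖y i‖ ^ 2 := by linarith
    _ = 2 * ∑ i ∈ S, ‖x i - (S.card : ℝ)⁻¹ • ∑ j ∈ S, x j‖ ^ 2 := by rfl
end

section
/- Let n, f, f̂ be integers with 0 ≤ f̂ < f < n/2, let γ > 0 be real, let H ≥ 1 be an integer, and let w₀ ∈ ℝ be arbitrary. Define the real sequence (w_t) by w_{t+1} = [ (n−f−f̂)·(1−γ)^H·w_t + n·(f−f̂)·|(1−γ)^H·w_t| + (f−f̂)·t ] / (n − 2f̂) for all t ≥ 0. Then: (i) w_{t+1} ≥ t·(f−f̂)/(n−2f̂) for every t ≥ 0; (ii) (1/T)∑_{t=0}^{T−1} w_t² → +∞ as T → ∞; and (iii) w_T²/2 → +∞ as T → ∞. -/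
open Finset Filter

/-- Underestimation (`f̂ < f`) can make FedRo with the trimmed-mean aggregator diverge:
with honest losses `ℓ_k(w) = w²/2` and Byzantine uploads `n·|(1-γ)^H w_t| + t`, the
global iterate satisfies `w_{t+1} ≥ t(f-f̂)/(n-2f̂)`, and both the averaged squared
gradient `(1/T) ∑_{t<T} w_t²` and the optimality gap `w_T²/2` diverge to `+∞`. -/
theorem stmt_11 (n f fhat : ℕ) (hlt : fhat < f) (hn : 2 * f < n)
    (γ : ℝ) (hγ : 0 < γ) (H : ℕ) (hH : 1 ≤ H) (w : ℕ → ℝ)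
    (hrec : ∀ t : ℕ, w (t + 1) =
      (((n : ℝ) - f - fhat) * ((1 - γ) ^ H * w t)
        + (n : ℝ) * ((f : ℝ) - fhat) * |(1 - γ) ^ H * w t|
        + ((f : ℝ) - fhat) * t) / ((n : ℝ) - 2 * fhat)) :
    (∀ t : ℕ, (t : ℝ) * ((f : ℝ) - fhat) / ((n : ℝ) - 2 * fhat) ≤ w (t + 1)) ∧
    Tendsto (fun T : ℕ => (T : ℝ)⁻¹ * ∑ t ∈ Finset.range T, (w t) ^ 2) atTop atTop ∧
    Tendsto (fun T : ℕ => (w T) ^ 2 / 2) atTop atTop := by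
  have hf : (fhat : ℝ) + 1 ≤ (f : ℝ) := by exact_mod_cast hlt
  have hnf : 2 * (f : ℝ) + 1 ≤ (n : ℝ) := by exact_mod_cast hn
  have hD : (0 : ℝ) < (n : ℝ) - 2 * fhat := by linarith
  set c : ℝ := ((f : ℝ) - fhat) / ((n : ℝ) - 2 * fhat) with hc_def
  have hc : 0 < c := div_pos (by linarith) hD
  have key : ∀ t : ℕ, (t : ℝ) * ((f : ℝ) - fhat) / ((n : ℝ) - 2 * fhat) ≤ w (t + 1) := by
    intro t
    rw [hrec t]
    set x := (1 - γ) ^ H * w t with hx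
    have h1 : -|x| ≤ x := neg_abs_le x
    have h2 : 0 ≤ |x| := abs_nonneg x
    have ht : (0 : ℝ) ≤ (t : ℝ) := Nat.cast_nonneg t
    gcongr
    have h3 : (n : ℝ) - f - fhat ≤ (n : ℝ) * ((f : ℝ) - fhat) := by nlinarith
    nlinarith [mul_le_mul_of_nonneg_left h1 (show (0:ℝ) ≤ (n:ℝ) - f - fhat by linarith),
      mul_le_mul_of_nonneg_right h3 h2]
  have hlow : ∀ t : ℕ, c * t ≤ w (t + 1) := by
    intro t
    have := key t
    rw [hc_def]
    calc ((f : ℝ) - fhat) / ((n : ℝ) - 2 * fhat) * t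
        = (t : ℝ) * ((f : ℝ) - fhat) / ((n : ℝ) - 2 * fhat) := by ring
      _ ≤ w (t + 1) := this
  have hwnn : ∀ t : ℕ, 0 ≤ w (t + 1) := fun t =>
    le_trans (by positivity) (hlow t)
  refine ⟨key, ?_, ?_⟩
  · -- averaged squared gradient diverges
    have hg : Tendsto (fun T : ℕ => c ^ 2 * ((T : ℝ) - 4)) atTop atTop := by
      apply Tendsto.const_mul_atTop (by positivity)
      exact tendsto_atTop_add_const_right _ _ tendsto_natCast_atTop_atTop
    apply tendsto_atTop_mono' _ _ hg
    filter_upwards [eventually_ge_atTop 2] with T hT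
    obtain ⟨S, rfl⟩ := Nat.exists_eq_add_of_le hT
    have hsum : (c * S) ^ 2 ≤ ∑ t ∈ Finset.range (2 + S), (w t) ^ 2 := by
      have hmem : S + 1 ∈ Finset.range (2 + S) := by
        simp [Finset.mem_range]; omega
      have h1 : (c * S) ^ 2 ≤ (w (S + 1)) ^ 2 := by
        have := hlow S
        nlinarith [hwnn S, mul_nonneg hc.le (Nat.cast_nonneg (α := ℝ) S)]
      calc (c * S) ^ 2 ≤ (w (S + 1)) ^ 2 := h1
        _ ≤ ∑ t ∈ Finset.range (2 + S), (w t) ^ 2 :=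
          Finset.single_le_sum (fun i _ => sq_nonneg (w i)) hmem
    have hTpos : (0 : ℝ) < ((2 + S : ℕ) : ℝ) := by positivity
    have hineq : c ^ 2 * (((2 + S : ℕ) : ℝ) - 4) ≤ (((2 + S : ℕ) : ℝ))⁻¹ * (c * S) ^ 2 := by
      rw [le_inv_mul_iff₀ hTpos]
      push_cast
      nlinarith [sq_nonneg c, Nat.cast_nonneg (α := ℝ) S]
    refine le_trans hineq ?_
    exact mul_le_mul_of_nonneg_left hsum (by positivity)
  · -- optimality gap diverges
    have hg : Tendsto (fun T : ℕ => (c * ((T : ℝ) - 1)) ^ 2 / 2) atTop atTop := by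
      apply Tendsto.atTop_div_const (by norm_num)
      have h1 : Tendsto (fun T : ℕ => c * ((T : ℝ) - 1)) atTop atTop :=
        Tendsto.const_mul_atTop hc
          (tendsto_atTop_add_const_right _ _ tendsto_natCast_atTop_atTop)
      simpa [pow_two] using h1.atTop_mul_atTop₀ h1
    apply tendsto_atTop_mono' _ _ hg
    filter_upwards [eventually_ge_atTop 1] with T hT
    obtain ⟨S, rfl⟩ := Nat.exists_eq_add_of_le hT
    have h1 := hlow S
    have h2 := hwnn S
    have h3 : (0:ℝ) ≤ c * S := mul_nonneg hc.le (Nat.cast_nonneg S)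
    have : (c * (((1 + S : ℕ) : ℝ) - 1)) ^ 2 = (c * S) ^ 2 := by push_cast; ring
    rw [this]
    have : (1 + S) = S + 1 := by omega
    rw [this]
    nlinarith
end

section
/- Let d ≥ 1, let ℓ : ℝ^d → ℝ be L-smooth for some L > 0, let γ > 0 be real and H ≥ 1 an integer with L²γ²H(H−1) ≤ 1/2, and let w ∈ ℝ^d. Define the gradient-descent sequence v₀ = w and v_{h+1} = v_h − γ∇ℓ(v_h) for 0 ≤ h < H. Then ∑_{h=0}^{H−1}‖v_h − w‖² ≤ 2γ²H²(H−1)‖∇ℓ(w)‖². -/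
open Finset

/-- Lemma (drift of local gradient descent): if `ℓ` is `L`-smooth,
`L²γ²H(H-1) ≤ 1/2`, and `v₀ = w`, `v_{h+1} = v_h - γ∇ℓ(v_h)`, then
`∑_{h<H} ‖v_h - w‖² ≤ 2γ²H²(H-1)‖∇ℓ(w)‖²`. -/
theorem stmt_13 (d : ℕ) (hd : 1 ≤ d)
    (ℓ : EuclideanSpace ℝ (Fin d) → ℝ) (L : ℝ) (hL : 0 < L)
    (hdiff : Differentiable ℝ ℓ)
    (hsmooth : ∀ w w' : EuclideanSpace ℝ (Fin d),
      ‖gradient ℓ w' - gradient ℓ w‖ ≤ L * ‖w' - w‖)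
    (γ : ℝ) (hγ : 0 < γ) (H : ℕ) (hH : 1 ≤ H)
    (hstep : L ^ 2 * γ ^ 2 * (H : ℝ) * ((H : ℝ) - 1) ≤ 1 / 2)
    (w : EuclideanSpace ℝ (Fin d)) (v : ℕ → EuclideanSpace ℝ (Fin d))
    (hv0 : v 0 = w) (hrec : ∀ h : ℕ, v (h + 1) = v h - γ • gradient ℓ (v h)) :
    ∑ h ∈ Finset.range H, ‖v h - w‖ ^ 2
      ≤ 2 * γ ^ 2 * (H : ℝ) ^ 2 * ((H : ℝ) - 1) * ‖gradient ℓ w‖ ^ 2 := by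
  set g : ℝ := ‖gradient ℓ w‖ with hg
  have hg0 : 0 ≤ g := norm_nonneg _
  have hgrad : ∀ u, ‖gradient ℓ u‖ ≤ g + L * ‖u - w‖ := by
    intro u
    have h1 := hsmooth w u
    have h2 : ‖gradient ℓ u‖ - ‖gradient ℓ w‖ ≤ L * ‖u - w‖ :=
      le_trans (norm_sub_norm_le _ _) h1
    linarith
  have key : ∀ h, ‖v h - w‖ ≤ γ * h * g + γ * L * ∑ k ∈ range h, ‖v k - w‖ := by
    intro h
    induction h with
    | zero => simp [hv0]
    | succ n ih =>
      have heq : v (n + 1) - w = (v n - w) - γ • gradient ℓ (v n) := by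
        rw [hrec]; abel
      have h3 : ‖v (n + 1) - w‖ ≤ ‖v n - w‖ + γ * ‖gradient ℓ (v n)‖ := by
        rw [heq]
        refine (norm_sub_le _ _).trans ?_
        rw [norm_smul, Real.norm_eq_abs, abs_of_pos hγ]
      have h4 := hgrad (v n)
      have h5 : γ * ‖gradient ℓ (v n)‖ ≤ γ * (g + L * ‖v n - w‖) :=
        mul_le_mul_of_nonneg_left h4 hγ.le
      have h6 : ‖v (n + 1) - w‖ ≤ (γ * n * g + γ * L * ∑ k ∈ range n, ‖v k - w‖)
          + γ * (g + L * ‖v n - w‖) := by linarith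
      rw [Finset.sum_range_succ]
      push_cast
      linarith
  -- squared bound
  set S : ℝ := ∑ h ∈ range H, ‖v h - w‖ ^ 2 with hS
  have hSnn : 0 ≤ S := Finset.sum_nonneg fun i _ => by positivity
  have sub_le : ∀ h, h ≤ H → ∑ k ∈ range h, ‖v k - w‖ ^ 2 ≤ S := by
    intro h hh
    exact Finset.sum_le_sum_of_subset_of_nonneg (Finset.range_subset_range.mpr hh)
      (fun i _ _ => by positivity)
  have sq_key : ∀ h, h < H → ‖v h - w‖ ^ 2 ≤ 2 * γ ^ 2 * h ^ 2 * g ^ 2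
      + 2 * γ ^ 2 * L ^ 2 * h * S := by
    intro h hh
    have hk := key h
    have hnn : 0 ≤ ‖v h - w‖ := norm_nonneg _
    have hcs : (∑ k ∈ range h, ‖v k - w‖) ^ 2
        ≤ h * ∑ k ∈ range h, ‖v k - w‖ ^ 2 := by
      have := sq_sum_le_card_mul_sum_sq (s := range h) (f := fun k => ‖v k - w‖)
      simpa using this
    have hsub := sub_le h hh.le
    have hsum_nn : (0:ℝ) ≤ ∑ k ∈ range h, ‖v k - w‖ :=
      Finset.sum_nonneg fun i _ => norm_nonneg _
    nlinarith [sq_nonneg (γ * h * g - γ * L * ∑ k ∈ range h, ‖v k - w‖),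
      mul_le_mul_of_nonneg_left hsub (show (0:ℝ) ≤ 2 * γ^2 * L^2 * h by positivity),
      mul_le_mul_of_nonneg_left hcs (show (0:ℝ) ≤ 2 * γ^2 * L^2 by positivity)]
  have sum_id : ∀ n : ℕ, ∑ k ∈ range n, (k : ℝ) = n * (n - 1) / 2 := by
    intro n
    induction n with
    | zero => simp
    | succ m ih => rw [Finset.sum_range_succ, ih]; push_cast; ring
  have sum_sq_le : ∑ h ∈ range H, (h : ℝ) ^ 2 ≤ (H : ℝ) ^ 2 * ((H : ℝ) - 1) / 2 := by
    have h1 : ∑ h ∈ range H, (h : ℝ) ^ 2 ≤ ((H : ℝ) - 1) * ∑ h ∈ range H, (h : ℝ) := by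
      rw [Finset.mul_sum]
      refine Finset.sum_le_sum fun i hi => ?_
      have : (i : ℝ) ≤ (H : ℝ) - 1 := by
        have := Finset.mem_range.mp hi
        have : (i : ℝ) + 1 ≤ H := by exact_mod_cast this
        linarith
      nlinarith [Nat.cast_nonneg (α := ℝ) i]
    rw [sum_id] at h1
    have hH1 : (1:ℝ) ≤ H := by exact_mod_cast hH
    nlinarith
  have main : S ≤ ∑ h ∈ range H, (2 * γ ^ 2 * (h:ℝ) ^ 2 * g ^ 2
      + 2 * γ ^ 2 * L ^ 2 * h * S) :=
    Finset.sum_le_sum fun i hi => sq_key i (Finset.mem_range.mp hi)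
  rw [Finset.sum_add_distrib] at main
  have e1 : ∑ h ∈ range H, 2 * γ ^ 2 * (h:ℝ) ^ 2 * g ^ 2
      = 2 * γ ^ 2 * g ^ 2 * ∑ h ∈ range H, (h:ℝ) ^ 2 := by
    rw [Finset.mul_sum]; exact Finset.sum_congr rfl fun i _ => by ring
  have e2 : ∑ h ∈ range H, 2 * γ ^ 2 * L ^ 2 * (h:ℝ) * S
      = 2 * γ ^ 2 * L ^ 2 * S * ((H:ℝ) * ((H:ℝ) - 1) / 2) := by
    rw [show (∑ h ∈ range H, 2 * γ ^ 2 * L ^ 2 * (h:ℝ) * S)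
      = 2 * γ ^ 2 * L ^ 2 * S * ∑ h ∈ range H, (h:ℝ) by
        rw [Finset.mul_sum]; exact Finset.sum_congr rfl fun i _ => by ring, sum_id]
  rw [e1, e2] at main
  have hH1 : (1:ℝ) ≤ H := by exact_mod_cast hH
  nlinarith [mul_le_mul_of_nonneg_left sum_sq_le
      (show (0:ℝ) ≤ 2 * γ ^ 2 * g ^ 2 by positivity),
    mul_le_mul_of_nonneg_left hstep hSnn]
end
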